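/- arXiv:1706.07255 — 4 statements merged into one kernel-verified Lean document; each statement's English description precedes it below -/
import Mathlib

section
/- For every integer n ≥ 0 and every configuration X_I on the figure-8 graph F_n (which has N = 7n + 6 vertices), there exists a configuration X_G such that every solution from X_I to X_G has makespan T satisfying 7^T ≥ N!. In particular, there is an infinite family of instances on figure-8 graphs whose minimum makespan is Ω(N log N), i.e., superlinear in the number of vertices. -/
open SimpleGraph

def IsMove {V : Type*} (G : SimpleGraph V) (X Y : Equiv.Perm V) : Prop :=
  (∀ r, Y r = X r ∨ G.Adj (X r) (Y r)) ∧
  (∀ r s, r ≠ s → ¬(Y r = X s ∧ Y s = X r ∧ X r ≠ X s))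

def IsSolution {V : Type*} (G : SimpleGraph V) (XI XG : Equiv.Perm V) (T : ℕ)
    (Xs : ℕ → Equiv.Perm V) : Prop :=
  Xs 0 = XI ∧ Xs T = XG ∧ ∀ t < T, IsMove G (Xs t) (Xs (t + 1))

/-- Vertex set of the figure-8 graph `F n`: two junction vertices, plus the internal
vertices of three paths with `n`, `3n+2` and `3n+2` internal vertices respectively.
In total `7n + 6` vertices. -/
abbrev F8V (n : ℕ) := Fin 2 ⊕ (Fin n ⊕ (Fin (3 * n + 2) ⊕ Fin (3 * n + 2)))

/-- One-directional edge relation for the figure-8 graph: junction `0` is attached to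
the first internal vertex of each path, junction `1` to the last, consecutive internal
vertices of each path are adjacent, and when `n = 0` the first path degenerates to an
edge between the two junctions. -/
def F8Rel (n : ℕ) : F8V n → F8V n → Prop
  | .inl a, .inl b => n = 0 ∧ a.val = 0 ∧ b.val = 1
  | .inl a, .inr (.inl i) => (a.val = 0 ∧ i.val = 0) ∨ (a.val = 1 ∧ i.val + 1 = n)
  | .inl a, .inr (.inr (.inl i)) =>
      (a.val = 0 ∧ i.val = 0) ∨ (a.val = 1 ∧ i.val + 1 = 3 * n + 2)
  | .inl a, .inr (.inr (.inr i)) =>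
      (a.val = 0 ∧ i.val = 0) ∨ (a.val = 1 ∧ i.val + 1 = 3 * n + 2)
  | .inr (.inl i), .inr (.inl k) => i.val + 1 = k.val
  | .inr (.inr (.inl i)), .inr (.inr (.inl k)) => i.val + 1 = k.val
  | .inr (.inr (.inr i)), .inr (.inr (.inr k)) => i.val + 1 = k.val
  | _, _ => False

/-- The figure-8 graph `F n` on `7n + 6` vertices: two junction vertices joined by
three internally vertex-disjoint paths having `n`, `3n+2` and `3n+2` internal
vertices respectively. -/
def figureEight (n : ℕ) : SimpleGraph (F8V n) := SimpleGraph.fromRel (F8Rel n)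

namespace F8

variable {n : ℕ}

def U : F8V n := Sum.inl ⟨0, by omega⟩
def W : F8V n := Sum.inl ⟨1, by omega⟩
def P (j : ℕ) (hj : j < n) : F8V n := Sum.inr (Sum.inl ⟨j, hj⟩)
def Q (j : ℕ) (hj : j < 3*n+2) : F8V n := Sum.inr (Sum.inr (Sum.inl ⟨j, hj⟩))
def R (j : ℕ) (hj : j < 3*n+2) : F8V n := Sum.inr (Sum.inr (Sum.inr ⟨j, hj⟩))

def Valid (n : ℕ) (π : Equiv.Perm (F8V n)) : Prop :=
  (∀ v, π v = v ∨ (figureEight n).Adj v (π v)) ∧ ∀ v w, π v = w → π w = v → v = w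

@[simp] lemma U_ne_W : (U : F8V n) ≠ W := by simp [U, W]
@[simp] lemma Q_inj {j j' : ℕ} {h h'} : (Q j h : F8V n) = Q j' h' ↔ j = j' := by simp [Q]
@[simp] lemma R_inj {j j' : ℕ} {h h'} : (R j h : F8V n) = R j' h' ↔ j = j' := by simp [R]
@[simp] lemma P_inj {j j' : ℕ} {h h'} : (P j h : F8V n) = P j' h' ↔ j = j' := by simp [P]
@[simp] lemma U_ne_P {j h} : (U : F8V n) ≠ P j h := by simp [U, P]
@[simp] lemma U_ne_Q {j h} : (U : F8V n) ≠ Q j h := by simp [U, Q]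
@[simp] lemma U_ne_R {j h} : (U : F8V n) ≠ R j h := by simp [U, R]
@[simp] lemma W_ne_P {j h} : (W : F8V n) ≠ P j h := by simp [W, P]
@[simp] lemma W_ne_Q {j h} : (W : F8V n) ≠ Q j h := by simp [W, Q]
@[simp] lemma W_ne_R {j h} : (W : F8V n) ≠ R j h := by simp [W, R]
@[simp] lemma P_ne_Q {j h j' h'} : (P j h : F8V n) ≠ Q j' h' := by simp [P, Q]
@[simp] lemma P_ne_R {j h j' h'} : (P j h : F8V n) ≠ R j' h' := by simp [P, R]
@[simp] lemma Q_ne_R {j h j' h'} : (Q j h : F8V n) ≠ R j' h' := by simp [Q, R]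
@[simp] lemma P_ne_U {j h} : (P j h : F8V n) ≠ U := by simp [U, P]
@[simp] lemma Q_ne_U {j h} : (Q j h : F8V n) ≠ U := by simp [U, Q]
@[simp] lemma R_ne_U {j h} : (R j h : F8V n) ≠ U := by simp [U, R]
@[simp] lemma P_ne_W {j h} : (P j h : F8V n) ≠ W := by simp [W, P]
@[simp] lemma Q_ne_W {j h} : (Q j h : F8V n) ≠ W := by simp [W, Q]
@[simp] lemma R_ne_W {j h} : (R j h : F8V n) ≠ W := by simp [W, R]
@[simp] lemma W_ne_U : (W : F8V n) ≠ U := by simp [U, W]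

lemma adj_iff {x y : F8V n} :
    (figureEight n).Adj x y ↔ x ≠ y ∧ (F8Rel n x y ∨ F8Rel n y x) := by
  simp [figureEight, fromRel_adj]

variable {π : Equiv.Perm (F8V n)}

lemma pi_U (hπ : Valid n π) :
    π U = U ∨ (n = 0 ∧ π U = W) ∨ (∃ h : 0 < n, π U = P 0 h) ∨
      π U = Q 0 (by omega) ∨ π U = R 0 (by omega) := by
  rcases hπ.1 U with h | h
  · exact Or.inl h
  · rw [adj_iff] at h
    obtain ⟨hne, hrel⟩ := h
    rcases h' : π U with a | i | i | i <;> rw [h'] at hrel hne <;>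
      simp [F8Rel, U] at hrel
    · refine Or.inr (Or.inl ⟨hrel.1, ?_⟩)
      rw [W]
      exact congrArg Sum.inl (Fin.ext hrel.2)
    · refine Or.inr (Or.inr (Or.inl ⟨i.2.trans_le' (by omega), ?_⟩))
      rw [P]
      exact congrArg (fun z => Sum.inr (Sum.inl z)) (Fin.ext hrel)
    · refine Or.inr (Or.inr (Or.inr (Or.inl ?_)))
      rw [Q]
      exact congrArg (fun z => Sum.inr (Sum.inr (Sum.inl z))) (Fin.ext (by simp [hrel]))
    · refine Or.inr (Or.inr (Or.inr (Or.inr ?_)))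
      rw [R]
      exact congrArg (fun z => Sum.inr (Sum.inr (Sum.inr z))) (Fin.ext (by simp [hrel]))

lemma pi_W (hπ : Valid n π) :
    π W = W ∨ (n = 0 ∧ π W = U) ∨ (∃ h : 0 < n, π W = P (n-1) (by omega)) ∨
      π W = Q (3*n+1) (by omega) ∨ π W = R (3*n+1) (by omega) := by
  rcases hπ.1 W with h | h
  · exact Or.inl h
  · rw [adj_iff] at h
    obtain ⟨hne, hrel⟩ := h
    rcases h' : π W with a | i | i | i <;> rw [h'] at hrel hne <;>
      simp [F8Rel, W] at hrel
    · refine Or.inr (Or.inl ⟨hrel.1, ?_⟩)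
      rw [U]
      exact congrArg Sum.inl (Fin.ext (by simp [hrel.2]))
    · refine Or.inr (Or.inr (Or.inl ⟨by omega, ?_⟩))
      rw [P]
      exact congrArg (fun z => Sum.inr (Sum.inl z)) (Fin.ext (by simp only [Fin.val_mk]; omega))
    · refine Or.inr (Or.inr (Or.inr (Or.inl ?_)))
      rw [Q]
      exact congrArg (fun z => Sum.inr (Sum.inr (Sum.inl z))) (Fin.ext (by simp only [Fin.val_mk]; omega))
    · refine Or.inr (Or.inr (Or.inr (Or.inr ?_)))
      rw [R]
      exact congrArg (fun z => Sum.inr (Sum.inr (Sum.inr z))) (Fin.ext (by simp only [Fin.val_mk]; omega))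

lemma pi_Q (hπ : Valid n π) (j : ℕ) (hj : j < 3*n+2) :
    π (Q j hj) = Q j hj ∨ (j = 0 ∧ π (Q j hj) = U) ∨
      (j + 1 = 3*n+2 ∧ π (Q j hj) = W) ∨
      (∃ h : j+1 < 3*n+2, π (Q j hj) = Q (j+1) h) ∨
      (∃ h : 0 < j, π (Q j hj) = Q (j-1) (by omega)) := by
  rcases hπ.1 (Q j hj) with h | h
  · exact Or.inl h
  · rw [adj_iff] at h
    obtain ⟨hne, hrel⟩ := h
    rcases h' : π (Q j hj) with a | i | i | i <;> rw [h'] at hrel hne <;>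
      simp [F8Rel, Q] at hrel
    · rcases hrel with ⟨ha, hj0⟩ | ⟨ha, hj1⟩
      · refine Or.inr (Or.inl ⟨hj0, ?_⟩)
        rw [U]
        exact congrArg Sum.inl (Fin.ext (by simp [ha]))
      · refine Or.inr (Or.inr (Or.inl ⟨by omega, ?_⟩))
        rw [W]
        exact congrArg Sum.inl (Fin.ext ha)
    · rcases hrel with hfwd | hbwd
      · refine Or.inr (Or.inr (Or.inr (Or.inl ⟨by omega, ?_⟩)))
        rw [Q]
        exact congrArg (fun z => Sum.inr (Sum.inr (Sum.inl z))) (Fin.ext (by simp only [Fin.val_mk]; omega))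
      · refine Or.inr (Or.inr (Or.inr (Or.inr ⟨by omega, ?_⟩)))
        rw [Q]
        exact congrArg (fun z => Sum.inr (Sum.inr (Sum.inl z))) (Fin.ext (by simp only [Fin.val_mk]; omega))

lemma pi_R (hπ : Valid n π) (j : ℕ) (hj : j < 3*n+2) :
    π (R j hj) = R j hj ∨ (j = 0 ∧ π (R j hj) = U) ∨
      (j + 1 = 3*n+2 ∧ π (R j hj) = W) ∨
      (∃ h : j+1 < 3*n+2, π (R j hj) = R (j+1) h) ∨
      (∃ h : 0 < j, π (R j hj) = R (j-1) (by omega)) := by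
  rcases hπ.1 (R j hj) with h | h
  · exact Or.inl h
  · rw [adj_iff] at h
    obtain ⟨hne, hrel⟩ := h
    rcases h' : π (R j hj) with a | i | i | i <;> rw [h'] at hrel hne <;>
      simp [F8Rel, R] at hrel
    · rcases hrel with ⟨ha, hj0⟩ | ⟨ha, hj1⟩
      · refine Or.inr (Or.inl ⟨hj0, ?_⟩)
        rw [U]
        exact congrArg Sum.inl (Fin.ext (by simp [ha]))
      · refine Or.inr (Or.inr (Or.inl ⟨by omega, ?_⟩))
        rw [W]
        exact congrArg Sum.inl (Fin.ext ha)
    · rcases hrel with hfwd | hbwd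
      · refine Or.inr (Or.inr (Or.inr (Or.inl ⟨by omega, ?_⟩)))
        rw [R]
        exact congrArg (fun z => Sum.inr (Sum.inr (Sum.inr z))) (Fin.ext (by simp only [Fin.val_mk]; omega))
      · refine Or.inr (Or.inr (Or.inr (Or.inr ⟨by omega, ?_⟩)))
        rw [R]
        exact congrArg (fun z => Sum.inr (Sum.inr (Sum.inr z))) (Fin.ext (by simp only [Fin.val_mk]; omega))

lemma pi_P (hπ : Valid n π) (j : ℕ) (hj : j < n) :
    π (P j hj) = P j hj ∨ (j = 0 ∧ π (P j hj) = U) ∨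
      (j + 1 = n ∧ π (P j hj) = W) ∨
      (∃ h : j+1 < n, π (P j hj) = P (j+1) h) ∨
      (∃ h : 0 < j, π (P j hj) = P (j-1) (by omega)) := by
  rcases hπ.1 (P j hj) with h | h
  · exact Or.inl h
  · rw [adj_iff] at h
    obtain ⟨hne, hrel⟩ := h
    rcases h' : π (P j hj) with a | i | i | i <;> rw [h'] at hrel hne <;>
      simp [F8Rel, P] at hrel
    · rcases hrel with ⟨ha, hj0⟩ | ⟨ha, hj1⟩
      · refine Or.inr (Or.inl ⟨hj0, ?_⟩)
        rw [U]
        exact congrArg Sum.inl (Fin.ext (by simp [ha]))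
      · refine Or.inr (Or.inr (Or.inl ⟨by omega, ?_⟩))
        rw [W]
        exact congrArg Sum.inl (Fin.ext ha)
    · rcases hrel with hfwd | hbwd
      · refine Or.inr (Or.inr (Or.inr (Or.inl ⟨by omega, ?_⟩)))
        rw [P]
        exact congrArg (fun z => Sum.inr (Sum.inl z)) (Fin.ext (by simp only [Fin.val_mk]; omega))
      · refine Or.inr (Or.inr (Or.inr (Or.inr ⟨by omega, ?_⟩)))
        rw [P]
        exact congrArg (fun z => Sum.inr (Sum.inl z)) (Fin.ext (by simp only [Fin.val_mk]; omega))


lemma fwd_Q (hπ : Valid n π) {k : ℕ} (hk : k + 1 < 3*n+2)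
    (h : π (Q k (by omega)) = Q (k+1) hk) :
    ∀ j (hj : j < 3*n+2), k ≤ j →
      π (Q j hj) = if h' : j+1 < 3*n+2 then Q (j+1) h' else W := by
  intro j
  induction j with
  | zero =>
    intro hj hkj
    have hk0 : k = 0 := Nat.le_zero.mp hkj
    subst hk0
    rw [dif_pos hk]
    exact h
  | succ j ih =>
    intro hj hkj
    rcases Nat.lt_or_ge k (j+1) with hlt | hge
    · have hj' : j < 3*n+2 := by omega
      have hstep : π (Q j hj') = Q (j+1) hj := by
        have := ih hj' (by omega)
        rwa [dif_pos hj] at this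
      rcases pi_Q hπ (j+1) hj with h1 | ⟨h2, _⟩ | ⟨h3, hW⟩ | ⟨h4, hQ⟩ | ⟨h5, hQ⟩
      · exfalso
        have := π.injective (hstep.trans h1.symm)
        rw [Q_inj] at this; omega
      · omega
      · rw [dif_neg (by omega)]; exact hW
      · rw [dif_pos h4]; exact hQ
      · exfalso
        have hQ' : π (Q (j+1) hj) = Q j hj' := hQ
        have := hπ.2 _ _ hstep hQ'
        rw [Q_inj] at this; omega
    · have hkj1 : k = j+1 := by omega
      subst hkj1
      rw [dif_pos hk]
      exact h

lemma trav_Q (hπ : Valid n π) (h : π U = Q 0 (by omega)) :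
    ∀ j (hj : j < 3*n+2), π (Q j hj) = if h' : j+1 < 3*n+2 then Q (j+1) h' else W := by
  have h1 : (0:ℕ) + 1 < 3*n+2 := by omega
  have h0 : π (Q 0 (by omega)) = Q 1 (by omega) := by
    rcases pi_Q hπ 0 (by omega) with h1' | ⟨_, h2⟩ | ⟨h3, _⟩ | ⟨h4, hQ⟩ | ⟨h5, _⟩
    · exact absurd (π.injective (h.trans h1'.symm)) (by simp)
    · exact absurd (hπ.2 _ _ h h2) (by simp)
    · omega
    · exact hQ
    · omega
  intro j hj
  exact fwd_Q hπ h1 h0 j hj (by omega)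

lemma trav_Q_bwd (hπ : Valid n π) (h : π W = Q (3*n+1) (by omega)) :
    ∀ j (hj : j < 3*n+2), π (Q j hj) = if h' : 0 < j then Q (j-1) (by omega) else U := by
  have key : ∀ d j (hj : j < 3*n+2), 3*n+1 - j = d →
      π (Q j hj) = if h' : 0 < j then Q (j-1) (by omega) else U := by
    intro d
    induction d with
    | zero =>
      intro j hj hd
      have hj' : j = 3*n+1 := by omega
      subst hj'
      rcases pi_Q hπ (3*n+1) hj with h1 | ⟨h2, _⟩ | ⟨h3, hW⟩ | ⟨h4, hQ⟩ | ⟨h5, hQ⟩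
      · exact absurd (π.injective (h.trans h1.symm)) (by simp)
      · omega
      · exact absurd (hπ.2 _ _ hW h) (by simp)
      · omega
      · rw [dif_pos (by omega)]; exact hQ
    | succ d ih =>
      intro j hj hd
      have hj1 : j + 1 < 3*n+2 := by omega
      have hstep : π (Q (j+1) hj1) = Q j hj := by
        have := ih (j+1) hj1 (by omega)
        rwa [dif_pos (by omega)] at this
      rcases pi_Q hπ j hj with h1 | ⟨h2, hU⟩ | ⟨h3, hW⟩ | ⟨h4, hQ⟩ | ⟨h5, hQ⟩
      · exfalso
        have := π.injective (hstep.trans h1.symm)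
        rw [Q_inj] at this; omega
      · rw [dif_neg (by omega)]; exact hU
      · omega
      · exfalso
        have hQ' : π (Q j hj) = Q (j+1) hj1 := hQ
        have := hπ.2 _ _ hstep hQ'
        rw [Q_inj] at this; omega
      · rw [dif_pos h5]; exact hQ
  intro j hj; exact key (3*n+1-j) j hj rfl

lemma fix_Q (hπ : Valid n π) (xu xw : F8V n) (hxu : π xu = U) (hxw : π xw = W)
    (h1 : ∀ j (hj : j < 3*n+2), xu ≠ Q j hj) (h2 : ∀ j (hj : j < 3*n+2), xw ≠ Q j hj) :
    ∀ j (hj : j < 3*n+2), π (Q j hj) = Q j hj := by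
  intro j
  induction j using Nat.strong_induction_on with
  | _ j ih =>
    intro hj
    rcases pi_Q hπ j hj with h | ⟨h0, hU⟩ | ⟨hjm, hW⟩ | ⟨h4, hQ⟩ | ⟨h5, hQ⟩
    · exact h
    · exact absurd (π.injective (hU.trans hxu.symm)).symm (h1 j hj)
    · exact absurd (π.injective (hW.trans hxw.symm)).symm (h2 j hj)
    · exfalso
      have hend := fwd_Q hπ h4 hQ (3*n+1) (by omega) (by omega)
      rw [dif_neg (by omega)] at hend
      exact h2 _ _ (π.injective (hend.trans hxw.symm)).symm
    · exfalso
      have hprev := ih (j-1) (by omega) (by omega)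
      have := π.injective (hQ.trans hprev.symm)
      rw [Q_inj] at this; omega

lemma fwd_R (hπ : Valid n π) {k : ℕ} (hk : k + 1 < 3*n+2)
    (h : π (R k (by omega)) = R (k+1) hk) :
    ∀ j (hj : j < 3*n+2), k ≤ j →
      π (R j hj) = if h' : j+1 < 3*n+2 then R (j+1) h' else W := by
  intro j
  induction j with
  | zero =>
    intro hj hkj
    have hk0 : k = 0 := Nat.le_zero.mp hkj
    subst hk0
    rw [dif_pos hk]
    exact h
  | succ j ih =>
    intro hj hkj
    rcases Nat.lt_or_ge k (j+1) with hlt | hge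
    · have hj' : j < 3*n+2 := by omega
      have hstep : π (R j hj') = R (j+1) hj := by
        have := ih hj' (by omega)
        rwa [dif_pos hj] at this
      rcases pi_R hπ (j+1) hj with h1 | ⟨h2, _⟩ | ⟨h3, hW⟩ | ⟨h4, hQ⟩ | ⟨h5, hQ⟩
      · exfalso
        have := π.injective (hstep.trans h1.symm)
        rw [R_inj] at this; omega
      · omega
      · rw [dif_neg (by omega)]; exact hW
      · rw [dif_pos h4]; exact hQ
      · exfalso
        have hQ' : π (R (j+1) hj) = R j hj' := hQ
        have := hπ.2 _ _ hstep hQ'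
        rw [R_inj] at this; omega
    · have hkj1 : k = j+1 := by omega
      subst hkj1
      rw [dif_pos hk]
      exact h

lemma trav_R (hπ : Valid n π) (h : π U = R 0 (by omega)) :
    ∀ j (hj : j < 3*n+2), π (R j hj) = if h' : j+1 < 3*n+2 then R (j+1) h' else W := by
  have h1 : (0:ℕ) + 1 < 3*n+2 := by omega
  have h0 : π (R 0 (by omega)) = R 1 (by omega) := by
    rcases pi_R hπ 0 (by omega) with h1' | ⟨_, h2⟩ | ⟨h3, _⟩ | ⟨h4, hQ⟩ | ⟨h5, _⟩
    · exact absurd (π.injective (h.trans h1'.symm)) (by simp)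
    · exact absurd (hπ.2 _ _ h h2) (by simp)
    · omega
    · exact hQ
    · omega
  intro j hj
  exact fwd_R hπ h1 h0 j hj (by omega)

lemma trav_R_bwd (hπ : Valid n π) (h : π W = R (3*n+1) (by omega)) :
    ∀ j (hj : j < 3*n+2), π (R j hj) = if h' : 0 < j then R (j-1) (by omega) else U := by
  have key : ∀ d j (hj : j < 3*n+2), 3*n+1 - j = d →
      π (R j hj) = if h' : 0 < j then R (j-1) (by omega) else U := by
    intro d
    induction d with
    | zero =>
      intro j hj hd
      have hj' : j = 3*n+1 := by omega
      subst hj'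
      rcases pi_R hπ (3*n+1) hj with h1 | ⟨h2, _⟩ | ⟨h3, hW⟩ | ⟨h4, hQ⟩ | ⟨h5, hQ⟩
      · exact absurd (π.injective (h.trans h1.symm)) (by simp)
      · omega
      · exact absurd (hπ.2 _ _ hW h) (by simp)
      · omega
      · rw [dif_pos (by omega)]; exact hQ
    | succ d ih =>
      intro j hj hd
      have hj1 : j + 1 < 3*n+2 := by omega
      have hstep : π (R (j+1) hj1) = R j hj := by
        have := ih (j+1) hj1 (by omega)
        rwa [dif_pos (by omega)] at this
      rcases pi_R hπ j hj with h1 | ⟨h2, hU⟩ | ⟨h3, hW⟩ | ⟨h4, hQ⟩ | ⟨h5, hQ⟩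
      · exfalso
        have := π.injective (hstep.trans h1.symm)
        rw [R_inj] at this; omega
      · rw [dif_neg (by omega)]; exact hU
      · omega
      · exfalso
        have hQ' : π (R j hj) = R (j+1) hj1 := hQ
        have := hπ.2 _ _ hstep hQ'
        rw [R_inj] at this; omega
      · rw [dif_pos h5]; exact hQ
  intro j hj; exact key (3*n+1-j) j hj rfl

lemma fix_R (hπ : Valid n π) (xu xw : F8V n) (hxu : π xu = U) (hxw : π xw = W)
    (h1 : ∀ j (hj : j < 3*n+2), xu ≠ R j hj) (h2 : ∀ j (hj : j < 3*n+2), xw ≠ R j hj) :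
    ∀ j (hj : j < 3*n+2), π (R j hj) = R j hj := by
  intro j
  induction j using Nat.strong_induction_on with
  | _ j ih =>
    intro hj
    rcases pi_R hπ j hj with h | ⟨h0, hU⟩ | ⟨hjm, hW⟩ | ⟨h4, hQ⟩ | ⟨h5, hQ⟩
    · exact h
    · exact absurd (π.injective (hU.trans hxu.symm)).symm (h1 j hj)
    · exact absurd (π.injective (hW.trans hxw.symm)).symm (h2 j hj)
    · exfalso
      have hend := fwd_R hπ h4 hQ (3*n+1) (by omega) (by omega)
      rw [dif_neg (by omega)] at hend
      exact h2 _ _ (π.injective (hend.trans hxw.symm)).symm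
    · exfalso
      have hprev := ih (j-1) (by omega) (by omega)
      have := π.injective (hQ.trans hprev.symm)
      rw [R_inj] at this; omega

lemma fwd_P (hπ : Valid n π) {k : ℕ} (hk : k + 1 < n)
    (h : π (P k (by omega)) = P (k+1) hk) :
    ∀ j (hj : j < n), k ≤ j →
      π (P j hj) = if h' : j+1 < n then P (j+1) h' else W := by
  intro j
  induction j with
  | zero =>
    intro hj hkj
    have hk0 : k = 0 := Nat.le_zero.mp hkj
    subst hk0
    rw [dif_pos hk]
    exact h
  | succ j ih =>
    intro hj hkj
    rcases Nat.lt_or_ge k (j+1) with hlt | hge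
    · have hj' : j < n := by omega
      have hstep : π (P j hj') = P (j+1) hj := by
        have := ih hj' (by omega)
        rwa [dif_pos hj] at this
      rcases pi_P hπ (j+1) hj with h1 | ⟨h2, _⟩ | ⟨h3, hW⟩ | ⟨h4, hQ⟩ | ⟨h5, hQ⟩
      · exfalso
        have := π.injective (hstep.trans h1.symm)
        rw [P_inj] at this; omega
      · omega
      · rw [dif_neg (by omega)]; exact hW
      · rw [dif_pos h4]; exact hQ
      · exfalso
        have hQ' : π (P (j+1) hj) = P j hj' := hQ
        have := hπ.2 _ _ hstep hQ'
        rw [P_inj] at this; omega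
    · have hkj1 : k = j+1 := by omega
      subst hkj1
      rw [dif_pos hk]
      exact h

lemma trav_P (hπ : Valid n π) (h0 : 0 < n) (h : π U = P 0 h0) :
    ∀ j (hj : j < n), π (P j hj) = if h' : j+1 < n then P (j+1) h' else W := by
  have hent : π (P 0 h0) = if h' : (0:ℕ)+1 < n then P 1 h' else W := by
    rcases pi_P hπ 0 h0 with h1 | ⟨_, h2⟩ | ⟨h3, hW⟩ | ⟨h4, hQ⟩ | ⟨h5, _⟩
    · exact absurd (π.injective (h.trans h1.symm)) (by simp)
    · exact absurd (hπ.2 _ _ h h2) (by simp)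
    · rw [dif_neg (by omega)]; exact hW
    · rw [dif_pos h4]; exact hQ
    · omega
  intro j hj
  by_cases h1n : (0:ℕ)+1 < n
  · rw [dif_pos h1n] at hent
    exact fwd_P hπ h1n hent j hj (by omega)
  · have hj0 : j = 0 := by omega
    subst hj0
    rw [dif_neg h1n] at hent
    rw [dif_neg (by omega)]
    exact hent

lemma trav_P_bwd (hπ : Valid n π) (h0 : 0 < n) (h : π W = P (n-1) (by omega)) :
    ∀ j (hj : j < n), π (P j hj) = if h' : 0 < j then P (j-1) (by omega) else U := by
  have key : ∀ d j (hj : j < n), n-1-j = d →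
      π (P j hj) = if h' : 0 < j then P (j-1) (by omega) else U := by
    intro d
    induction d with
    | zero =>
      intro j hj hd
      have hj' : j = n-1 := by omega
      subst hj'
      rcases pi_P hπ (n-1) hj with h1 | ⟨h2, hU⟩ | ⟨h3, hW⟩ | ⟨h4, hQ⟩ | ⟨h5, hQ⟩
      · exact absurd (π.injective (h.trans h1.symm)) (by simp)
      · rw [dif_neg (by omega)]; exact hU
      · exact absurd (hπ.2 _ _ hW h) (by simp)
      · omega
      · rw [dif_pos h5]; exact hQ
    | succ d ih =>
      intro j hj hd
      have hj1 : j + 1 < n := by omega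
      have hstep : π (P (j+1) hj1) = P j hj := by
        have := ih (j+1) hj1 (by omega)
        rwa [dif_pos (by omega)] at this
      rcases pi_P hπ j hj with h1 | ⟨h2, hU⟩ | ⟨h3, hW⟩ | ⟨h4, hQ⟩ | ⟨h5, hQ⟩
      · exfalso
        have := π.injective (hstep.trans h1.symm)
        rw [P_inj] at this; omega
      · rw [dif_neg (by omega)]; exact hU
      · omega
      · exfalso
        have hQ' : π (P j hj) = P (j+1) hj1 := hQ
        have := hπ.2 _ _ hstep hQ'
        rw [P_inj] at this; omega
      · rw [dif_pos h5]; exact hQ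
  intro j hj; exact key (n-1-j) j hj rfl

lemma fix_P (hπ : Valid n π) (xu xw : F8V n) (hxu : π xu = U) (hxw : π xw = W)
    (h1 : ∀ j (hj : j < n), xu ≠ P j hj) (h2 : ∀ j (hj : j < n), xw ≠ P j hj) :
    ∀ j (hj : j < n), π (P j hj) = P j hj := by
  intro j
  induction j using Nat.strong_induction_on with
  | _ j ih =>
    intro hj
    rcases pi_P hπ j hj with h | ⟨h0, hU⟩ | ⟨hjm, hW⟩ | ⟨h4, hQ⟩ | ⟨h5, hQ⟩
    · exact h
    · exact absurd (π.injective (hU.trans hxu.symm)).symm (h1 j hj)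
    · exact absurd (π.injective (hW.trans hxw.symm)).symm (h2 j hj)
    · exfalso
      have hend := fwd_P hπ h4 hQ (n-1) (by omega) (by omega)
      rw [dif_neg (by omega)] at hend
      exact h2 _ _ (π.injective (hend.trans hxw.symm)).symm
    · exfalso
      have hprev := ih (j-1) (by omega) (by omega)
      have := π.injective (hQ.trans hprev.symm)
      rw [P_inj] at this; omega


def a1 : F8V n := if h : 0 < n then P 0 h else W
def b1 : F8V n := if h : 0 < n then P (n-1) (by omega) else U

def pApply (c : Fin 3) (j : ℕ) (hj : j < n) : F8V n :=
  match c with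
  | 0 => P j hj
  | 1 => if h : j+1 < n then P (j+1) h else W
  | 2 => if h : 0 < j then P (j-1) (by omega) else U

def qApply (c : Fin 3) (j : ℕ) (hj : j < 3*n+2) : F8V n :=
  match c with
  | 0 => Q j hj
  | 1 => if h : j+1 < 3*n+2 then Q (j+1) h else W
  | 2 => if h : 0 < j then Q (j-1) (by omega) else U

def rApply (c : Fin 3) (j : ℕ) (hj : j < 3*n+2) : F8V n :=
  match c with
  | 0 => R j hj
  | 1 => if h : j+1 < 3*n+2 then R (j+1) h else W
  | 2 => if h : 0 < j then R (j-1) (by omega) else U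

def SpecOf (du dw : F8V n) (cp cq cr : Fin 3) (π : Equiv.Perm (F8V n)) : Prop :=
  π U = du ∧ π W = dw ∧ (∀ j hj, π (P j hj) = pApply cp j hj) ∧
    (∀ j hj, π (Q j hj) = qApply cq j hj) ∧ (∀ j hj, π (R j hj) = rApply cr j hj)

def Spec (c : Fin 7) (π : Equiv.Perm (F8V n)) : Prop :=
  match c with
  | 0 => SpecOf U W 0 0 0 π
  | 1 => SpecOf a1 (Q (3*n+1) (by omega)) 1 2 0 π
  | 2 => SpecOf a1 (R (3*n+1) (by omega)) 1 0 2 π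
  | 3 => SpecOf (Q 0 (by omega)) b1 2 1 0 π
  | 4 => SpecOf (R 0 (by omega)) b1 2 0 1 π
  | 5 => SpecOf (Q 0 (by omega)) (R (3*n+1) (by omega)) 0 1 2 π
  | 6 => SpecOf (R 0 (by omega)) (Q (3*n+1) (by omega)) 0 2 1 π

lemma specOf_unique {du dw : F8V n} {cp cq cr : Fin 3} {π π' : Equiv.Perm (F8V n)}
    (h : SpecOf du dw cp cq cr π) (h' : SpecOf du dw cp cq cr π') : π = π' := by
  apply Equiv.ext
  intro v
  rcases v with a | i | i | i
  · rcases a with ⟨av, ha⟩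
    interval_cases av
    · exact (h.1).trans (h'.1).symm
    · exact (h.2.1).trans (h'.2.1).symm
  · exact (h.2.2.1 i.1 i.2).trans (h'.2.2.1 i.1 i.2).symm
  · exact (h.2.2.2.1 i.1 i.2).trans (h'.2.2.2.1 i.1 i.2).symm
  · exact (h.2.2.2.2 i.1 i.2).trans (h'.2.2.2.2 i.1 i.2).symm

lemma spec_unique {c : Fin 7} {π π' : Equiv.Perm (F8V n)}
    (h : Spec c π) (h' : Spec c π') : π = π' := by
  rcases c with ⟨cv, hc⟩
  interval_cases cv <;> exact specOf_unique h h'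

lemma classify (hπ : Valid n π) : ∃ c : Fin 7, Spec c π := by
  rcases pi_U hπ with hu | ⟨hn0, hu⟩ | ⟨h0n, hu⟩ | hu | hu
  · -- identity case
    have hw : π W = W := by
      rcases pi_W hπ with hw | ⟨hn0, hw⟩ | ⟨h0n, hw⟩ | hw | hw
      · exact hw
      · exact absurd (π.injective (hw.trans hu.symm)) (by simp)
      · exfalso
        have := trav_P_bwd hπ h0n hw 0 (by omega)
        rw [dif_neg (by omega)] at this
        exact absurd (π.injective (this.trans hu.symm)) (by simp)
      · exfalso
        have := trav_Q_bwd hπ hw 0 (by omega)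
        rw [dif_neg (by omega)] at this
        exact absurd (π.injective (this.trans hu.symm)) (by simp)
      · exfalso
        have := trav_R_bwd hπ hw 0 (by omega)
        rw [dif_neg (by omega)] at this
        exact absurd (π.injective (this.trans hu.symm)) (by simp)
    refine ⟨0, hu, hw, ?_, ?_, ?_⟩
    · exact fix_P hπ U W hu hw (fun j hj => U_ne_P) (fun j hj => W_ne_P)
    · exact fix_Q hπ U W hu hw (fun j hj => U_ne_Q) (fun j hj => W_ne_Q)
    · exact fix_R hπ U W hu hw (fun j hj => U_ne_R) (fun j hj => W_ne_R)
  · -- n = 0, π U = W : path-1 (the edge) is traversed forward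
    have ha1 : π U = a1 := by rw [a1, dif_neg (by omega)]; exact hu
    have hpvac : ∀ (cp : Fin 3), ∀ j (hj : j < n), π (P j hj) = pApply cp j hj := by
      intro cp j hj; omega
    rcases pi_W hπ with hw | ⟨hpos, hw⟩ | ⟨h0n, hw⟩ | hw | hw
    · exact absurd (π.injective (hu.trans hw.symm)).symm (by simp)
    · exact absurd (hπ.2 _ _ hu hw) (by simp)
    · omega
    · -- back along Q : case 1
      have hq := trav_Q_bwd hπ hw
      have hq0 : π (Q 0 (by omega)) = U := by
        have := hq 0 (by omega); rwa [dif_neg (by omega)] at this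
      refine ⟨1, ha1, hw, hpvac 1, hq, ?_⟩
      exact fix_R hπ (Q 0 (by omega)) U hq0 hu (fun j hj => Q_ne_R) (fun j hj => U_ne_R)
    · -- back along R : case 2
      have hr := trav_R_bwd hπ hw
      have hr0 : π (R 0 (by omega)) = U := by
        have := hr 0 (by omega); rwa [dif_neg (by omega)] at this
      refine ⟨2, ha1, hw, hpvac 1, ?_, hr⟩
      exact fix_Q hπ (R 0 (by omega)) U hr0 hu (fun j hj => Ne.symm Q_ne_R) (fun j hj => U_ne_Q)
  · -- 0 < n, π U = P 0 : forward along path 1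
    have ha1 : π U = a1 := by rw [a1, dif_pos h0n]; exact hu
    have hp := trav_P hπ h0n hu
    have hpn : π (P (n-1) (by omega)) = W := by
      have := hp (n-1) (by omega); rwa [dif_neg (by omega)] at this
    rcases pi_W hπ with hw | ⟨hn0, hw⟩ | ⟨hpos, hw⟩ | hw | hw
    · exact absurd (π.injective (hpn.trans hw.symm)) (by simp)
    · omega
    · exact absurd (hπ.2 _ _ hpn hw) (by simp)
    · -- back along Q : case 1
      have hq := trav_Q_bwd hπ hw
      have hq0 : π (Q 0 (by omega)) = U := by
        have := hq 0 (by omega); rwa [dif_neg (by omega)] at this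
      refine ⟨1, ha1, hw, hp, hq, ?_⟩
      exact fix_R hπ (Q 0 (by omega)) (P (n-1) (by omega)) hq0 hpn
        (fun j hj => Q_ne_R) (fun j hj => P_ne_R)
    · -- back along R : case 2
      have hr := trav_R_bwd hπ hw
      have hr0 : π (R 0 (by omega)) = U := by
        have := hr 0 (by omega); rwa [dif_neg (by omega)] at this
      refine ⟨2, ha1, hw, hp, ?_, hr⟩
      exact fix_Q hπ (R 0 (by omega)) (P (n-1) (by omega)) hr0 hpn
        (fun j hj => Ne.symm Q_ne_R) (fun j hj => P_ne_Q)
  · -- π U = Q 0 : forward along Q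
    have hq := trav_Q hπ hu
    have hqm : π (Q (3*n+1) (by omega)) = W := by
      have := hq (3*n+1) (by omega); rwa [dif_neg (by omega)] at this
    rcases pi_W hπ with hw | ⟨hn0, hw⟩ | ⟨h0n, hw⟩ | hw | hw
    · exact absurd (π.injective (hqm.trans hw.symm)) (by simp)
    · -- n = 0 : case 3 with b1 = U
      have hb1 : π W = b1 := by rw [b1, dif_neg (by omega)]; exact hw
      refine ⟨3, hu, hb1, ?_, hq, ?_⟩
      · intro j hj; omega
      · exact fix_R hπ W (Q (3*n+1) (by omega)) hw hqm
          (fun j hj => W_ne_R) (fun j hj => Q_ne_R)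
    · -- case 3 with b1 = P (n-1)
      have hb1 : π W = b1 := by rw [b1, dif_pos h0n]; exact hw
      have hpb := trav_P_bwd hπ h0n hw
      have hp0 : π (P 0 h0n) = U := by
        have := hpb 0 h0n; rwa [dif_neg (by omega)] at this
      refine ⟨3, hu, hb1, hpb, hq, ?_⟩
      exact fix_R hπ (P 0 h0n) (Q (3*n+1) (by omega)) hp0 hqm
        (fun j hj => P_ne_R) (fun j hj => Q_ne_R)
    · exact absurd (hπ.2 _ _ hqm hw) (by simp)
    · -- case 5
      have hr := trav_R_bwd hπ hw
      have hr0 : π (R 0 (by omega)) = U := by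
        have := hr 0 (by omega); rwa [dif_neg (by omega)] at this
      refine ⟨5, hu, hw, ?_, hq, hr⟩
      exact fix_P hπ (R 0 (by omega)) (Q (3*n+1) (by omega)) hr0 hqm
        (fun j hj => Ne.symm P_ne_R) (fun j hj => Ne.symm P_ne_Q)
  · -- π U = R 0 : forward along R
    have hr := trav_R hπ hu
    have hrm : π (R (3*n+1) (by omega)) = W := by
      have := hr (3*n+1) (by omega); rwa [dif_neg (by omega)] at this
    rcases pi_W hπ with hw | ⟨hn0, hw⟩ | ⟨h0n, hw⟩ | hw | hw
    · exact absurd (π.injective (hrm.trans hw.symm)) (by simp)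
    · -- n = 0 : case 4 with b1 = U
      have hb1 : π W = b1 := by rw [b1, dif_neg (by omega)]; exact hw
      refine ⟨4, hu, hb1, ?_, ?_, hr⟩
      · intro j hj; omega
      · exact fix_Q hπ W (R (3*n+1) (by omega)) hw hrm
          (fun j hj => W_ne_Q) (fun j hj => Ne.symm Q_ne_R)
    · -- case 4 with b1 = P (n-1)
      have hb1 : π W = b1 := by rw [b1, dif_pos h0n]; exact hw
      have hpb := trav_P_bwd hπ h0n hw
      have hp0 : π (P 0 h0n) = U := by
        have := hpb 0 h0n; rwa [dif_neg (by omega)] at this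
      refine ⟨4, hu, hb1, hpb, ?_, hr⟩
      exact fix_Q hπ (P 0 h0n) (R (3*n+1) (by omega)) hp0 hrm
        (fun j hj => P_ne_Q) (fun j hj => Ne.symm Q_ne_R)
    · -- case 6
      have hq := trav_Q_bwd hπ hw
      have hq0 : π (Q 0 (by omega)) = U := by
        have := hq 0 (by omega); rwa [dif_neg (by omega)] at this
      refine ⟨6, hu, hw, ?_, hq, hr⟩
      exact fix_P hπ (Q 0 (by omega)) (R (3*n+1) (by omega)) hq0 hrm
        (fun j hj => Ne.symm P_ne_Q) (fun j hj => Ne.symm P_ne_R)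
    · exact absurd (hπ.2 _ _ hrm hw) (by simp)


open Classical in
noncomputable def validSet (n : ℕ) : Finset (Equiv.Perm (F8V n)) :=
  Finset.univ.filter (Valid n)

open Classical in
noncomputable def cls (n : ℕ) (π : Equiv.Perm (F8V n)) : Fin 7 :=
  if h : Valid n π then (classify h).choose else 0

lemma cls_spec (hπ : Valid n π) : Spec (cls n π) π := by
  rw [cls, dif_pos hπ]
  exact (classify hπ).choose_spec

lemma validSet_card : (validSet n).card ≤ 7 := by
  have h : (validSet n).card ≤ (Finset.univ : Finset (Fin 7)).card := by
    apply Finset.card_le_card_of_injOn (fun π => cls n π)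
    · intro π _; exact Finset.mem_univ _
    · intro π hmem π' hmem' hee
      classical
      have hv : Valid n π := (Finset.mem_filter.mp hmem).2
      have hv' : Valid n π' := (Finset.mem_filter.mp hmem').2
      have h1 := cls_spec hv
      have h1' := cls_spec hv'
      have hee' : cls n π = cls n π' := hee
      rw [← hee'] at h1'
      exact spec_unique h1 h1'
  simpa using h

lemma valid_one : Valid n 1 := by
  constructor
  · intro v; left; rfl
  · intro v w h1 h2
    simpa using h1

lemma isMove_iff {X Y : Equiv.Perm (F8V n)} :
    IsMove (figureEight n) X Y ↔ Valid n (X.symm.trans Y) := by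
  constructor
  · rintro ⟨h1, h2⟩
    constructor
    · intro v
      have := h1 (X.symm v)
      rw [Equiv.apply_symm_apply] at this
      simpa using this
    · intro v w hvw hwv
      by_contra hne
      refine h2 (X.symm v) (X.symm w) (fun e => hne (by simpa using congrArg X e)) ⟨?_, ?_, ?_⟩
      · simpa using hvw
      · simpa using hwv
      · simpa using hne
  · rintro ⟨h1, h2⟩
    constructor
    · intro r
      have := h1 (X r)
      simpa using this
    · rintro r s hrs ⟨hys, hyr, hxx⟩
      exact hxx (h2 (X r) (X s) (by simpa using hys) (by simpa using hyr))

noncomputable def reach (n : ℕ) (XI : Equiv.Perm (F8V n)) : ℕ → Finset (Equiv.Perm (F8V n))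
  | 0 => {XI}
  | t+1 => (reach n XI t).biUnion (fun Z => (validSet n).image (fun π => Z.trans π))

lemma reach_card (XI : Equiv.Perm (F8V n)) : ∀ t, (reach n XI t).card ≤ 7 ^ t := by
  intro t
  induction t with
  | zero => simp [reach]
  | succ t ih =>
    calc (reach n XI (t+1)).card
        ≤ ∑ Z ∈ reach n XI t, ((validSet n).image (fun π => Z.trans π)).card :=
          Finset.card_biUnion_le
      _ ≤ ∑ _Z ∈ reach n XI t, 7 :=
          Finset.sum_le_sum (fun Z _ => le_trans Finset.card_image_le validSet_card)
      _ = (reach n XI t).card * 7 := by rw [Finset.sum_const, smul_eq_mul]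
      _ ≤ 7 ^ t * 7 := Nat.mul_le_mul_right 7 ih
      _ = 7 ^ (t+1) := (pow_succ 7 t).symm

lemma reach_mono (XI : Equiv.Perm (F8V n)) {t t' : ℕ} (h : t ≤ t') :
    reach n XI t ⊆ reach n XI t' := by
  induction t' with
  | zero =>
    have : t = 0 := Nat.le_zero.mp h
    subst this; exact subset_rfl
  | succ t' ih =>
    rcases Nat.lt_or_ge t (t'+1) with hlt | hge
    · intro Z hZ
      have hZ' : Z ∈ reach n XI t' := ih (by omega) hZ
      rw [reach]
      apply Finset.mem_biUnion.mpr
      refine ⟨Z, hZ', Finset.mem_image.mpr ⟨1, ?_, ?_⟩⟩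
      · classical
        simp only [validSet, Finset.mem_filter, Finset.mem_univ, true_and]
        exact valid_one
      · ext v; simp
    · have : t = t'+1 := by omega
      subst this; exact subset_rfl

lemma sol_reach {XI XG : Equiv.Perm (F8V n)} {T : ℕ} {Xs : ℕ → Equiv.Perm (F8V n)}
    (hsol : IsSolution (figureEight n) XI XG T Xs) :
    ∀ t, t ≤ T → Xs t ∈ reach n XI t := by
  intro t
  induction t with
  | zero =>
    intro _
    rw [hsol.1, reach]
    exact Finset.mem_singleton_self XI
  | succ t ih =>
    intro ht
    have hmove : IsMove (figureEight n) (Xs t) (Xs (t+1)) := hsol.2.2 t (by omega)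
    have hval : Valid n ((Xs t).symm.trans (Xs (t+1))) := isMove_iff.mp hmove
    rw [reach]
    apply Finset.mem_biUnion.mpr
    refine ⟨Xs t, ih (by omega), Finset.mem_image.mpr ⟨(Xs t).symm.trans (Xs (t+1)), ?_, ?_⟩⟩
    · classical
      simp only [validSet, Finset.mem_filter, Finset.mem_univ, true_and]
      exact hval
    · ext v; simp

lemma card_F8V : Fintype.card (F8V n) = 7*n+6 := by
  simp only [Fintype.card_sum, Fintype.card_fin]
  omega

end F8

/-- On each figure-8 graph, from any initial configuration there is a goal
configuration every solution to which has makespan `T` with `7^T ≥ N!`,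
where `N = 7n + 6` is the number of vertices; hence the minimum makespan
is `Ω(N log N)`, superlinear in `N`. -/
theorem figure8_superlinear_makespan (n : ℕ) (XI : Equiv.Perm (F8V n)) :
    ∃ XG : Equiv.Perm (F8V n),
      ∀ (T : ℕ) (Xs : ℕ → Equiv.Perm (F8V n)),
        IsSolution (figureEight n) XI XG T Xs →
          Nat.factorial (7 * n + 6) ≤ 7 ^ T := by
  classical
  have hfac : 1 < Nat.factorial (7*n+6) :=
    lt_of_lt_of_le (by omega) (Nat.self_le_factorial (7*n+6))
  set tstar := Nat.findGreatest (fun T => 7 ^ T < Nat.factorial (7*n+6)) (Nat.factorial (7*n+6))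
    with htstar
  have hP0 : 7 ^ 0 < Nat.factorial (7*n+6) := by simpa using hfac
  have hstar : 7 ^ tstar < Nat.factorial (7*n+6) := by
    rw [htstar]
    exact Nat.findGreatest_spec (P := fun T => 7 ^ T < Nat.factorial (7*n+6))
      (n := Nat.factorial (7*n+6)) (m := 0) (Nat.zero_le _) hP0
  have hcardU : (Finset.univ : Finset (Equiv.Perm (F8V n))).card = Nat.factorial (7*n+6) := by
    rw [Finset.card_univ, Fintype.card_perm, F8.card_F8V]
  have hlt : (F8.reach n XI tstar).card < (Finset.univ : Finset (Equiv.Perm (F8V n))).card := by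
    rw [hcardU]
    exact lt_of_le_of_lt (F8.reach_card XI tstar) hstar
  have hex : ∃ XG, XG ∉ F8.reach n XI tstar := by
    by_contra hall
    push_neg at hall
    have hsub : (Finset.univ : Finset (Equiv.Perm (F8V n))) ⊆ F8.reach n XI tstar :=
      fun x _ => hall x
    exact absurd (Finset.card_le_card hsub) (by omega)
  obtain ⟨XG, hXG⟩ := hex
  refine ⟨XG, ?_⟩
  intro T Xs hsol
  by_contra hT
  push_neg at hT
  have hTb : T ≤ Nat.factorial (7*n+6) :=
    le_of_lt (lt_trans (Nat.lt_pow_self (by norm_num : 1 < 7) : T < 7 ^ T) hT)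
  have hTle : T ≤ tstar := Nat.le_findGreatest hTb hT
  have hmem : XG ∈ F8.reach n XI T := by
    rw [← hsol.2.1]
    exact F8.sol_reach hsol T le_rfl
  exact hXG (F8.reach_mono XI hTle hmem)
end

section
/- For every real constant c > 0, there exist a connected simple graph G (which may be taken to be a figure-8 graph) and configurations X_I, X_G on G such that the instance (G, X_I, X_G) is feasible and every solution from X_I to X_G has makespan strictly greater than c·|V(G)|. Consequently, the minimum-makespan multi-robot path planning problem does not admit solutions of linear or sub-linear makespan on arbitrary graphs. -/
open SimpleGraph

/-! ### Development -/

namespace F8P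
open Equiv Equiv.Perm

variable {n : ℕ}

def J0 : F8V n := Sum.inl 0
def J1 : F8V n := Sum.inl 1
def pA (i : ℕ) : F8V n := if h : i < n then Sum.inr (Sum.inl ⟨i, h⟩) else Sum.inl 0
def pB (i : ℕ) : F8V n := if h : i < 3*n+2 then Sum.inr (Sum.inr (Sum.inl ⟨i, h⟩)) else Sum.inl 0
def pC (i : ℕ) : F8V n := if h : i < 3*n+2 then Sum.inr (Sum.inr (Sum.inr ⟨i, h⟩)) else Sum.inl 0

lemma adj_iff (u v : F8V n) :
    (figureEight n).Adj u v ↔ u ≠ v ∧ (F8Rel n u v ∨ F8Rel n v u) :=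
  SimpleGraph.fromRel_adj _ _ _

/-- Which vertices are adjacent to an interior vertex of path B. -/
lemma adj_pB {i : ℕ} (hi : i < 3*n+2) {x : F8V n}
    (hx : (figureEight n).Adj (pB i) x) :
    (∃ k, k < 3*n+2 ∧ x = pB k ∧ (i + 1 = k ∨ k + 1 = i)) ∨
      (x = J0 ∧ i = 0) ∨ (x = J1 ∧ i + 1 = 3*n+2) := by
  rw [adj_iff] at hx
  obtain ⟨-, h⟩ := hx
  simp only [pB, dif_pos hi] at h
  rcases x with a | i' | i' | i'
  · rcases h with h | h
    · exact absurd h (by simp [F8Rel])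
    · simp only [F8Rel] at h
      rcases h with ⟨h0, h1⟩ | ⟨h0, h1⟩
      · right; left
        constructor
        · have : a = 0 := Fin.ext (by omega)
          simp [this, J0]
        · simpa using h1
      · right; right
        constructor
        · have : a = 1 := Fin.ext (by omega)
          simp [this, J1]
        · simpa using h1
  · exact absurd h (by simp [F8Rel])
  · simp only [F8Rel] at h
    left
    refine ⟨i'.val, i'.isLt, by simp [pB, dif_pos i'.isLt], by omega⟩
  · exact absurd h (by simp [F8Rel])

lemma adj_pC {i : ℕ} (hi : i < 3*n+2) {x : F8V n}
    (hx : (figureEight n).Adj (pC i) x) :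
    (∃ k, k < 3*n+2 ∧ x = pC k ∧ (i + 1 = k ∨ k + 1 = i)) ∨
      (x = J0 ∧ i = 0) ∨ (x = J1 ∧ i + 1 = 3*n+2) := by
  rw [adj_iff] at hx
  obtain ⟨-, h⟩ := hx
  simp only [pC, dif_pos hi] at h
  rcases x with a | i' | i' | i'
  · rcases h with h | h
    · exact absurd h (by simp [F8Rel])
    · simp only [F8Rel] at h
      rcases h with ⟨h0, h1⟩ | ⟨h0, h1⟩
      · right; left
        exact ⟨by have : a = 0 := Fin.ext (by omega); simp [this, J0], by simpa using h1⟩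
      · right; right
        exact ⟨by have : a = 1 := Fin.ext (by omega); simp [this, J1], by simpa using h1⟩
  · exact absurd h (by simp [F8Rel])
  · exact absurd h (by simp [F8Rel])
  · simp only [F8Rel] at h
    left
    refine ⟨i'.val, i'.isLt, by simp [pC, dif_pos i'.isLt], by omega⟩

lemma adj_pA {i : ℕ} (hi : i < n) {x : F8V n}
    (hx : (figureEight n).Adj (pA i) x) :
    (∃ k, k < n ∧ x = pA k ∧ (i + 1 = k ∨ k + 1 = i)) ∨
      (x = J0 ∧ i = 0) ∨ (x = J1 ∧ i + 1 = n) := by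
  rw [adj_iff] at hx
  obtain ⟨-, h⟩ := hx
  simp only [pA, dif_pos hi] at h
  rcases x with a | i' | i' | i'
  · rcases h with h | h
    · exact absurd h (by simp [F8Rel])
    · simp only [F8Rel] at h
      rcases h with ⟨h0, h1⟩ | ⟨h0, h1⟩
      · right; left
        exact ⟨by have : a = 0 := Fin.ext (by omega); simp [this, J0], by simpa using h1⟩
      · right; right
        exact ⟨by have : a = 1 := Fin.ext (by omega); simp [this, J1], by simpa using h1⟩
  · simp only [F8Rel] at h
    left
    refine ⟨i'.val, i'.isLt, by simp [pA, dif_pos i'.isLt], by omega⟩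
  · exact absurd h (by simp [F8Rel])
  · exact absurd h (by simp [F8Rel])

/-- Neighbours of junction `J0` (for `n ≥ 1`). -/
lemma adj_J0 (hn : 1 ≤ n) {x : F8V n} (hx : (figureEight n).Adj J0 x) :
    x = pA 0 ∨ x = pB 0 ∨ x = pC 0 := by
  rw [adj_iff] at hx
  obtain ⟨-, h⟩ := hx
  rcases x with a | i' | i' | i'
  · exfalso
    simp only [J0, F8Rel] at h
    rcases h with ⟨h0, -⟩ | ⟨-, -, h1⟩
    · omega
    · simpa using h1
  · left
    rcases h with h | h
    · simp only [J0, F8Rel] at h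
      rcases h with ⟨-, h1⟩ | ⟨h0, -⟩
      · have hn' : (0:ℕ) < n := hn
        have : i' = ⟨0, hn'⟩ := Fin.ext (by simpa using h1)
        simp [pA, dif_pos hn', this]
      · simp [J0] at h0
    · exact absurd h (by simp [F8Rel, J0])
  · right; left
    rcases h with h | h
    · simp only [J0, F8Rel] at h
      rcases h with ⟨-, h1⟩ | ⟨h0, -⟩
      · have hb : (0:ℕ) < 3*n+2 := by omega
        have : i' = ⟨0, hb⟩ := Fin.ext (by simpa using h1)
        simp [pB, dif_pos hb, this]
      · simp [J0] at h0
    · exact absurd h (by simp [F8Rel, J0])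
  · right; right
    rcases h with h | h
    · simp only [J0, F8Rel] at h
      rcases h with ⟨-, h1⟩ | ⟨h0, -⟩
      · have hb : (0:ℕ) < 3*n+2 := by omega
        have : i' = ⟨0, hb⟩ := Fin.ext (by simpa using h1)
        simp [pC, dif_pos hb, this]
      · simp [J0] at h0
    · exact absurd h (by simp [F8Rel, J0])

/-- Neighbours of junction `J1` (for `n ≥ 1`). -/
lemma adj_J1 (hn : 1 ≤ n) {x : F8V n} (hx : (figureEight n).Adj J1 x) :
    x = pA (n-1) ∨ x = pB (3*n+1) ∨ x = pC (3*n+1) := by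
  rw [adj_iff] at hx
  obtain ⟨-, h⟩ := hx
  rcases x with a | i' | i' | i'
  · exfalso
    simp only [J1, F8Rel] at h
    rcases h with ⟨h0, h1, -⟩ | ⟨h0, -, -⟩
    · simpa using h1
    · omega
  · left
    rcases h with h | h
    · simp only [J1, F8Rel] at h
      rcases h with ⟨h0, -⟩ | ⟨-, h1⟩
      · simp [J1] at h0
      · have hn' : n - 1 < n := by omega
        have : i' = ⟨n-1, hn'⟩ := Fin.ext (by simp; omega)
        rw [this]; simp only [pA]; rw [dif_pos hn']
    · exact absurd h (by simp [F8Rel, J1])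
  · right; left
    rcases h with h | h
    · simp only [J1, F8Rel] at h
      rcases h with ⟨h0, -⟩ | ⟨-, h1⟩
      · simp [J1] at h0
      · have hb : 3*n+1 < 3*n+2 := by omega
        have : i' = ⟨3*n+1, hb⟩ := Fin.ext (by simp; omega)
        rw [this]; first | (simp only [pB]; rw [dif_pos hb]) | (simp only [pC]; rw [dif_pos hb])
    · exact absurd h (by simp [F8Rel, J1])
  · right; right
    rcases h with h | h
    · simp only [J1, F8Rel] at h
      rcases h with ⟨h0, -⟩ | ⟨-, h1⟩
      · simp [J1] at h0
      · have hb : 3*n+1 < 3*n+2 := by omega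
        have : i' = ⟨3*n+1, hb⟩ := Fin.ext (by simp; omega)
        rw [this]; first | (simp only [pB]; rw [dif_pos hb]) | (simp only [pC]; rw [dif_pos hb])
    · exact absurd h (by simp [F8Rel, J1])


/-! ### Abstract path propagation -/

/-- A "move permutation": every robot stays or moves along an edge, and no two
adjacent robots swap. -/
def MoveP {V : Type*} (G : SimpleGraph V) (μ : Equiv.Perm V) : Prop :=
  (∀ v, μ v = v ∨ G.Adj v (μ v)) ∧ ∀ v, μ (μ v) = v → μ v = v

section Path

variable {V : Type*} {G : SimpleGraph V} {μ : Equiv.Perm V}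
variable {m : ℕ} {P : ℕ → V} {j0 j1 : V}

/-- Data describing one of the three internal paths of the figure-8 graph,
together with a move permutation `μ`. -/
structure PathCtx (G : SimpleGraph V) (μ : Equiv.Perm V) (m : ℕ) (P : ℕ → V)
    (j0 j1 : V) : Prop where
  hadj : ∀ v, μ v = v ∨ G.Adj v (μ v)
  hsw : ∀ v, μ (μ v) = v → μ v = v
  hm : 2 ≤ m
  hPinj : ∀ i, i < m → ∀ k, k < m → P i = P k → i = k
  hnbr : ∀ i, i < m → ∀ x, G.Adj (P i) x →
      (∃ k, k < m ∧ x = P k ∧ (i + 1 = k ∨ k + 1 = i)) ∨ (x = j0 ∧ i = 0) ∨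
        (x = j1 ∧ i + 1 = m)
  hPj0 : ∀ i, i < m → P i ≠ j0
  hPj1 : ∀ i, i < m → P i ≠ j1

namespace PathCtx

variable (C : PathCtx G μ m P j0 j1)
include C

lemma pre (u : V) : ∃ w, μ w = u ∧ (w = u ∨ G.Adj u w) := by
  refine ⟨μ⁻¹ u, μ.apply_symm_apply u, ?_⟩
  have hu : μ (μ⁻¹ u) = u := μ.apply_symm_apply u
  rcases C.hadj (μ⁻¹ u) with h | h
  · left; exact h.symm.trans hu
  · right; rw [hu] at h; exact G.adj_symm h

lemma img {i : ℕ} (hi : i < m) :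
    μ (P i) = P i ∨ (∃ k, k < m ∧ μ (P i) = P k ∧ (i + 1 = k ∨ k + 1 = i)) ∨
      (μ (P i) = j0 ∧ i = 0) ∨ (μ (P i) = j1 ∧ i + 1 = m) := by
  rcases C.hadj (P i) with h | h
  · exact Or.inl h
  · exact Or.inr (C.hnbr i hi _ h)

lemma up_chain (h0 : μ (P 0) = P 1) : ∀ i, i + 1 < m → μ (P i) = P (i + 1) := by
  have hm2 : 2 ≤ m := C.hm
  intro i
  induction i with
  | zero => intro _; exact h0
  | succ i ih =>
    intro hi2
    have ih' : μ (P i) = P (i + 1) := ih (by omega)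
    rcases C.img (show i + 1 < m by omega) with h | ⟨k, hk, hv, hor⟩ | ⟨hv, h0'⟩ | ⟨hv, hm'⟩
    · exfalso
      have := C.hPinj i (by omega) (i+1) (by omega) (μ.injective (ih'.trans h.symm))
      omega
    · rcases hor with hor | hor
      · have : k = i + 2 := by omega
        rw [this] at hv; exact hv
      · exfalso
        have hk' : k = i := by omega
        rw [hk'] at hv
        have : μ (μ (P i)) = P i := by rw [ih']; exact hv
        have hfix := C.hsw _ this
        have := C.hPinj i (by omega) (i+1) (by omega) (hfix.symm.trans ih')
        omega
    · omega
    · omega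

lemma up_top (h0 : μ (P 0) = P 1) : μ (P (m - 1)) = j1 := by
  have hm2 : 2 ≤ m := C.hm
  have hc : μ (P (m-2)) = P (m-1) := by
    have := C.up_chain h0 (m-2) (by omega)
    have e1 : m - 2 + 1 = m - 1 := by omega
    rwa [e1] at this
  rcases C.img (show m - 1 < m by omega) with h | ⟨k, hk, hv, hor⟩ | ⟨hv, h0'⟩ | ⟨hv, _⟩
  · exfalso
    have := C.hPinj (m-2) (by omega) (m-1) (by omega) (μ.injective (hc.trans h.symm))
    omega
  · exfalso
    rcases hor with hor | hor
    · omega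
    · have hk' : k = m - 2 := by omega
      rw [hk'] at hv
      have : μ (μ (P (m-2))) = P (m-2) := by rw [hc]; exact hv
      have hfix := C.hsw _ this
      have := C.hPinj (m-2) (by omega) (m-1) (by omega) (hfix.symm.trans hc)
      omega
  · exfalso; omega
  · exact hv

lemma up_j0 (h0 : μ (P 0) = P 1) : μ j0 = P 0 := by
  have hm2 : 2 ≤ m := C.hm
  obtain ⟨w, hw, hcase⟩ := C.pre (P 0)
  rcases hcase with rfl | hadj
  · exfalso
    have := C.hPinj 0 (by omega) 1 (by omega) (hw.symm.trans h0)
    omega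
  · rcases C.hnbr 0 (by omega) w hadj with ⟨k, hk, rfl, hor⟩ | ⟨rfl, -⟩ | ⟨rfl, h1⟩
    · exfalso
      rcases hor with hor | hor
      · have hk' : k = 1 := by omega
        rw [hk'] at hw
        have : μ (μ (P 0)) = P 0 := by rw [h0]; exact hw
        have hfix := C.hsw _ this
        have := C.hPinj 0 (by omega) 1 (by omega) (hfix.symm.trans h0)
        omega
      · omega
    · exact hw
    · exfalso; omega

lemma down_chain (h0 : μ (P 0) = j0) : ∀ i, i + 1 < m → μ (P (i + 1)) = P i := by
  have hm2 : 2 ≤ m := C.hm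
  intro i
  induction i with
  | zero =>
    intro h1
    obtain ⟨w, hw, hcase⟩ := C.pre (P 0)
    rcases hcase with rfl | hadj
    · exact absurd (hw.symm.trans h0) (C.hPj0 0 (by omega))
    · rcases C.hnbr 0 (by omega) w hadj with ⟨k, hk, rfl, hor⟩ | ⟨rfl, -⟩ | ⟨rfl, hm'⟩
      · rcases hor with hor | hor
        · have hk' : k = 1 := by omega
          rw [hk'] at hw; exact hw
        · omega
      · exfalso
        have : μ (μ (P 0)) = P 0 := by rw [h0]; exact hw
        exact absurd (C.hsw _ this |>.symm.trans h0) (C.hPj0 0 (by omega))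
      · exfalso; omega
  | succ i ih =>
    intro hi2
    have ih' : μ (P (i + 1)) = P i := ih (by omega)
    obtain ⟨w, hw, hcase⟩ := C.pre (P (i + 1))
    rcases hcase with rfl | hadj
    · exfalso
      have := C.hPinj i (by omega) (i+1) (by omega) ((ih'.symm.trans hw))
      omega
    · rcases C.hnbr (i+1) (by omega) w hadj with ⟨k, hk, rfl, hor⟩ | ⟨rfl, h0'⟩ | ⟨rfl, hm'⟩
      · rcases hor with hor | hor
        · have hk' : k = i + 2 := by omega
          rw [hk'] at hw; exact hw
        · exfalso
          have hk' : k = i := by omega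
          rw [hk'] at hw
          have : μ (μ (P (i+1))) = P (i+1) := by rw [ih']; exact hw
          have hfix := C.hsw _ this
          have := C.hPinj i (by omega) (i+1) (by omega) (hfix.symm.trans ih').symm
          omega
      · omega
      · omega

lemma down_j1 (h0 : μ (P 0) = j0) : μ j1 = P (m - 1) := by
  have hm2 : 2 ≤ m := C.hm
  have hc : μ (P (m-1)) = P (m-2) := by
    rcases Nat.eq_or_lt_of_le C.hm with h2 | h2
    · have e0 : m - 1 = 0 + 1 := by omega
      have e1 : m - 2 = 0 := by omega
      rw [e0, e1]; exact C.down_chain h0 0 (by omega)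
    · have := C.down_chain h0 (m-2) (by omega)
      have e1 : m - 2 + 1 = m - 1 := by omega
      rwa [e1] at this
  obtain ⟨w, hw, hcase⟩ := C.pre (P (m-1))
  rcases hcase with rfl | hadj
  · exfalso
    have := C.hPinj (m-2) (by omega) (m-1) (by omega) (hc.symm.trans hw)
    omega
  · rcases C.hnbr (m-1) (by omega) w hadj with ⟨k, hk, rfl, hor⟩ | ⟨rfl, h0'⟩ | ⟨rfl, -⟩
    · exfalso
      rcases hor with hor | hor
      · omega
      · have hk' : k = m - 2 := by omega
        rw [hk'] at hw
        have : μ (μ (P (m-2))) = P (m-2) := by rw [hw]; exact hc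
        have hfix := C.hsw _ this
        have := C.hPinj (m-2) (by omega) (m-1) (by omega) (hfix.symm.trans hw)
        omega
    · exfalso; omega
    · exact hw

lemma down_seed : ∀ i, i + 1 < m → μ (P (i + 1)) = P i → μ (P 0) = j0 := by
  have hm2 : 2 ≤ m := C.hm
  intro i
  induction i with
  | zero =>
    intro h1 h
    rcases C.img (show (0:ℕ) < m by omega) with h' | ⟨k, hk, hv, hor⟩ | ⟨hv, -⟩ | ⟨hv, hm'⟩
    · exfalso
      have := C.hPinj 0 (by omega) 1 (by omega) (μ.injective (h'.trans h.symm))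
      omega
    · exfalso
      rcases hor with hor | hor
      · have hk' : k = 1 := by omega
        rw [hk'] at hv
        have : μ (μ (P 0)) = P 0 := by rw [hv]; exact h
        have hfix := C.hsw _ this
        have := C.hPinj 0 (by omega) 1 (by omega) (hfix.symm.trans hv)
        omega
      · omega
    · exact hv
    · exfalso; omega
  | succ i ih =>
    intro hi2 h
    refine ih (by omega) ?_
    rcases C.img (show i + 1 < m by omega) with h' | ⟨k, hk, hv, hor⟩ | ⟨hv, h0'⟩ | ⟨hv, hm'⟩
    · exfalso
      have := C.hPinj (i+1) (by omega) (i+2) (by omega) (μ.injective (h'.trans h.symm))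
      omega
    · rcases hor with hor | hor
      · exfalso
        have hk' : k = i + 2 := by omega
        rw [hk'] at hv
        have : μ (μ (P (i+1))) = P (i+1) := by rw [hv]; exact h
        have hfix := C.hsw _ this
        have := C.hPinj (i+1) (by omega) (i+2) (by omega) (hfix.symm.trans hv)
        omega
      · have hk' : k = i := by omega
        rw [hk'] at hv; exact hv
    · omega
    · omega

lemma id_case (h0 : μ (P 0) = P 0) : ∀ i, i < m → μ (P i) = P i := by
  have hm2 : 2 ≤ m := C.hm
  intro i
  induction i with
  | zero => intro _; exact h0
  | succ k ih =>
    intro hk1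
    have ihk : μ (P k) = P k := ih (by omega)
    rcases C.img (show k + 1 < m from hk1) with h | ⟨j, hj, hv, hor⟩ | ⟨hv, h0'⟩ | ⟨hv, hm'⟩
    · exact h
    · exfalso
      rcases hor with hor | hor
      · -- μ (P (k+1)) = P (k+2) : no preimage for P (k+1)
        have hj' : j = k + 2 := by omega
        rw [hj'] at hv
        obtain ⟨w, hw, hcase⟩ := C.pre (P (k+1))
        rcases hcase with rfl | hadj
        · have := C.hPinj (k+1) (by omega) (k+2) (by omega) (hw.symm.trans hv)
          omega
        · rcases C.hnbr (k+1) (by omega) w hadj with ⟨l, hl, rfl, hor'⟩ | ⟨rfl, h0''⟩ | ⟨rfl, hm''⟩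
          · rcases hor' with hor' | hor'
            · have hl' : l = k + 2 := by omega
              rw [hl'] at hw
              have : μ (μ (P (k+1))) = P (k+1) := by rw [hv]; exact hw
              have hfix := C.hsw _ this
              have := C.hPinj (k+1) (by omega) (k+2) (by omega) (hfix.symm.trans hv)
              omega
            · have hl' : l = k := by omega
              rw [hl'] at hw
              have := C.hPinj k (by omega) (k+1) (by omega) (ihk.symm.trans hw)
              omega
          · omega
          · omega
      · have hj' : j = k := by omega
        rw [hj'] at hv
        have := C.hPinj k (by omega) (k+1) (by omega) (μ.injective (ihk.trans hv.symm))
        omega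
    · omega
    · -- μ (P (k+1)) = j1, k+2 = m : no preimage for P (k+1)
      exfalso
      obtain ⟨w, hw, hcase⟩ := C.pre (P (k+1))
      rcases hcase with rfl | hadj
      · exact C.hPj1 (k+1) (by omega) (hw.symm.trans hv)
      · rcases C.hnbr (k+1) (by omega) w hadj with ⟨l, hl, rfl, hor'⟩ | ⟨rfl, h0''⟩ | ⟨rfl, hm''⟩
        · rcases hor' with hor' | hor'
          · omega
          · have hl' : l = k := by omega
            rw [hl'] at hw
            have := C.hPinj k (by omega) (k+1) (by omega) (ihk.symm.trans hw)
            omega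
        · omega
        · have : μ (μ (P (k+1))) = P (k+1) := by rw [hv]; exact hw
          have hfix := C.hsw _ this
          exact C.hPj1 (k+1) (by omega) (hfix.symm.trans hv)

lemma trichotomy :
    (∀ i, i < m → μ (P i) = P i) ∨ μ (P 0) = P 1 ∨ μ (P 0) = j0 := by
  have hm2 : 2 ≤ m := C.hm
  rcases C.img (show (0:ℕ) < m by have := C.hm; omega) with h | ⟨k, hk, hv, hor⟩ | ⟨hv, -⟩ | ⟨hv, hm'⟩
  · exact Or.inl (C.id_case h)
  · rcases hor with hor | hor
    · have hk' : k = 1 := by omega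
      rw [hk'] at hv; exact Or.inr (Or.inl hv)
    · omega
  · exact Or.inr (Or.inr hv)
  · exfalso; omega

lemma up_of_j0 (h : μ j0 = P 0) : μ (P 0) = P 1 := by
  have hm2 : 2 ≤ m := C.hm
  rcases C.img (show (0:ℕ) < m by have := C.hm; omega) with h' | ⟨k, hk, hv, hor⟩ | ⟨hv, -⟩ | ⟨hv, hm'⟩
  · exfalso
    exact C.hPj0 0 (by omega) (μ.injective (h'.trans h.symm))
  · rcases hor with hor | hor
    · have hk' : k = 1 := by omega
      rw [hk'] at hv; exact hv
    · exfalso; omega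
  · exfalso
    have : μ (μ j0) = j0 := by rw [h]; exact hv
    exact C.hPj0 0 (by omega) ((C.hsw _ this).symm.trans h).symm
  · exfalso; omega

lemma down_of_j1 (h : μ j1 = P (m - 1)) : μ (P 0) = j0 := by
  have hm2 : 2 ≤ m := C.hm
  have hMm : μ (P (m-1)) = P (m-2) := by
    rcases C.img (show m - 1 < m by have := C.hm; omega) with h' | ⟨k, hk, hv, hor⟩ | ⟨hv, h0'⟩ | ⟨hv, -⟩
    · exfalso
      exact C.hPj1 (m-1) (by omega) (μ.injective (h'.trans h.symm))
    · rcases hor with hor | hor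
      · exfalso; omega
      · have hk' : k = m - 2 := by have := C.hm; omega
        rw [hk'] at hv; exact hv
    · exfalso; omega
    · exfalso
      have : μ (μ j1) = j1 := by rw [h]; exact hv
      exact C.hPj1 (m-1) (by omega) ((C.hsw _ this).symm.trans h).symm
  have e1 : m - 2 + 1 = m - 1 := by have := C.hm; omega
  exact C.down_seed (m-2) (by omega) (by rw [e1]; exact hMm)

end PathCtx

end Path


/-! ### Move classification -/

section Classify

variable {n : ℕ} {μ ν : Equiv.Perm (F8V n)}

lemma pBinj {i k : ℕ} (hi : i < 3*n+2) (hk : k < 3*n+2) (h : (pB i : F8V n) = pB k) : i = k := by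
  simp only [pB, dif_pos hi, dif_pos hk] at h
  simpa using h

lemma pCinj {i k : ℕ} (hi : i < 3*n+2) (hk : k < 3*n+2) (h : (pC i : F8V n) = pC k) : i = k := by
  simp only [pC, dif_pos hi, dif_pos hk] at h
  simpa using h

lemma pAinj {i k : ℕ} (hi : i < n) (hk : k < n) (h : (pA i : F8V n) = pA k) : i = k := by
  simp only [pA, dif_pos hi, dif_pos hk] at h
  simpa using h

lemma pB_ne_J0 {i : ℕ} (hi : i < 3*n+2) : (pB i : F8V n) ≠ J0 := by
  simp [pB, dif_pos hi, J0]

lemma pB_ne_J1 {i : ℕ} (hi : i < 3*n+2) : (pB i : F8V n) ≠ J1 := by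
  simp [pB, dif_pos hi, J1]

lemma pC_ne_J0 {i : ℕ} (hi : i < 3*n+2) : (pC i : F8V n) ≠ J0 := by
  simp [pC, dif_pos hi, J0]

lemma pC_ne_J1 {i : ℕ} (hi : i < 3*n+2) : (pC i : F8V n) ≠ J1 := by
  simp [pC, dif_pos hi, J1]

lemma pA_ne_J0 {i : ℕ} (hi : i < n) : (pA i : F8V n) ≠ J0 := by
  simp [pA, dif_pos hi, J0]

lemma pA_ne_J1 {i : ℕ} (hi : i < n) : (pA i : F8V n) ≠ J1 := by
  simp [pA, dif_pos hi, J1]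

lemma pA_ne_pB {i k : ℕ} (hi : i < n) (hk : k < 3*n+2) : (pA i : F8V n) ≠ pB k := by
  simp [pA, pB, dif_pos hi, dif_pos hk]

lemma pA_ne_pC {i k : ℕ} (hi : i < n) (hk : k < 3*n+2) : (pA i : F8V n) ≠ pC k := by
  simp [pA, pC, dif_pos hi, dif_pos hk]

lemma pB_ne_pC {i k : ℕ} (hi : i < 3*n+2) (hk : k < 3*n+2) : (pB i : F8V n) ≠ pC k := by
  simp [pB, pC, dif_pos hi, dif_pos hk]

lemma J0_ne_J1 : (J0 : F8V n) ≠ J1 := by simp [J0, J1]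

def ctxB (hn : 2 ≤ n) (hμ : MoveP (figureEight n) μ) :
    PathCtx (figureEight n) μ (3*n+2) pB (J0 : F8V n) J1 where
  hadj := hμ.1
  hsw := hμ.2
  hm := by omega
  hPinj := fun i hi k hk h => pBinj hi hk h
  hnbr := fun i hi x hx => adj_pB hi hx
  hPj0 := fun i hi => pB_ne_J0 hi
  hPj1 := fun i hi => pB_ne_J1 hi

def ctxC (hn : 2 ≤ n) (hμ : MoveP (figureEight n) μ) :
    PathCtx (figureEight n) μ (3*n+2) pC (J0 : F8V n) J1 where
  hadj := hμ.1
  hsw := hμ.2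
  hm := by omega
  hPinj := fun i hi k hk h => pCinj hi hk h
  hnbr := fun i hi x hx => adj_pC hi hx
  hPj0 := fun i hi => pC_ne_J0 hi
  hPj1 := fun i hi => pC_ne_J1 hi

def ctxA (hn : 2 ≤ n) (hμ : MoveP (figureEight n) μ) :
    PathCtx (figureEight n) μ n pA (J0 : F8V n) J1 where
  hadj := hμ.1
  hsw := hμ.2
  hm := hn
  hPinj := fun i hi k hk h => pAinj hi hk h
  hnbr := fun i hi x hx => adj_pA hi hx
  hPj0 := fun i hi => pA_ne_J0 hi
  hPj1 := fun i hi => pA_ne_J1 hi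

/-- Encoding of the behaviour of a move on one path, as an element of `Fin 3`. -/
def enc3 (μ : Equiv.Perm (F8V n)) (P : ℕ → F8V n) : Fin 3 :=
  if μ (P 0) = P 0 then 0 else if μ (P 0) = J0 then 1 else 2

/-- Encoding of a move permutation in a 27-element type. -/
def enc (μ : Equiv.Perm (F8V n)) : Fin 3 × Fin 3 × Fin 3 :=
  (enc3 μ pA, enc3 μ pB, enc3 μ pC)

section PathDet

variable {V : Type*} [DecidableEq V] {G : SimpleGraph V} {m : ℕ} {P : ℕ → V} {j0 j1 : V}
variable {μ ν : Equiv.Perm V}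

/-- From equal `enc3`-style codes, the two moves agree on `P 0`. -/
lemma PathCtx.val_det (C : PathCtx G μ m P j0 j1) (C' : PathCtx G ν m P j0 j1)
    (he : (if μ (P 0) = P 0 then (0:Fin 3) else if μ (P 0) = j0 then 1 else 2) =
          (if ν (P 0) = P 0 then (0:Fin 3) else if ν (P 0) = j0 then 1 else 2)) :
    μ (P 0) = ν (P 0) := by
  have hm2 : 2 ≤ m := C.hm
  have h10 : P 1 ≠ P 0 := fun h => by have := C.hPinj 1 (by omega) 0 (by omega) h; omega
  have h1j : P 1 ≠ j0 := C.hPj0 1 (by omega)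
  have h0j : P 0 ≠ j0 := C.hPj0 0 (by omega)
  have hj0' : j0 ≠ P 0 := Ne.symm h0j
  have hμ0 : μ (P 0) = P 0 ∨ μ (P 0) = P 1 ∨ μ (P 0) = j0 := by
    rcases C.trichotomy with h | h | h
    · exact Or.inl (h 0 (by omega))
    · exact Or.inr (Or.inl h)
    · exact Or.inr (Or.inr h)
  have hν0 : ν (P 0) = P 0 ∨ ν (P 0) = P 1 ∨ ν (P 0) = j0 := by
    rcases C'.trichotomy with h | h | h
    · exact Or.inl (h 0 (by omega))
    · exact Or.inr (Or.inl h)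
    · exact Or.inr (Or.inr h)
  rcases hμ0 with h | h | h <;> rcases hν0 with h' | h' | h' <;> rw [h, h'] at he ⊢ <;>
    first
      | rfl
      | simp [h10, h1j, hj0'] at he

/-- Two moves agreeing on `P 0` agree on the whole path. -/
lemma PathCtx.path_det (C : PathCtx G μ m P j0 j1) (C' : PathCtx G ν m P j0 j1)
    (h : μ (P 0) = ν (P 0)) : ∀ i, i < m → μ (P i) = ν (P i) := by
  have hm2 : 2 ≤ m := C.hm
  have h10 : P 1 ≠ P 0 := fun hh => by have := C.hPinj 1 (by omega) 0 (by omega) hh; omega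
  have h1j : P 1 ≠ j0 := C.hPj0 1 (by omega)
  have h0j : P 0 ≠ j0 := C.hPj0 0 (by omega)
  rcases C.trichotomy with hb | hb | hb
  · -- μ is the identity on the path
    have h0 : ν (P 0) = P 0 := by rw [← h, hb 0 (by omega)]
    have hb' := C'.id_case h0
    intro i hi; rw [hb i hi, hb' i hi]
  · -- μ shifts up
    have h0 : ν (P 0) = P 1 := by rw [← h, hb]
    intro i hi
    rcases Nat.lt_or_ge (i+1) m with hi1 | hi1
    · rw [C.up_chain hb i hi1, C'.up_chain h0 i hi1]
    · have : i = m - 1 := by omega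
      subst this
      rw [C.up_top hb, C'.up_top h0]
  · -- μ shifts down
    have h0 : ν (P 0) = j0 := by rw [← h, hb]
    intro i hi
    rcases Nat.eq_zero_or_pos i with rfl | hpos
    · rw [hb, h0]
    · have e : i = (i - 1) + 1 := by omega
      rw [e, C.down_chain hb (i-1) (by omega), C'.down_chain h0 (i-1) (by omega)]

end PathDet

end Classify


/-- A move permutation is uniquely determined by its 27-valued code. -/
theorem move_det {n : ℕ} {μ ν : Equiv.Perm (F8V n)} (hn : 2 ≤ n)
    (hμ : MoveP (figureEight n) μ) (hν : MoveP (figureEight n) ν)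
    (he : enc μ = enc ν) : μ = ν := by
  have CA := ctxA hn hμ; have CA' := ctxA hn hν
  have CB := ctxB hn hμ; have CB' := ctxB hn hν
  have CC := ctxC hn hμ; have CC' := ctxC hn hν
  obtain ⟨heA, heB, heC⟩ : enc3 μ pA = enc3 ν pA ∧ enc3 μ pB = enc3 ν pB ∧
      enc3 μ pC = enc3 ν pC := by
    have h1 := congrArg Prod.fst he
    have h2 := congrArg (fun p => p.2.1) he
    have h3 := congrArg (fun p => p.2.2) he
    exact ⟨h1, h2, h3⟩
  have hA0 : μ (pA 0) = ν (pA 0) := CA.val_det CA' heA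
  have hB0 : μ (pB 0) = ν (pB 0) := CB.val_det CB' heB
  have hC0 : μ (pC 0) = ν (pC 0) := CC.val_det CC' heC
  have hA := CA.path_det CA' hA0
  have hB := CB.path_det CB' hB0
  have hC := CC.path_det CC' hC0
  -- junction J0
  have optJ0 : ∀ {σ : Equiv.Perm (F8V n)}, MoveP (figureEight n) σ →
      σ J0 = J0 ∨ σ J0 = pA 0 ∨ σ J0 = pB 0 ∨ σ J0 = pC 0 := by
    intro σ hσ
    rcases hσ.1 J0 with h | h
    · exact Or.inl h
    · exact Or.inr (adj_J0 (by omega) h)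
  have optJ1 : ∀ {σ : Equiv.Perm (F8V n)}, MoveP (figureEight n) σ →
      σ J1 = J1 ∨ σ J1 = pA (n-1) ∨ σ J1 = pB (3*n+1) ∨ σ J1 = pC (3*n+1) := by
    intro σ hσ
    rcases hσ.1 J1 with h | h
    · exact Or.inl h
    · exact Or.inr (adj_J1 (by omega) h)
  have hj0 : μ J0 = ν J0 := by
    rcases optJ0 hμ with h | h | h | h
    · rcases optJ0 hν with h' | h' | h' | h'
      · rw [h, h']
      · exfalso
        have := CA.up_j0 (by rw [hA0]; exact CA'.up_of_j0 h')
        rw [h] at this; exact pA_ne_J0 (by omega) this.symm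
      · exfalso
        have := CB.up_j0 (by rw [hB0]; exact CB'.up_of_j0 h')
        rw [h] at this; exact pB_ne_J0 (by omega) this.symm
      · exfalso
        have := CC.up_j0 (by rw [hC0]; exact CC'.up_of_j0 h')
        rw [h] at this; exact pC_ne_J0 (by omega) this.symm
    · rw [h, (CA'.up_j0 (by rw [← hA0]; exact CA.up_of_j0 h)).symm]
    · rw [h, (CB'.up_j0 (by rw [← hB0]; exact CB.up_of_j0 h)).symm]
    · rw [h, (CC'.up_j0 (by rw [← hC0]; exact CC.up_of_j0 h)).symm]
  have hj1 : μ J1 = ν J1 := by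
    have e : 3*n+2-1 = 3*n+1 := by omega
    rcases optJ1 hμ with h | h | h | h
    · rcases optJ1 hν with h' | h' | h' | h'
      · rw [h, h']
      · exfalso
        have := CA.down_j1 (by rw [hA0]; exact CA'.down_of_j1 h')
        rw [h] at this; exact pA_ne_J1 (by omega) this.symm
      · exfalso
        have := CB.down_j1 (by rw [hB0]; exact CB'.down_of_j1 (by rw [e]; exact h'))
        rw [h] at this; exact pB_ne_J1 (by omega) this.symm
      · exfalso
        have := CC.down_j1 (by rw [hC0]; exact CC'.down_of_j1 (by rw [e]; exact h'))
        rw [h] at this; exact pC_ne_J1 (by omega) this.symm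
    · rw [h, (CA'.down_j1 (by rw [← hA0]; exact CA.down_of_j1 h)).symm]
    · have h2 := CB'.down_j1 (by rw [← hB0]; exact CB.down_of_j1 (by rw [e]; exact h))
      rw [e] at h2
      rw [h, h2.symm]
    · have h2 := CC'.down_j1 (by rw [← hC0]; exact CC.down_of_j1 (by rw [e]; exact h))
      rw [e] at h2
      rw [h, h2.symm]
  apply Equiv.ext
  intro v
  rcases v with a | i | i | i
  · fin_cases a
    · exact hj0
    · exact hj1
  · have hv : (Sum.inr (Sum.inl i) : F8V n) = pA i.val := by
      simp [pA, dif_pos i.isLt]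
    rw [hv]; exact hA i.val i.isLt
  · have hv : (Sum.inr (Sum.inr (Sum.inl i)) : F8V n) = pB i.val := by
      simp [pB, dif_pos i.isLt]
    rw [hv]; exact hB i.val i.isLt
  · have hv : (Sum.inr (Sum.inr (Sum.inr i)) : F8V n) = pC i.val := by
      simp [pC, dif_pos i.isLt]
    rw [hv]; exact hC i.val i.isLt


/-! ### The three ring rotations -/

section Rotations

variable {n : ℕ}

lemma mkeq {M a b : ℕ} (ha : a < M) (hb : b < M) (h : a = b) :
    (⟨a, ha⟩ : Fin M) = ⟨b, hb⟩ := by subst h; rfl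

lemma finRotate_mk {M t : ℕ} (h' : t < M) (h : t + 1 < M) :
    finRotate M ⟨t, h'⟩ = ⟨t + 1, h⟩ := by
  obtain ⟨M', rfl⟩ : ∃ M'', M = M'' + 1 := ⟨M - 1, by omega⟩
  rw [finRotate_succ_apply]
  apply Fin.ext
  rw [Fin.val_add_one]
  split
  next heq =>
    exfalso
    have := congrArg Fin.val heq
    simp [Fin.last] at this
    omega
  next => rfl

lemma finRotate_mk_last {M : ℕ} (hM : 0 < M) (h' : M - 1 < M) :
    finRotate M ⟨M - 1, h'⟩ = ⟨0, hM⟩ := by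
  obtain ⟨M', rfl⟩ : ∃ M'', M = M'' + 1 := ⟨M - 1, by omega⟩
  have : (⟨M' + 1 - 1, h'⟩ : Fin (M' + 1)) = Fin.last M' := by
    apply Fin.ext; simp [Fin.last]
  rw [this, finRotate_last]
  rfl

/-- constructor-disjointness helpers -/
lemma pA_ne_B' {i : ℕ} {j : Fin (3*n+2)} :
    (pA i : F8V n) ≠ Sum.inr (Sum.inr (Sum.inl j)) := by
  unfold pA; split_ifs <;> simp [J0]

lemma pA_ne_C' {i : ℕ} {j : Fin (3*n+2)} :
    (pA i : F8V n) ≠ Sum.inr (Sum.inr (Sum.inr j)) := by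
  unfold pA; split_ifs <;> simp [J0]

lemma pB_ne_A' {i : ℕ} {j : Fin n} :
    (pB i : F8V n) ≠ Sum.inr (Sum.inl j) := by
  unfold pB; split_ifs <;> simp [J0]

lemma pB_ne_C' {i : ℕ} {j : Fin (3*n+2)} :
    (pB i : F8V n) ≠ Sum.inr (Sum.inr (Sum.inr j)) := by
  unfold pB; split_ifs <;> simp [J0]

lemma pC_ne_A' {i : ℕ} {j : Fin n} :
    (pC i : F8V n) ≠ Sum.inr (Sum.inl j) := by
  unfold pC; split_ifs <;> simp [J0]

lemma pC_ne_B' {i : ℕ} {j : Fin (3*n+2)} :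
    (pC i : F8V n) ≠ Sum.inr (Sum.inr (Sum.inl j)) := by
  unfold pC; split_ifs <;> simp [J0]

lemma J_ne_A' {a : Fin 2} {j : Fin n} : (Sum.inl a : F8V n) ≠ Sum.inr (Sum.inl j) := by simp
lemma J_ne_B' {a : Fin 2} {j : Fin (3*n+2)} :
    (Sum.inl a : F8V n) ≠ Sum.inr (Sum.inr (Sum.inl j)) := by simp
lemma J_ne_C' {a : Fin 2} {j : Fin (3*n+2)} :
    (Sum.inl a : F8V n) ≠ Sum.inr (Sum.inr (Sum.inr j)) := by simp

/-- Ring 1 : junctions, path A, path B. -/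
def e1 (n : ℕ) : Fin (4*n+4) → F8V n := fun k =>
  if k.val = 0 then J0
  else if k.val < n+1 then pA (k.val - 1)
  else if k.val = n+1 then J1
  else pB (4*n+3 - k.val)

/-- Ring 2 : junctions, path A, path C. -/
def e2 (n : ℕ) : Fin (4*n+4) → F8V n := fun k =>
  if k.val = 0 then J0
  else if k.val < n+1 then pA (k.val - 1)
  else if k.val = n+1 then J1
  else pC (4*n+3 - k.val)

/-- Ring 3 : junctions, path B, path C. -/
def e3 (n : ℕ) : Fin (6*n+6) → F8V n := fun k =>
  if k.val = 0 then J0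
  else if k.val < 3*n+3 then pB (k.val - 1)
  else if k.val = 3*n+3 then J1
  else pC (6*n+5 - k.val)

/-- decoders, establishing injectivity -/
def val1 (n : ℕ) : F8V n → ℕ
  | .inl a => if a.val = 0 then 0 else n+1
  | .inr (.inl i) => i.val + 1
  | .inr (.inr (.inl i)) => 4*n+3 - i.val
  | .inr (.inr (.inr _)) => 0

def val2 (n : ℕ) : F8V n → ℕ
  | .inl a => if a.val = 0 then 0 else n+1
  | .inr (.inl i) => i.val + 1
  | .inr (.inr (.inr i)) => 4*n+3 - i.val
  | .inr (.inr (.inl _)) => 0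

def val3 (n : ℕ) : F8V n → ℕ
  | .inl a => if a.val = 0 then 0 else 3*n+3
  | .inr (.inr (.inl i)) => i.val + 1
  | .inr (.inr (.inr i)) => 6*n+5 - i.val
  | .inr (.inl _) => 0

lemma val1_e1 (k : Fin (4*n+4)) : val1 n (e1 n k) = k.val := by
  unfold e1
  split_ifs with h0 h1 h2
  · simp [val1, J0]; omega
  · have hb : k.val - 1 < n := by omega
    simp only [pA, dif_pos hb, val1]
    omega
  · simp [val1, J1]; omega
  · have hb : 4*n+3 - k.val < 3*n+2 := by omega
    simp only [pB, dif_pos hb, val1]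
    omega

lemma val2_e2 (k : Fin (4*n+4)) : val2 n (e2 n k) = k.val := by
  unfold e2
  split_ifs with h0 h1 h2
  · simp [val2, J0]; omega
  · have hb : k.val - 1 < n := by omega
    simp only [pA, dif_pos hb, val2]
    omega
  · simp [val2, J1]; omega
  · have hb : 4*n+3 - k.val < 3*n+2 := by omega
    simp only [pC, dif_pos hb, val2]
    omega

lemma val3_e3 (k : Fin (6*n+6)) : val3 n (e3 n k) = k.val := by
  unfold e3
  split_ifs with h0 h1 h2
  · simp [val3, J0]; omega
  · have hb : k.val - 1 < 3*n+2 := by omega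
    simp only [pB, dif_pos hb, val3]
    omega
  · simp [val3, J1]; omega
  · have hb : 6*n+5 - k.val < 3*n+2 := by omega
    simp only [pC, dif_pos hb, val3]
    omega

def emb1 (n : ℕ) : Fin (4*n+4) ↪ F8V n :=
  ⟨e1 n, fun a b h => Fin.ext (by rw [← val1_e1 a, ← val1_e1 b, h])⟩

def emb2 (n : ℕ) : Fin (4*n+4) ↪ F8V n :=
  ⟨e2 n, fun a b h => Fin.ext (by rw [← val2_e2 a, ← val2_e2 b, h])⟩

def emb3 (n : ℕ) : Fin (6*n+6) ↪ F8V n :=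
  ⟨e3 n, fun a b h => Fin.ext (by rw [← val3_e3 a, ← val3_e3 b, h])⟩

noncomputable def rho1 (n : ℕ) : Equiv.Perm (F8V n) :=
  (finRotate (4*n+4)).viaEmbedding (emb1 n)

noncomputable def rho2 (n : ℕ) : Equiv.Perm (F8V n) :=
  (finRotate (4*n+4)).viaEmbedding (emb2 n)

noncomputable def rho3 (n : ℕ) : Equiv.Perm (F8V n) :=
  (finRotate (6*n+6)).viaEmbedding (emb3 n)

/- evaluation lemmas for `e1`, `e2`, `e3` -/
lemma e1_0 (h : (0:ℕ) < 4*n+4) : e1 n ⟨0, h⟩ = J0 := by simp [e1]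
lemma e1_A {i : ℕ} (hi : i < n) (h : i+1 < 4*n+4) : e1 n ⟨i+1, h⟩ = pA i := by
  unfold e1
  rw [if_neg (by simp), if_pos (by simp; omega)]
  simp
lemma e1_J1 (h : n+1 < 4*n+4) : e1 n ⟨n+1, h⟩ = J1 := by
  have h0 : ((⟨n+1, h⟩ : Fin (4*n+4)) : ℕ) = n+1 := rfl
  unfold e1
  split_ifs with a b c <;> simp only [h0] at * <;> first | rfl | omega
lemma e1_B {i : ℕ} (hi : i < 3*n+2) (h : 4*n+3-i < 4*n+4) : e1 n ⟨4*n+3-i, h⟩ = pB i := by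
  unfold e1
  rw [if_neg (by simp; omega), if_neg (by simp; omega), if_neg (by simp; omega)]
  simp only
  congr 1
  omega

lemma e2_0 (h : (0:ℕ) < 4*n+4) : e2 n ⟨0, h⟩ = J0 := by simp [e2]
lemma e2_A {i : ℕ} (hi : i < n) (h : i+1 < 4*n+4) : e2 n ⟨i+1, h⟩ = pA i := by
  unfold e2
  rw [if_neg (by simp), if_pos (by simp; omega)]
  simp
lemma e2_J1 (h : n+1 < 4*n+4) : e2 n ⟨n+1, h⟩ = J1 := by
  have h0 : ((⟨n+1, h⟩ : Fin (4*n+4)) : ℕ) = n+1 := rfl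
  unfold e2
  split_ifs with a b c <;> simp only [h0] at * <;> first | rfl | omega
lemma e2_C {i : ℕ} (hi : i < 3*n+2) (h : 4*n+3-i < 4*n+4) : e2 n ⟨4*n+3-i, h⟩ = pC i := by
  unfold e2
  rw [if_neg (by simp; omega), if_neg (by simp; omega), if_neg (by simp; omega)]
  simp only
  congr 1
  omega

lemma e3_0 (h : (0:ℕ) < 6*n+6) : e3 n ⟨0, h⟩ = J0 := by simp [e3]
lemma e3_B {i : ℕ} (hi : i < 3*n+2) (h : i+1 < 6*n+6) : e3 n ⟨i+1, h⟩ = pB i := by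
  unfold e3
  rw [if_neg (by simp), if_pos (by simp; omega)]
  simp
lemma e3_J1 (h : 3*n+3 < 6*n+6) : e3 n ⟨3*n+3, h⟩ = J1 := by
  have h0 : ((⟨3*n+3, h⟩ : Fin (6*n+6)) : ℕ) = 3*n+3 := rfl
  unfold e3
  split_ifs with a b c <;> simp only [h0] at * <;> first | rfl | omega
lemma e3_C {i : ℕ} (hi : i < 3*n+2) (h : 6*n+5-i < 6*n+6) : e3 n ⟨6*n+5-i, h⟩ = pC i := by
  unfold e3
  rw [if_neg (by simp; omega), if_neg (by simp; omega), if_neg (by simp; omega)]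
  simp only
  congr 1
  omega

end Rotations


section Eval

variable {n : ℕ}

lemma via_step {β : Type*} {M : ℕ} (e : Fin M ↪ β) (σ : Equiv.Perm β) (hσ : σ = (finRotate M).viaEmbedding e)
    {t s : ℕ} (ht : t < M) (hs : s < M) (hst : t + 1 = s)
    {x y : β} (hx : e ⟨t, ht⟩ = x) (hy : e ⟨s, hs⟩ = y) : σ x = y := by
  subst hst hσ
  rw [← hx, ← hy, Equiv.Perm.viaEmbedding_apply, finRotate_mk ht hs]

lemma via_last {β : Type*} {M : ℕ} (e : Fin M ↪ β) (σ : Equiv.Perm β) (hσ : σ = (finRotate M).viaEmbedding e)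
    {t : ℕ} (ht : t < M) (htop : t + 1 = M) (hM : 0 < M)
    {x y : β} (hx : e ⟨t, ht⟩ = x) (hy : e ⟨0, hM⟩ = y) : σ x = y := by
  subst hσ
  have e1 : t = M - 1 := by omega
  subst e1
  rw [← hx, ← hy, Equiv.Perm.viaEmbedding_apply, finRotate_mk_last hM ht]

-- ρ1 evaluation
lemma rho1_J0 (hn : 1 ≤ n) : rho1 n J0 = pA 0 := by
  apply via_step (emb1 n) _ rfl (t := 0) (s := 0+1) (by omega) (by omega) (by omega)
  · exact e1_0 (by omega)
  · exact e1_A (i := 0) (by omega) (by omega)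

lemma rho1_A {i : ℕ} (h : i+1 < n) : rho1 n (pA i) = pA (i+1) := by
  apply via_step (emb1 n) _ rfl (t := i+1) (s := (i+1)+1) (by omega) (by omega) (by omega)
  · exact e1_A (by omega) (by omega)
  · exact e1_A (by omega) (by omega)

lemma rho1_Alast (hn : 1 ≤ n) : rho1 n (pA (n-1)) = (J1 : F8V n) := by
  apply via_step (emb1 n) _ rfl (t := (n-1)+1) (s := n+1) (by omega) (by omega) (by omega)
  · exact e1_A (by omega) (by omega)
  · exact e1_J1 (by omega)

lemma rho1_J1 : rho1 n J1 = pB (3*n+1) := by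
  apply via_step (emb1 n) _ rfl (t := n+1) (s := 4*n+3-(3*n+1)) (by omega) (by omega) (by omega)
  · exact e1_J1 (by omega)
  · exact e1_B (by omega) (by omega)

lemma rho1_B {i : ℕ} (h : i < 3*n+1) : rho1 n (pB (i+1)) = pB i := by
  apply via_step (emb1 n) _ rfl (t := 4*n+3-(i+1)) (s := 4*n+3-i) (by omega) (by omega) (by omega)
  · exact e1_B (by omega) (by omega)
  · exact e1_B (by omega) (by omega)

lemma rho1_B0 : rho1 n (pB 0) = (J0 : F8V n) := by
  apply via_last (emb1 n) _ rfl (t := 4*n+3-0) (by omega) (by omega) (by omega)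
  · exact e1_B (i := 0) (by omega) (by omega)
  · exact e1_0 (by omega)

-- ρ2 evaluation
lemma rho2_J0 (hn : 1 ≤ n) : rho2 n J0 = pA 0 := by
  apply via_step (emb2 n) _ rfl (t := 0) (s := 0+1) (by omega) (by omega) (by omega)
  · exact e2_0 (by omega)
  · exact e2_A (i := 0) (by omega) (by omega)

lemma rho2_A {i : ℕ} (h : i+1 < n) : rho2 n (pA i) = pA (i+1) := by
  apply via_step (emb2 n) _ rfl (t := i+1) (s := (i+1)+1) (by omega) (by omega) (by omega)
  · exact e2_A (by omega) (by omega)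
  · exact e2_A (by omega) (by omega)

lemma rho2_Alast (hn : 1 ≤ n) : rho2 n (pA (n-1)) = (J1 : F8V n) := by
  apply via_step (emb2 n) _ rfl (t := (n-1)+1) (s := n+1) (by omega) (by omega) (by omega)
  · exact e2_A (by omega) (by omega)
  · exact e2_J1 (by omega)

lemma rho2_J1 : rho2 n J1 = pC (3*n+1) := by
  apply via_step (emb2 n) _ rfl (t := n+1) (s := 4*n+3-(3*n+1)) (by omega) (by omega) (by omega)
  · exact e2_J1 (by omega)
  · exact e2_C (by omega) (by omega)

lemma rho2_C {i : ℕ} (h : i < 3*n+1) : rho2 n (pC (i+1)) = pC i := by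
  apply via_step (emb2 n) _ rfl (t := 4*n+3-(i+1)) (s := 4*n+3-i) (by omega) (by omega) (by omega)
  · exact e2_C (by omega) (by omega)
  · exact e2_C (by omega) (by omega)

lemma rho2_C0 : rho2 n (pC 0) = (J0 : F8V n) := by
  apply via_last (emb2 n) _ rfl (t := 4*n+3-0) (by omega) (by omega) (by omega)
  · exact e2_C (i := 0) (by omega) (by omega)
  · exact e2_0 (by omega)

-- ρ3 evaluation
lemma rho3_J0 : rho3 n J0 = pB 0 := by
  apply via_step (emb3 n) _ rfl (t := 0) (s := 0+1) (by omega) (by omega) (by omega)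
  · exact e3_0 (by omega)
  · exact e3_B (i := 0) (by omega) (by omega)

lemma rho3_B {i : ℕ} (h : i+1 < 3*n+2) : rho3 n (pB i) = pB (i+1) := by
  apply via_step (emb3 n) _ rfl (t := i+1) (s := (i+1)+1) (by omega) (by omega) (by omega)
  · exact e3_B (by omega) (by omega)
  · exact e3_B (by omega) (by omega)

lemma rho3_Blast : rho3 n (pB (3*n+1)) = (J1 : F8V n) := by
  apply via_step (emb3 n) _ rfl (t := 3*n+1+1) (s := 3*n+3) (by omega) (by omega) (by omega)
  · exact e3_B (by omega) (by omega)
  · exact e3_J1 (by omega)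

lemma rho3_J1 : rho3 n J1 = pC (3*n+1) := by
  apply via_step (emb3 n) _ rfl (t := 3*n+3) (s := 6*n+5-(3*n+1)) (by omega) (by omega) (by omega)
  · exact e3_J1 (by omega)
  · exact e3_C (by omega) (by omega)

lemma rho3_C {i : ℕ} (h : i < 3*n+1) : rho3 n (pC (i+1)) = pC i := by
  apply via_step (emb3 n) _ rfl (t := 6*n+5-(i+1)) (s := 6*n+5-i) (by omega) (by omega) (by omega)
  · exact e3_C (by omega) (by omega)
  · exact e3_C (by omega) (by omega)

lemma rho3_C0 : rho3 n (pC 0) = (J0 : F8V n) := by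
  apply via_last (emb3 n) _ rfl (t := 6*n+5-0) (by omega) (by omega) (by omega)
  · exact e3_C (i := 0) (by omega) (by omega)
  · exact e3_0 (by omega)

-- fixed points
lemma rho1_fixC {i : ℕ} (hi : i < 3*n+2) : rho1 n (pC i) = pC i := by
  apply Equiv.Perm.viaEmbedding_apply_of_notMem
  rintro ⟨k, hk⟩
  have hk' : e1 n k = pC i := hk
  have hj : (pC i : F8V n) = Sum.inr (Sum.inr (Sum.inr ⟨i, hi⟩)) := by
    simp [pC, dif_pos hi]
  rw [hj] at hk'
  unfold e1 at hk'
  split_ifs at hk'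
  · simp [J0] at hk'
  · exact pA_ne_C' hk'
  · simp [J1] at hk'
  · exact pB_ne_C' hk'

lemma rho2_fixB {i : ℕ} (hi : i < 3*n+2) : rho2 n (pB i) = pB i := by
  apply Equiv.Perm.viaEmbedding_apply_of_notMem
  rintro ⟨k, hk⟩
  have hk' : e2 n k = pB i := hk
  have hj : (pB i : F8V n) = Sum.inr (Sum.inr (Sum.inl ⟨i, hi⟩)) := by
    simp [pB, dif_pos hi]
  rw [hj] at hk'
  unfold e2 at hk'
  split_ifs at hk'
  · simp [J0] at hk'
  · exact pA_ne_B' hk'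
  · simp [J1] at hk'
  · exact pC_ne_B' hk'

lemma rho3_fixA {i : ℕ} (hi : i < n) : rho3 n (pA i) = pA i := by
  apply Equiv.Perm.viaEmbedding_apply_of_notMem
  rintro ⟨k, hk⟩
  have hk' : e3 n k = pA i := hk
  have hj : (pA i : F8V n) = Sum.inr (Sum.inl ⟨i, hi⟩) := by
    simp [pA, dif_pos hi]
  rw [hj] at hk'
  unfold e3 at hk'
  split_ifs at hk'
  · simp [J0] at hk'
  · exact pB_ne_A' hk'
  · simp [J1] at hk'
  · exact pC_ne_A' hk'

end Eval


section MoveRho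

variable {n : ℕ}

lemma adjc_AA {i : ℕ} (h : i+1 < n) : (figureEight n).Adj (pA i) (pA (i+1)) := by
  rw [adj_iff]
  have hi : i < n := by omega
  refine ⟨fun hh => by have := pAinj hi h hh; omega, Or.inl ?_⟩
  simp [pA, dif_pos hi, dif_pos h, F8Rel]

lemma adjc_BB {i : ℕ} (h : i+1 < 3*n+2) : (figureEight n).Adj (pB i) (pB (i+1)) := by
  rw [adj_iff]
  have hi : i < 3*n+2 := by omega
  have h' : i < 3*n+1 := by omega
  refine ⟨fun hh => by have := pBinj hi h hh; omega, Or.inl ?_⟩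
  simp [pB, hi, h', F8Rel]

lemma adjc_CC {i : ℕ} (h : i+1 < 3*n+2) : (figureEight n).Adj (pC i) (pC (i+1)) := by
  rw [adj_iff]
  have hi : i < 3*n+2 := by omega
  have h' : i < 3*n+1 := by omega
  refine ⟨fun hh => by have := pCinj hi h hh; omega, Or.inl ?_⟩
  simp [pC, hi, h', F8Rel]

lemma adjc_J0A (hn : 1 ≤ n) : (figureEight n).Adj J0 (pA 0) := by
  rw [adj_iff]
  refine ⟨fun hh => pA_ne_J0 (show (0:ℕ) < n by omega) hh.symm, Or.inl ?_⟩
  simp [pA, dif_pos (show (0:ℕ) < n by omega), J0, F8Rel]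

lemma adjc_J0B : (figureEight n).Adj J0 (pB 0) := by
  rw [adj_iff]
  refine ⟨fun hh => pB_ne_J0 (show (0:ℕ) < 3*n+2 by omega) hh.symm, Or.inl ?_⟩
  simp [pB, dif_pos (show (0:ℕ) < 3*n+2 by omega), J0, F8Rel]

lemma adjc_J0C : (figureEight n).Adj J0 (pC 0) := by
  rw [adj_iff]
  refine ⟨fun hh => pC_ne_J0 (show (0:ℕ) < 3*n+2 by omega) hh.symm, Or.inl ?_⟩
  simp [pC, dif_pos (show (0:ℕ) < 3*n+2 by omega), J0, F8Rel]

lemma adjc_AJ1 (hn : 1 ≤ n) : (figureEight n).Adj (pA (n-1)) J1 := by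
  rw [adj_iff]
  refine ⟨pA_ne_J1 (by omega), Or.inr ?_⟩
  simp only [pA, dif_pos (show n-1 < n by omega), J1, F8Rel]
  right
  exact ⟨rfl, show n-1+1 = n by omega⟩

lemma adjc_BJ1 : (figureEight n).Adj (pB (3*n+1)) J1 := by
  rw [adj_iff]
  refine ⟨pB_ne_J1 (by omega), Or.inr ?_⟩
  simp only [pB, dif_pos (show 3*n+1 < 3*n+2 by omega), J1, F8Rel]
  right
  exact ⟨rfl, trivial⟩

lemma adjc_CJ1 : (figureEight n).Adj (pC (3*n+1)) J1 := by
  rw [adj_iff]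
  refine ⟨pC_ne_J1 (by omega), Or.inr ?_⟩
  simp only [pC, dif_pos (show 3*n+1 < 3*n+2 by omega), J1, F8Rel]
  right
  exact ⟨rfl, trivial⟩

lemma finRotate_val {M : ℕ} (k : Fin M) :
    (finRotate M k).val = if k.val + 1 = M then 0 else k.val + 1 := by
  by_cases hk : k.val + 1 = M
  · rw [if_pos hk]
    have hkk : k = ⟨M-1, by omega⟩ := by apply Fin.ext; simp; omega
    rw [hkk, finRotate_mk_last (by omega) (by omega)]
  · rw [if_neg hk]
    have h1 : finRotate M ⟨k.val, k.isLt⟩ = ⟨k.val+1, by omega⟩ :=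
      finRotate_mk k.isLt (by omega)
    rw [Fin.eta] at h1
    rw [h1]

lemma no2cyc {β : Type*} {M : ℕ} (hM : 3 ≤ M) (e : Fin M ↪ β) (v : β)
    (h : (finRotate M).viaEmbedding e ((finRotate M).viaEmbedding e v) = v) :
    (finRotate M).viaEmbedding e v = v := by
  by_cases hv : v ∈ Set.range ⇑e
  · obtain ⟨k, rfl⟩ := hv
    exfalso
    rw [Equiv.Perm.viaEmbedding_apply, Equiv.Perm.viaEmbedding_apply] at h
    have h2 : finRotate M (finRotate M k) = k := e.injective h
    have v1 := finRotate_val k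
    have v2 := finRotate_val (finRotate M k)
    have v3 := congrArg Fin.val h2
    have hk := k.isLt
    split_ifs at v1 v2 <;> omega
  · exact Equiv.Perm.viaEmbedding_apply_of_notMem _ _ _ hv

lemma vA_eq (i : Fin n) : (Sum.inr (Sum.inl i) : F8V n) = pA i.val := by
  simp [pA, dif_pos i.isLt]
lemma vB_eq (i : Fin (3*n+2)) : (Sum.inr (Sum.inr (Sum.inl i)) : F8V n) = pB i.val := by
  simp [pB, dif_pos i.isLt]
lemma vC_eq (i : Fin (3*n+2)) : (Sum.inr (Sum.inr (Sum.inr i)) : F8V n) = pC i.val := by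
  simp [pC, dif_pos i.isLt]

lemma J_cases (a : Fin 2) : (Sum.inl a : F8V n) = J0 ∨ (Sum.inl a : F8V n) = J1 := by
  rcases a with ⟨av, ha⟩
  interval_cases av
  · exact Or.inl rfl
  · exact Or.inr rfl

lemma moveP_rho3 (hn : 1 ≤ n) : MoveP (figureEight n) (rho3 n) := by
  constructor
  · intro v
    rcases v with a | i | i | i
    · rcases J_cases a with h | h <;> rw [h]
      · right
        rw [rho3_J0]
        exact adjc_J0B
      · right
        rw [rho3_J1]
        exact adjc_CJ1.symm
    · left
      rw [vA_eq]; exact rho3_fixA i.isLt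
    · right
      rw [vB_eq]
      by_cases hi : i.val + 1 < 3*n+2
      · rw [rho3_B hi]; exact adjc_BB hi
      · have hieq : i.val = 3*n+1 := by have := i.isLt; omega
        rw [hieq, rho3_Blast]; exact adjc_BJ1
    · right
      rw [vC_eq]
      by_cases hi : i.val = 0
      · rw [hi, rho3_C0]; exact adjc_J0C.symm
      · obtain ⟨j, hj⟩ : ∃ j, i.val = j + 1 := ⟨i.val - 1, by omega⟩
        have hjlt : j < 3*n+1 := by have := i.isLt; omega
        rw [hj, rho3_C hjlt]; exact (adjc_CC (by omega)).symm
  · intro v h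
    exact no2cyc (by omega) (emb3 n) v h

lemma moveP_rho1 (hn : 1 ≤ n) : MoveP (figureEight n) (rho1 n) := by
  constructor
  · intro v
    rcases v with a | i | i | i
    · rcases J_cases a with h | h <;> rw [h]
      · right
        rw [rho1_J0 hn]
        exact adjc_J0A hn
      · right
        rw [rho1_J1]
        exact adjc_BJ1.symm
    · right
      rw [vA_eq]
      by_cases hi : i.val + 1 < n
      · rw [rho1_A hi]; exact adjc_AA hi
      · have hieq : i.val = n - 1 := by have := i.isLt; omega
        rw [hieq, rho1_Alast hn]; exact adjc_AJ1 hn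
    · right
      rw [vB_eq]
      by_cases hi : i.val = 0
      · rw [hi, rho1_B0]; exact adjc_J0B.symm
      · obtain ⟨j, hj⟩ : ∃ j, i.val = j + 1 := ⟨i.val - 1, by omega⟩
        have hjlt : j < 3*n+1 := by have := i.isLt; omega
        rw [hj, rho1_B hjlt]; exact (adjc_BB (by omega)).symm
    · left
      rw [vC_eq]; exact rho1_fixC i.isLt
  · intro v h
    exact no2cyc (by omega) (emb1 n) v h

lemma moveP_rho2 (hn : 1 ≤ n) : MoveP (figureEight n) (rho2 n) := by
  constructor
  · intro v
    rcases v with a | i | i | i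
    · rcases J_cases a with h | h <;> rw [h]
      · right
        rw [rho2_J0 hn]
        exact adjc_J0A hn
      · right
        rw [rho2_J1]
        exact adjc_CJ1.symm
    · right
      rw [vA_eq]
      by_cases hi : i.val + 1 < n
      · rw [rho2_A hi]; exact adjc_AA hi
      · have hieq : i.val = n - 1 := by have := i.isLt; omega
        rw [hieq, rho2_Alast hn]; exact adjc_AJ1 hn
    · left
      rw [vB_eq]; exact rho2_fixB i.isLt
    · right
      rw [vC_eq]
      by_cases hi : i.val = 0
      · rw [hi, rho2_C0]; exact adjc_J0C.symm
      · obtain ⟨j, hj⟩ : ∃ j, i.val = j + 1 := ⟨i.val - 1, by omega⟩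
        have hjlt : j < 3*n+1 := by have := i.isLt; omega
        rw [hj, rho2_C hjlt]; exact (adjc_CC (by omega)).symm
  · intro v h
    exact no2cyc (by omega) (emb2 n) v h

lemma inv_eval {β : Type*} (σ : Equiv.Perm β) {x y : β} (h : σ y = x) : σ⁻¹ x = y := by
  rw [← h]; exact σ.symm_apply_apply y

/-- The key identity: `ρ3 ρ2⁻¹ ρ1` is the transposition of `J0` and `pB 0`. -/
theorem w_eq (hn : 1 ≤ n) :
    rho3 n * (rho2 n)⁻¹ * rho1 n = Equiv.swap (J0 : F8V n) (pB 0) := by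
  have hJ0B : (J0 : F8V n) ≠ pB 0 := fun h => pB_ne_J0 (by omega) h.symm
  apply Equiv.ext
  intro v
  rw [Equiv.Perm.mul_apply, Equiv.Perm.mul_apply]
  rcases v with a | i | i | i
  · rcases J_cases a with h | h <;> rw [h]
    · rw [rho1_J0 hn, inv_eval _ (rho2_J0 hn), rho3_J0, Equiv.swap_apply_left]
    · rw [rho1_J1,
        inv_eval _ (rho2_fixB (show 3*n+1 < 3*n+2 by omega)), rho3_Blast,
        Equiv.swap_apply_of_ne_of_ne (fun h => J0_ne_J1 h.symm)
          (fun h => pB_ne_J1 (by omega) h.symm)]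
  · rw [vA_eq]
    rw [Equiv.swap_apply_of_ne_of_ne (pA_ne_J0 i.isLt) (pA_ne_pB i.isLt (by omega))]
    by_cases hi : i.val + 1 < n
    · rw [rho1_A hi, inv_eval _ (rho2_A hi), rho3_fixA (by omega)]
    · have hieq : i.val = n - 1 := by have := i.isLt; omega
      rw [hieq, rho1_Alast hn, inv_eval _ (rho2_Alast hn), rho3_fixA (by omega)]
  · rw [vB_eq]
    by_cases hi : i.val = 0
    · rw [hi, rho1_B0, inv_eval _ rho2_C0, rho3_C0, Equiv.swap_apply_right]
    · obtain ⟨j, hj⟩ : ∃ j, i.val = j + 1 := ⟨i.val - 1, by omega⟩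
      have hjlt : j < 3*n+1 := by have := i.isLt; omega
      rw [hj, rho1_B hjlt, inv_eval _ (rho2_fixB (by omega)), rho3_B (by omega),
        Equiv.swap_apply_of_ne_of_ne (pB_ne_J0 (by omega))
          (fun h => by have := pBinj (by omega) (by omega) h; omega)]
  · rw [vC_eq]
    rw [Equiv.swap_apply_of_ne_of_ne (pC_ne_J0 i.isLt)
      (fun h => (pB_ne_pC (by omega) i.isLt) h.symm)]
    by_cases hi : i.val = 3*n+1
    · rw [hi, rho1_fixC (by omega), inv_eval _ rho2_J1, rho3_J1]
    · obtain ⟨j, hj⟩ : ∃ j, i.val = j := ⟨i.val, rfl⟩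
      have hjlt : i.val < 3*n+1 := by have := i.isLt; omega
      rw [rho1_fixC i.isLt, inv_eval _ (rho2_C hjlt), rho3_C hjlt]

end MoveRho


/-! ### Solutions, words and reachability -/

section Solutions

variable {V : Type*} {G : SimpleGraph V}

lemma isMove_moveP {X Y : Equiv.Perm V} (h : IsMove G X Y) : MoveP G (Y * X⁻¹) := by
  constructor
  · intro v
    rcases h.1 (X⁻¹ v) with h1 | h1
    · left; simpa using h1
    · right; simpa using h1
  · intro v hv
    by_contra hne
    refine h.2 (X⁻¹ v) (X⁻¹ ((Y * X⁻¹) v)) ?_ ⟨?_, ?_, ?_⟩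
    · intro hh
      have := congrArg X hh
      simp only [Equiv.Perm.coe_inv, Equiv.apply_symm_apply] at this
      exact hne (by simpa using this.symm)
    · simp
    · simpa using hv
    · simp only [Equiv.Perm.coe_inv, Equiv.apply_symm_apply]
      exact fun hh => hne hh.symm

lemma moveP_isMove {μ X : Equiv.Perm V} (h : MoveP G μ) : IsMove G X (μ * X) := by
  constructor
  · intro r
    rcases h.1 (X r) with h1 | h1
    · left; simpa using h1
    · right; simpa using h1
  · rintro r s hrs ⟨h1, h2, h3⟩
    simp only [Equiv.Perm.mul_apply] at h1 h2
    have hμ : μ (μ (X r)) = X r := by rw [h1, h2]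
    have := h.2 _ hμ
    rw [h1] at this
    exact h3 this.symm

lemma isMove_id (X : Equiv.Perm V) : IsMove G X X :=
  ⟨fun _ => Or.inl rfl, fun r s _ h => h.2.2 h.1⟩

lemma isMove_symm {X Y : Equiv.Perm V} (h : IsMove G X Y) : IsMove G Y X := by
  constructor
  · intro r
    rcases h.1 r with h1 | h1
    · exact Or.inl h1.symm
    · exact Or.inr h1.symm
  · rintro r s hrs ⟨h1, h2, h3⟩
    refine h.2 r s hrs ⟨h2.symm, h1.symm, fun hh => h3 ?_⟩
    rw [← h1, ← h2, hh]

lemma isMove_transl (π : Equiv.Perm V) {X Y : Equiv.Perm V} (h : IsMove G X Y) :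
    IsMove G (X * π) (Y * π) := by
  constructor
  · intro r
    simpa using h.1 (π r)
  · rintro r s hrs ⟨h1, h2, h3⟩
    simp only [Equiv.Perm.mul_apply] at h1 h2 h3
    exact h.2 (π r) (π s) (fun hh => hrs (π.injective hh)) ⟨h1, h2, h3⟩

def Reach (G : SimpleGraph V) (g : Equiv.Perm V) : Prop :=
  ∃ T Xs, IsSolution G 1 g T Xs

lemma reach_one : Reach G 1 :=
  ⟨0, fun _ => 1, rfl, rfl, fun t ht => absurd ht (by omega)⟩

lemma sol_concat {X Y Z : Equiv.Perm V} {T1 T2 : ℕ} {Xs1 Xs2 : ℕ → Equiv.Perm V}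
    (h1 : IsSolution G X Y T1 Xs1) (h2 : IsSolution G Y Z T2 Xs2) :
    IsSolution G X Z (T1 + T2) (fun t => if t < T1 then Xs1 t else Xs2 (t - T1)) := by
  obtain ⟨ha1, hb1, hc1⟩ := h1
  obtain ⟨ha2, hb2, hc2⟩ := h2
  refine ⟨?_, ?_, ?_⟩
  · by_cases h : 0 < T1
    · simp only [if_pos h]; exact ha1
    · simp only [if_neg h]
      have hT : T1 = 0 := by omega
      rw [show (0:ℕ) - T1 = 0 by omega, ha2, ← hb1, hT]
      exact ha1
  · simp only [if_neg (show ¬(T1 + T2 < T1) by omega)]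
    rw [show T1 + T2 - T1 = T2 by omega]
    exact hb2
  · intro t ht
    by_cases hA : t + 1 < T1
    · simp only [if_pos hA, if_pos (show t < T1 by omega)]
      exact hc1 t (by omega)
    · by_cases hB : t < T1
      · simp only [if_pos hB, if_neg hA]
        rw [show t + 1 - T1 = 0 by omega, ha2, ← hb1, show T1 = t + 1 by omega]
        exact hc1 t (by omega)
      · simp only [if_neg hB, if_neg hA]
        rw [show t + 1 - T1 = (t - T1) + 1 by omega]
        exact hc2 (t - T1) (by omega)

lemma sol_transl (π : Equiv.Perm V) {X Y : Equiv.Perm V} {T : ℕ} {Xs : ℕ → Equiv.Perm V}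
    (h : IsSolution G X Y T Xs) : IsSolution G (X * π) (Y * π) T (fun t => Xs t * π) :=
  ⟨by show Xs 0 * π = X * π; rw [h.1], by show Xs T * π = Y * π; rw [h.2.1],
    fun t ht => isMove_transl π (h.2.2 t ht)⟩

lemma sol_rev {X Y : Equiv.Perm V} {T : ℕ} {Xs : ℕ → Equiv.Perm V}
    (h : IsSolution G X Y T Xs) : IsSolution G Y X T (fun t => Xs (T - t)) := by
  refine ⟨?_, ?_, ?_⟩
  · show Xs (T - 0) = Y
    rw [show T - 0 = T by omega]; exact h.2.1
  · show Xs (T - T) = X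
    rw [show T - T = 0 by omega]; exact h.1
  · intro t ht
    show IsMove G (Xs (T - t)) (Xs (T - (t+1)))
    rw [show T - t = (T - (t+1)) + 1 by omega]
    exact isMove_symm (h.2.2 (T - (t+1)) (by omega))

lemma reach_mul {g h : Equiv.Perm V} (hg : Reach G g) (hh : Reach G h) : Reach G (g * h) := by
  obtain ⟨T1, Xs1, h1⟩ := hg
  obtain ⟨T2, Xs2, h2⟩ := hh
  have h1' := sol_transl h h1
  rw [one_mul] at h1'
  exact ⟨T2 + T1, _, sol_concat h2 h1'⟩

lemma reach_inv {g : Equiv.Perm V} (hg : Reach G g) : Reach G g⁻¹ := by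
  obtain ⟨T, Xs, h⟩ := hg
  have h2 := sol_transl g⁻¹ (sol_rev h)
  rw [mul_inv_cancel, one_mul] at h2
  exact ⟨T, _, h2⟩

lemma reach_moveP {μ : Equiv.Perm V} (h : MoveP G μ) : Reach G μ := by
  refine ⟨1, fun t => if t = 0 then 1 else μ, by simp, by simp, ?_⟩
  intro t ht
  have ht0 : t = 0 := by omega
  subst ht0
  simp only [if_pos rfl, if_neg (by omega : (1:ℕ) ≠ 0)]
  have := moveP_isMove (X := 1) (G := G) h
  rwa [mul_one] at this

lemma reach_closure {S : Set (Equiv.Perm V)} (hS : ∀ μ ∈ S, MoveP G μ) :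
    ∀ g ∈ Subgroup.closure S, Reach G g := by
  intro g hg
  refine Subgroup.closure_induction ?_ ?_ ?_ ?_ hg
  · exact fun x hx => reach_moveP (hS x hx)
  · exact reach_one
  · exact fun x y _ _ ihx ihy => reach_mul ihx ihy
  · exact fun x _ ihx => reach_inv ihx

lemma sol_extend {T L : ℕ} (hTL : T ≤ L) {XG : Equiv.Perm V} {Xs : ℕ → Equiv.Perm V}
    (h : IsSolution G 1 XG T Xs) : IsSolution G 1 XG L (fun t => Xs (min t T)) := by
  refine ⟨?_, ?_, ?_⟩
  · show Xs (min 0 T) = 1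
    rw [show min 0 T = 0 by omega]; exact h.1
  · show Xs (min L T) = XG
    rw [show min L T = T by omega]; exact h.2.1
  · intro t ht
    show IsMove G (Xs (min t T)) (Xs (min (t+1) T))
    by_cases hc : t + 1 ≤ T
    · rw [show min t T = t by omega, show min (t+1) T = t+1 by omega]
      exact h.2.2 t (by omega)
    · rw [show min t T = T by omega, show min (t+1) T = T by omega]
      exact isMove_id _

end Solutions


/-! ### Counting short solutions -/

section Count

variable {n : ℕ}

open Classical in
noncomputable def recon (n : ℕ) (d : Fin 3 × Fin 3 × Fin 3) : Equiv.Perm (F8V n) :=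
  if h : ∃ μ, MoveP (figureEight n) μ ∧ enc μ = d then h.choose else 1

lemma recon_enc (hn : 2 ≤ n) {μ : Equiv.Perm (F8V n)} (hμ : MoveP (figureEight n) μ) :
    recon n (enc μ) = μ := by
  have h : ∃ ν, MoveP (figureEight n) ν ∧ enc ν = enc μ := ⟨μ, hμ, rfl⟩
  unfold recon
  rw [dif_pos h]
  exact move_det hn h.choose_spec.1 hμ h.choose_spec.2

noncomputable def wordProd (f : ℕ → Equiv.Perm (F8V n)) : ℕ → Equiv.Perm (F8V n)
  | 0 => 1
  | (t+1) => f t * wordProd f t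

@[simp] lemma wordProd_zero (f : ℕ → Equiv.Perm (F8V n)) : wordProd f 0 = 1 := rfl
@[simp] lemma wordProd_succ (f : ℕ → Equiv.Perm (F8V n)) (t : ℕ) :
    wordProd f (t+1) = f t * wordProd f t := rfl

noncomputable def decode (n L : ℕ) (ds : Fin L → Fin 3 × Fin 3 × Fin 3) :
    Equiv.Perm (F8V n) :=
  wordProd (fun t => recon n (if h : t < L then ds ⟨t, h⟩ else enc (n := n) 1)) L

lemma sol_mem_image (hn : 2 ≤ n) {L : ℕ} {XG : Equiv.Perm (F8V n)}
    {Xs : ℕ → Equiv.Perm (F8V n)} (h : IsSolution (figureEight n) 1 XG L Xs) :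
    XG ∈ Finset.image (decode n L) Finset.univ := by
  classical
  obtain ⟨h0, hT, hmv⟩ := h
  rw [Finset.mem_image]
  refine ⟨fun t => enc (Xs (t.val+1) * (Xs t.val)⁻¹), Finset.mem_univ _, ?_⟩
  rw [decode]
  have key : ∀ t, t ≤ L → wordProd (fun u => recon n (if hu : u < L then
      (fun t : Fin L => enc (Xs (t.val+1) * (Xs t.val)⁻¹)) ⟨u, hu⟩ else enc (n := n) 1)) t = Xs t := by
    intro t
    induction t with
    | zero => intro _; rw [wordProd_zero]; exact h0.symm
    | succ t ih =>
      intro ht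
      rw [wordProd_succ, ih (by omega), dif_pos (show t < L by omega)]
      simp only []
      rw [recon_enc hn (isMove_moveP (hmv t (by omega)))]
      exact inv_mul_cancel_right _ _
  rw [key L le_rfl]
  exact hT

end Count

/-! ### Richness: the reachable group contains a full symmetric group -/

section Rich

variable {n : ℕ}

noncomputable def phi3 (n : ℕ) : Equiv.Perm (Fin (6*n+6)) →* Equiv.Perm (F8V n) :=
  Equiv.Perm.viaEmbeddingHom (emb3 n)

lemma phi3_injective (n : ℕ) : Function.Injective (phi3 n) :=
  Equiv.Perm.viaEmbeddingHom_injective (emb3 n)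

lemma viaEmbedding_swap {α β : Type*} [DecidableEq α] [DecidableEq β] (e : α ↪ β) (a b : α) :
    (Equiv.swap a b).viaEmbedding e = Equiv.swap (e a) (e b) := by
  apply Equiv.ext; intro v
  by_cases hv : v ∈ Set.range ⇑e
  · obtain ⟨k, rfl⟩ := hv
    rw [Equiv.Perm.viaEmbedding_apply]
    rcases eq_or_ne k a with rfl | hka
    · rw [Equiv.swap_apply_left, Equiv.swap_apply_left]
    · rcases eq_or_ne k b with rfl | hkb
      · rw [Equiv.swap_apply_right, Equiv.swap_apply_right]
      · rw [Equiv.swap_apply_of_ne_of_ne hka hkb,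
          Equiv.swap_apply_of_ne_of_ne (fun h => hka (e.injective h))
            (fun h => hkb (e.injective h))]
  · rw [Equiv.Perm.viaEmbedding_apply_of_notMem _ _ _ hv,
      Equiv.swap_apply_of_ne_of_ne (fun h => hv ⟨a, h.symm⟩) (fun h => hv ⟨b, h.symm⟩)]

set_option maxHeartbeats 2000000 in
lemma phi3_mem (hn : 1 ≤ n) (π : Equiv.Perm (Fin (6*n+6))) :
    phi3 n π ∈ Subgroup.closure ({rho1 n, rho2 n, rho3 n} : Set (Equiv.Perm (F8V n))) := by
  have h0 : (0:ℕ) < 6*n+6 := by omega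
  have h1 : (1:ℕ) < 6*n+6 := by omega
  have hcyc : (finRotate (6*n+6)).IsCycle := isCycle_finRotate_of_le (by omega)
  have hsupp : (finRotate (6*n+6)).support = Finset.univ := support_finRotate_of_le (by omega)
  have htop := closure_cycle_adjacent_swap hcyc hsupp ⟨0, h0⟩
  have hπ : π ∈ Subgroup.closure
      {finRotate (6*n+6), Equiv.swap ⟨0,h0⟩ (finRotate (6*n+6) ⟨0,h0⟩)} := by
    rw [htop]; trivial
  have hmap := Subgroup.mem_map_of_mem (phi3 n) hπ
  rw [MonoidHom.map_closure] at hmap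
  refine (Subgroup.closure_le _).mpr ?_ hmap
  rintro x ⟨y, hy, rfl⟩
  rcases hy with rfl | hy
  · have hr : phi3 n (finRotate (6*n+6)) = rho3 n :=
      Equiv.Perm.viaEmbeddingHom_apply (finRotate (6*n+6)) (emb3 n)
    rw [hr]
    exact Subgroup.subset_closure
      (Set.mem_insert_of_mem _ (Set.mem_insert_of_mem _ (Set.mem_singleton _)))
  · rw [Set.mem_singleton_iff] at hy
    subst hy
    have hrot : finRotate (6*n+6) ⟨0, h0⟩ = ⟨1, h1⟩ := finRotate_mk h0 (by omega)
    have hswap : phi3 n (Equiv.swap ⟨0,h0⟩ (finRotate (6*n+6) ⟨0,h0⟩)) =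
        Equiv.swap (J0 : F8V n) (pB 0) := by
      rw [hrot]
      have he : phi3 n (Equiv.swap (⟨0,h0⟩ : Fin (6*n+6)) ⟨1,h1⟩) =
          (Equiv.swap (⟨0,h0⟩ : Fin (6*n+6)) ⟨1,h1⟩).viaEmbedding (emb3 n) :=
        Equiv.Perm.viaEmbeddingHom_apply _ (emb3 n)
      rw [he, viaEmbedding_swap,
        show ((emb3 n) ⟨0,h0⟩ : F8V n) = J0 from e3_0 h0,
        show ((emb3 n) ⟨1,h1⟩ : F8V n) = pB 0 from e3_B (i := 0) (by omega) h1]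
    rw [hswap, ← w_eq hn]
    have m1 : rho1 n ∈ Subgroup.closure ({rho1 n, rho2 n, rho3 n} :
        Set (Equiv.Perm (F8V n))) := Subgroup.subset_closure (Set.mem_insert _ _)
    have m2 : rho2 n ∈ Subgroup.closure ({rho1 n, rho2 n, rho3 n} :
        Set (Equiv.Perm (F8V n))) :=
      Subgroup.subset_closure (Set.mem_insert_of_mem _ (Set.mem_insert _ _))
    have m3 : rho3 n ∈ Subgroup.closure ({rho1 n, rho2 n, rho3 n} :
        Set (Equiv.Perm (F8V n))) :=
      Subgroup.subset_closure
        (Set.mem_insert_of_mem _ (Set.mem_insert_of_mem _ (Set.mem_singleton _)))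
    exact Subgroup.mul_mem _ (Subgroup.mul_mem _ m3 (Subgroup.inv_mem _ m2)) m1

end Rich

/-! ### Arithmetic -/

lemma pow_mul_factorial_le (m j : ℕ) : m^j * m.factorial ≤ (m+j).factorial := by
  induction j with
  | zero => simp
  | succ j ih =>
    have h1 : m^(j+1) * m.factorial = m * (m^j * m.factorial) := by ring
    calc m^(j+1) * m.factorial = m * (m^j * m.factorial) := h1
    _ ≤ m * (m+j).factorial := Nat.mul_le_mul_left m ih
    _ ≤ (m+j+1) * (m+j).factorial := Nat.mul_le_mul_right _ (by omega)
    _ = (m+(j+1)).factorial := by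
        rw [show m+(j+1) = (m+j)+1 by omega, Nat.factorial_succ]

lemma self_pow_le_factorial (m : ℕ) : m^m ≤ (m+m).factorial :=
  le_trans (Nat.le_mul_of_pos_right _ (Nat.factorial_pos m)) (pow_mul_factorial_le m m)

end F8P

/-- For every constant `c > 0` there is a feasible instance on some (figure-8) graph
whose every solution has makespan strictly greater than `c·|V|`: no algorithm can
guarantee linear (or sub-linear) makespan on arbitrary graphs. -/
theorem no_general_linear_makespan (c : ℝ) (hc : 0 < c) :
    ∃ (n : ℕ) (XI XG : Equiv.Perm (F8V n)),
      (∃ (T : ℕ) (Xs : ℕ → Equiv.Perm (F8V n)),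
        IsSolution (figureEight n) XI XG T Xs) ∧
      (∀ (T : ℕ) (Xs : ℕ → Equiv.Perm (F8V n)),
        IsSolution (figureEight n) XI XG T Xs →
          c * ((7 * n + 6 : ℕ) : ℝ) < T) := by
  classical
  set C : ℕ := ⌈c⌉₊ with hC
  have hC1 : 1 ≤ C := Nat.ceil_pos.mpr hc
  set n : ℕ := 3^(7*C+1) with hndef
  have hn2 : 2 ≤ n := by
    have h3 : 3 ≤ 3^(7*C+1) := Nat.le_self_pow (by omega) 3
    omega
  set L : ℕ := C * (7*n+6) with hLdef
  have harith : (27:ℕ)^L < Nat.factorial (6*n+6) := by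
    have e1 : (27:ℕ)^L = 3^(3*L) := by
      rw [show (27:ℕ) = 3^3 by norm_num, ← pow_mul]
    have e2 : 3*L < (7*C+1)*(3*n+3) := by
      have expand : (7*C+1)*(3*n+3) = 3*(C*(7*n+6)) + (3*C+3*n+3) := by ring
      rw [hLdef, expand]
      exact Nat.lt_add_of_pos_right (show 0 < 3*C+3*n+3 by omega)
    have e3 : (3:ℕ)^(3*L) < 3^((7*C+1)*(3*n+3)) :=
      Nat.pow_lt_pow_right (by omega) e2
    have e4 : (3:ℕ)^((7*C+1)*(3*n+3)) = n^(3*n+3) := by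
      rw [hndef, ← pow_mul]
    have e5 : n^(3*n+3) ≤ (3*n+3)^(3*n+3) := Nat.pow_le_pow_left (by omega) _
    have e6 : (3*n+3)^(3*n+3) ≤ Nat.factorial (6*n+6) := by
      have h := F8P.self_pow_le_factorial (3*n+3)
      rwa [show 3*n+3+(3*n+3) = 6*n+6 by ring] at h
    calc (27:ℕ)^L = 3^(3*L) := e1
    _ < 3^((7*C+1)*(3*n+3)) := e3
    _ = n^(3*n+3) := e4
    _ ≤ (3*n+3)^(3*n+3) := e5
    _ ≤ Nat.factorial (6*n+6) := e6
  set S1 : Finset (Equiv.Perm (F8V n)) :=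
    Finset.image (fun π => F8P.phi3 n π) Finset.univ with hS1def
  set S2 : Finset (Equiv.Perm (F8V n)) :=
    Finset.image (F8P.decode n L) Finset.univ with hS2def
  have hS1card : S1.card = Nat.factorial (6*n+6) := by
    rw [hS1def, Finset.card_image_of_injective _ (F8P.phi3_injective n),
      Finset.card_univ, Fintype.card_perm, Fintype.card_fin]
  have hS2card : S2.card ≤ 27^L := by
    refine le_trans Finset.card_image_le ?_
    have h27 : Fintype.card (Fin 3 × Fin 3 × Fin 3) = 27 := by simp
    rw [Finset.card_univ, Fintype.card_fun, h27, Fintype.card_fin]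
  obtain ⟨XG, hXG1, hXG2⟩ : ∃ x ∈ S1, x ∉ S2 := by
    by_contra hcon
    push_neg at hcon
    have hsub := Finset.card_le_card (fun x hx => hcon x hx)
    omega
  obtain ⟨π, -, hπ⟩ := Finset.mem_image.mp hXG1
  refine ⟨n, 1, XG, ?_, ?_⟩
  · have hmem := F8P.phi3_mem (show 1 ≤ n by omega) π
    rw [hπ] at hmem
    have hall : ∀ μ ∈ ({F8P.rho1 n, F8P.rho2 n, F8P.rho3 n} :
        Set (Equiv.Perm (F8V n))), F8P.MoveP (figureEight n) μ := by
      rintro μ (rfl | rfl | rfl)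
      · exact F8P.moveP_rho1 (by omega)
      · exact F8P.moveP_rho2 (by omega)
      · exact F8P.moveP_rho3 (by omega)
    exact F8P.reach_closure hall XG hmem
  · intro T Xs hsol
    by_contra hT
    push_neg at hT
    have hTL : T ≤ L := by
      have h1 : (T:ℝ) ≤ (C:ℝ) * ((7*n+6 : ℕ):ℝ) :=
        le_trans hT (mul_le_mul_of_nonneg_right (Nat.le_ceil c) (by positivity))
      have h2 : ((L : ℕ):ℝ) = (C:ℝ) * ((7*n+6 : ℕ):ℝ) := by
        rw [hLdef]; push_cast; ring
      rw [← h2] at h1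
      exact_mod_cast h1
    have hsol' := F8P.sol_extend hTL hsol
    exact hXG2 (F8P.sol_mem_image hn2 hsol')
end

section
/- There exists an absolute integer constant C such that for all integers m, n with m ≥ n ≥ 2 and m ≥ 3, for every configuration X on the m × n grid graph G, and for every set E' of pairwise vertex-disjoint edges of G (a matching), there is a solution of makespan at most C from X to the configuration Y defined by: Y(r) = v if X(r) = u and {u, v} ∈ E', Y(r) = u if X(r) = v and {u, v} ∈ E', and Y(r) = X(r) if X(r) is not an endpoint of any edge of E'. (The flip operation on any matching of a grid can be completed in a constant number of steps.) -/
open SimpleGraph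

def gridGraph (m n : ℕ) : SimpleGraph (Fin m × Fin n) :=
  (pathGraph m) □ (pathGraph n)

set_option maxRecDepth 10000

namespace Flip

variable {V : Type*} (G : SimpleGraph V)

/-- A legal one-step permutation of vertices. -/
def GoodStep (π : Equiv.Perm V) : Prop :=
  (∀ v, π v = v ∨ G.Adj v (π v)) ∧ ∀ v w, v ≠ w → ¬(π v = w ∧ π w = v)

variable {G}

lemma goodStep_one : GoodStep G 1 := by
  constructor
  · intro v; exact Or.inl rfl
  · intro v w hvw ⟨h1, _⟩; exact hvw (by simpa using h1)

lemma isMove_of_goodStep {π : Equiv.Perm V} (h : GoodStep G π) (X : Equiv.Perm V) :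
    IsMove G X (π * X) := by
  constructor
  · intro r; exact h.1 (X r)
  · intro r s hrs ⟨h1, h2, h3⟩
    exact h.2 (X r) (X s) h3 ⟨h1, h2⟩

lemma exists_solution_of_steps (l : List (Equiv.Perm V)) (hl : ∀ π ∈ l, GoodStep G π)
    (X : Equiv.Perm V) :
    ∃ Xs : ℕ → Equiv.Perm V, IsSolution G X (l.prod * X) l.length Xs := by
  induction l with
  | nil =>
    exact ⟨fun _ => X, by simp [IsSolution]⟩
  | cons π t ih =>
    obtain ⟨Xs, h0, hT, hmove⟩ := ih (fun π hπ => hl π (List.mem_cons_of_mem _ hπ))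
    refine ⟨fun s => if s ≤ t.length then Xs s else π * t.prod * X, by simpa using h0, ?_, ?_⟩
    · simp [List.prod_cons, mul_assoc]
    · intro s hs
      rcases Nat.lt_or_ge s t.length with h | h
      · simpa [Nat.le_of_lt h, Nat.succ_le_of_lt h] using hmove s h
      · have hseq : s = t.length := by simp at hs; omega
        subst hseq
        dsimp only
        rw [if_pos (le_refl _), if_neg (by omega : ¬ (t.length + 1 ≤ t.length)), hT, mul_assoc]
        exact isMove_of_goodStep (hl π (List.mem_cons_self)) _

variable (G)

/-- Solvable in at most `k` steps. -/
def Solvable (σ : Equiv.Perm V) (k : ℕ) : Prop :=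
  ∃ l : List (Equiv.Perm V), l.length ≤ k ∧ (∀ π ∈ l, GoodStep G π) ∧ l.prod = σ

/-- Solvable in exactly `k` steps, with all steps supported inside `S`. -/
def SolvableIn (S : Set V) (σ : Equiv.Perm V) (k : ℕ) : Prop :=
  ∃ l : List (Equiv.Perm V), l.length = k ∧ (∀ π ∈ l, GoodStep G π) ∧
    (∀ π ∈ l, ∀ v, v ∉ S → π v = v) ∧ l.prod = σ

variable {G}

lemma Solvable.mono {σ : Equiv.Perm V} {k k' : ℕ} (h : Solvable G σ k) (hk : k ≤ k') :
    Solvable G σ k' := by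
  obtain ⟨l, h1, h2, h3⟩ := h
  exact ⟨l, le_trans h1 hk, h2, h3⟩

lemma SolvableIn.solvable {S : Set V} {σ : Equiv.Perm V} {k : ℕ} (h : SolvableIn G S σ k) :
    Solvable G σ k := by
  obtain ⟨l, h1, h2, _, h4⟩ := h
  exact ⟨l, le_of_eq h1, h2, h4⟩

lemma SolvableIn.mono {S S' : Set V} {σ : Equiv.Perm V} {k : ℕ} (h : SolvableIn G S σ k)
    (hS : S ⊆ S') : SolvableIn G S' σ k := by
  obtain ⟨l, h1, h2, h3, h4⟩ := h
  exact ⟨l, h1, h2, fun π hπ v hv => h3 π hπ v (fun hvS => hv (hS hvS)), h4⟩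

lemma solvableIn_one (S : Set V) (k : ℕ) : SolvableIn G S 1 k := by
  refine ⟨List.replicate k 1, by simp, ?_, ?_, by simp⟩
  · intro π hπ; rw [List.eq_of_mem_replicate hπ]; exact goodStep_one
  · intro π hπ v _; rw [List.eq_of_mem_replicate hπ]; rfl

lemma Solvable.mul {σ τ : Equiv.Perm V} {k j : ℕ} (h1 : Solvable G σ k) (h2 : Solvable G τ j) :
    Solvable G (σ * τ) (k + j) := by
  obtain ⟨l1, ha1, hb1, hc1⟩ := h1
  obtain ⟨l2, ha2, hb2, hc2⟩ := h2
  refine ⟨l1 ++ l2, by simp; omega, ?_, by simp [hc1, hc2]⟩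
  intro π hπ
  rcases List.mem_append.mp hπ with h | h
  · exact hb1 π h
  · exact hb2 π h

lemma solvable_list_prod (k : ℕ) : ∀ (l : List (Equiv.Perm V)),
    (∀ π ∈ l, Solvable G π k) → Solvable G l.prod (l.length * k) := by
  intro l
  induction l with
  | nil => intro _; exact ⟨[], by simp⟩
  | cons π t ih =>
    intro h
    have h1 := h π (List.mem_cons_self)
    have h2 := ih (fun π hπ => h π (List.mem_cons_of_mem _ hπ))
    have := h1.mul h2
    simpa [List.length_cons, Nat.succ_mul, Nat.add_comm] using this

-- support lemmas
lemma supp_mapsTo {S : Set V} {π : Equiv.Perm V} (h : ∀ v, v ∉ S → π v = v) :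
    ∀ v ∈ S, π v ∈ S := by
  intro v hv
  by_contra hmem
  have h2 : π (π v) = π v := h (π v) hmem
  have h3 : π v = v := π.injective h2
  exact hmem (by rw [h3]; exact hv)

lemma commute_of_disjoint_supp {S1 S2 : Set V} (hdisj : ∀ v, v ∈ S1 → v ∉ S2)
    {π1 π2 : Equiv.Perm V} (h1 : ∀ v, v ∉ S1 → π1 v = v) (h2 : ∀ v, v ∉ S2 → π2 v = v) :
    Commute π1 π2 := by
  apply Equiv.ext
  intro v
  simp only [Equiv.Perm.mul_apply]
  by_cases hv1 : v ∈ S1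
  · have hv2 : v ∉ S2 := hdisj v hv1
    rw [h2 v hv2, h2 (π1 v) (hdisj _ (supp_mapsTo h1 v hv1))]
  · by_cases hv2 : v ∈ S2
    · rw [h1 v hv1, h1 (π2 v) (fun hc => hdisj _ hc (supp_mapsTo h2 v hv2))]
    · rw [h2 v hv2, h1 v hv1, h2 v hv2]

lemma mul_apply_left {S1 S2 : Set V} (hdisj : ∀ v, v ∈ S1 → v ∉ S2)
    {π1 π2 : Equiv.Perm V} (h1 : ∀ v, v ∉ S1 → π1 v = v) (h2 : ∀ v, v ∉ S2 → π2 v = v)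
    {v : V} (hv : v ∉ S2) : (π1 * π2) v = π1 v := by
  simp only [Equiv.Perm.mul_apply, h2 v hv]

lemma mul_apply_right {S1 S2 : Set V} (hdisj : ∀ v, v ∈ S1 → v ∉ S2)
    {π1 π2 : Equiv.Perm V} (h1 : ∀ v, v ∉ S1 → π1 v = v) (h2 : ∀ v, v ∉ S2 → π2 v = v)
    {v : V} (hv : v ∈ S2) : (π1 * π2) v = π2 v := by
  have hmem : π2 v ∈ S2 := supp_mapsTo h2 v hv
  have : π2 v ∉ S1 := fun hc => hdisj _ hc hmem
  simp only [Equiv.Perm.mul_apply, h1 _ this]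

lemma goodStep_mul_of_disjoint {S1 S2 : Set V} (hdisj : ∀ v, v ∈ S1 → v ∉ S2)
    {π1 π2 : Equiv.Perm V} (g1 : GoodStep G π1) (g2 : GoodStep G π2)
    (h1 : ∀ v, v ∉ S1 → π1 v = v) (h2 : ∀ v, v ∉ S2 → π2 v = v) :
    GoodStep G (π1 * π2) := by
  constructor
  · intro v
    by_cases hv : v ∈ S2
    · rw [mul_apply_right hdisj h1 h2 hv]; exact g2.1 v
    · rw [mul_apply_left hdisj h1 h2 hv]; exact g1.1 v
  · intro v w hvw ⟨hvw1, hvw2⟩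
    by_cases hv : v ∈ S2
    · rw [mul_apply_right hdisj h1 h2 hv] at hvw1
      have hw : w ∈ S2 := hvw1 ▸ supp_mapsTo h2 v hv
      rw [mul_apply_right hdisj h1 h2 hw] at hvw2
      exact g2.2 v w hvw ⟨hvw1, hvw2⟩
    · rw [mul_apply_left hdisj h1 h2 hv] at hvw1
      by_cases hw : w ∈ S2
      · rw [mul_apply_right hdisj h1 h2 hw] at hvw2
        exact hv (hvw2 ▸ supp_mapsTo h2 w hw)
      · rw [mul_apply_left hdisj h1 h2 hw] at hvw2
        exact g1.2 v w hvw ⟨hvw1, hvw2⟩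

lemma zip_prod (l1 l2 : List (Equiv.Perm V)) (hlen : l1.length = l2.length)
    (hcomm : ∀ π1 ∈ l1, ∀ π2 ∈ l2, Commute π2 π1) :
    (List.zipWith (· * ·) l1 l2).prod = l1.prod * l2.prod := by
  induction l1 generalizing l2 with
  | nil => simp at hlen ⊢; rw [List.length_eq_zero_iff.mp hlen.symm]; simp
  | cons x t1 ih =>
    cases l2 with
    | nil => simp at hlen
    | cons y t2 =>
      simp only [List.zipWith_cons_cons, List.prod_cons]
      rw [ih t2 (by simpa using hlen)
        (fun a ha b hb => hcomm a (List.mem_cons_of_mem _ ha) b (List.mem_cons_of_mem _ hb))]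
      have hy : Commute y t1.prod := by
        apply Commute.list_prod_right
        intro z hz
        exact hcomm z (List.mem_cons_of_mem _ hz) y (List.mem_cons_self)
      calc x * y * (t1.prod * t2.prod) = x * (y * t1.prod) * t2.prod := by
            rw [mul_assoc, mul_assoc, mul_assoc]
        _ = x * t1.prod * (y * t2.prod) := by rw [hy.eq, mul_assoc, mul_assoc, mul_assoc]

lemma mem_zipWith' {α : Type*} {f : α → α → α} : ∀ {l1 l2 : List α} {x : α},
    x ∈ List.zipWith f l1 l2 → ∃ a ∈ l1, ∃ b ∈ l2, x = f a b := by
  intro l1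
  induction l1 with
  | nil => intro l2 x h; simp at h
  | cons a t1 ih =>
    intro l2 x h
    cases l2 with
    | nil => simp at h
    | cons b t2 =>
      rcases List.mem_cons.mp h with h | h
      · exact ⟨a, List.mem_cons_self, b, List.mem_cons_self, h⟩
      · obtain ⟨a', ha', b', hb', hx⟩ := ih h
        exact ⟨a', List.mem_cons_of_mem _ ha', b', List.mem_cons_of_mem _ hb', hx⟩

lemma SolvableIn.parallel {S1 S2 : Set V} (hdisj : ∀ v, v ∈ S1 → v ∉ S2)
    {σ1 σ2 : Equiv.Perm V} {k : ℕ}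
    (hs1 : SolvableIn G S1 σ1 k) (hs2 : SolvableIn G S2 σ2 k) :
    SolvableIn G (S1 ∪ S2) (σ1 * σ2) k := by
  obtain ⟨l1, ha1, hb1, hc1, hd1⟩ := hs1
  obtain ⟨l2, ha2, hb2, hc2, hd2⟩ := hs2
  refine ⟨List.zipWith (· * ·) l1 l2, by rw [List.length_zipWith, ha1, ha2, min_self], ?_, ?_, ?_⟩
  · intro π hπ
    obtain ⟨π1, hπ1, π2, hπ2, rfl⟩ := mem_zipWith' hπ
    exact goodStep_mul_of_disjoint hdisj (hb1 π1 hπ1) (hb2 π2 hπ2) (hc1 π1 hπ1) (hc2 π2 hπ2)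
  · intro π hπ v hv
    obtain ⟨π1, hπ1, π2, hπ2, rfl⟩ := mem_zipWith' hπ
    have hv1 : v ∉ S1 := fun h => hv (Or.inl h)
    have hv2 : v ∉ S2 := fun h => hv (Or.inr h)
    simp only [Equiv.Perm.mul_apply, hc2 π2 hπ2 v hv2, hc1 π1 hπ1 v hv1]
  · rw [zip_prod l1 l2 (ha1.trans ha2.symm), hd1, hd2]
    intro π1 hπ1 π2 hπ2
    exact (commute_of_disjoint_supp hdisj (hc1 π1 hπ1) (hc2 π2 hπ2)).symm

lemma SolvableIn.pad {S : Set V} {σ : Equiv.Perm V} {k k' : ℕ} (h : SolvableIn G S σ k)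
    (hk : k ≤ k') : SolvableIn G S σ k' := by
  obtain ⟨l, h1, h2, h3, h4⟩ := h
  refine ⟨List.replicate (k' - k) 1 ++ l, by simp [h1]; omega, ?_, ?_, by simp [h4]⟩
  · intro π hπ
    rcases List.mem_append.mp hπ with h | h
    · rw [List.eq_of_mem_replicate h]; exact goodStep_one
    · exact h2 π h
  · intro π hπ v hv
    rcases List.mem_append.mp hπ with h | h
    · rw [List.eq_of_mem_replicate h]; rfl
    · exact h3 π h v hv

/-- cyclic rotation a→b→c→d→a -/
def sq4 {α : Type*} [DecidableEq α] (a b c d : α) : Equiv.Perm α :=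
  Equiv.swap a b * Equiv.swap b c * Equiv.swap c d

/-- cyclic rotation a→b→c→d→e→f→a -/
def hex6 {α : Type*} [DecidableEq α] (a b c d e f : α) : Equiv.Perm α :=
  Equiv.swap a b * Equiv.swap b c * Equiv.swap c d * Equiv.swap d e * Equiv.swap e f

lemma gridGraph_adj {m n : ℕ} {p q : Fin m × Fin n} :
    (gridGraph m n).Adj p q ↔
      ((p.1.val + 1 = q.1.val ∨ q.1.val + 1 = p.1.val) ∧ p.2 = q.2) ∨
      ((p.2.val + 1 = q.2.val ∨ q.2.val + 1 = p.2.val) ∧ p.1 = q.1) := by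
  cases p; cases q
  rw [gridGraph, boxProd_adj, pathGraph_adj, pathGraph_adj]

instance {m n : ℕ} : DecidableRel (gridGraph m n).Adj := fun p q =>
  decidable_of_iff _ gridGraph_adj.symm

instance {V : Type*} [Fintype V] [DecidableEq V] (G : SimpleGraph V) [DecidableRel G.Adj]
    (π : Equiv.Perm V) : Decidable (GoodStep G π) := by
  unfold GoodStep; infer_instance

-- The 3×2 model and its six rotation moves
abbrev MV := Fin 3 × Fin 2
def v00 : MV := (⟨0, by omega⟩, ⟨0, by omega⟩)
def v10 : MV := (⟨1, by omega⟩, ⟨0, by omega⟩)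
def v20 : MV := (⟨2, by omega⟩, ⟨0, by omega⟩)
def v01 : MV := (⟨0, by omega⟩, ⟨1, by omega⟩)
def v11 : MV := (⟨1, by omega⟩, ⟨1, by omega⟩)
def v21 : MV := (⟨2, by omega⟩, ⟨1, by omega⟩)

def MA : Equiv.Perm MV := sq4 v00 v10 v11 v01
def Ma : Equiv.Perm MV := sq4 v01 v11 v10 v00
def MB : Equiv.Perm MV := sq4 v10 v20 v21 v11
def Mb : Equiv.Perm MV := sq4 v11 v21 v20 v10
def MO : Equiv.Perm MV := hex6 v00 v10 v20 v21 v11 v01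
def Mo : Equiv.Perm MV := hex6 v01 v11 v21 v20 v10 v00

lemma good_MA : GoodStep (gridGraph 3 2) MA := by decide
lemma good_Ma : GoodStep (gridGraph 3 2) Ma := by decide
lemma good_MB : GoodStep (gridGraph 3 2) MB := by decide
lemma good_Mb : GoodStep (gridGraph 3 2) Mb := by decide
lemma good_MO : GoodStep (gridGraph 3 2) MO := by decide
lemma good_Mo : GoodStep (gridGraph 3 2) Mo := by decide

lemma model_id1 : ([Mo, MB, MA] : List (Equiv.Perm MV)).prod = Equiv.swap v00 v10 := by decide
lemma model_id2 : ([MO, Ma, Mb] : List (Equiv.Perm MV)).prod = Equiv.swap v10 v20 := by decide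
lemma model_id3 : ([MO, Mb, Ma] : List (Equiv.Perm MV)).prod = Equiv.swap v01 v11 := by decide
lemma model_id4 : ([Mo, MA, MB] : List (Equiv.Perm MV)).prod = Equiv.swap v11 v21 := by decide
lemma model_id5 : ([Ma, Mo, MB, MA, MA] : List (Equiv.Perm MV)).prod = Equiv.swap v00 v01 := by decide
lemma model_id6 : ([MB, Mo, MA] : List (Equiv.Perm MV)).prod = Equiv.swap v10 v11 := by decide
lemma model_id7 : ([MO, Ma, Mo, MA, MB] : List (Equiv.Perm MV)).prod = Equiv.swap v20 v21 := by decide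

lemma viaEmbedding_swap {α β : Type*} [DecidableEq α] [DecidableEq β] (f : α ↪ β) (a b : α) :
    (Equiv.swap a b).viaEmbedding f = Equiv.swap (f a) (f b) := by
  apply Equiv.ext; intro x
  by_cases hx : x ∈ Set.range f
  · obtain ⟨y, rfl⟩ := hx
    rw [Equiv.Perm.viaEmbedding_apply, Function.Injective.swap_apply f.injective]
  · rw [Equiv.Perm.viaEmbedding_apply_of_notMem _ _ _ hx, Equiv.swap_apply_of_ne_of_ne]
    · rintro rfl; exact hx ⟨a, rfl⟩
    · rintro rfl; exact hx ⟨b, rfl⟩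

lemma goodStep_viaEmbedding {α β : Type*} {G : SimpleGraph α} {H : SimpleGraph β} (f : α ↪ β)
    (hf : ∀ p q, G.Adj p q → H.Adj (f p) (f q)) {π : Equiv.Perm α} (h : GoodStep G π) :
    GoodStep H (π.viaEmbedding f) := by
  constructor
  · intro v
    by_cases hv : v ∈ Set.range f
    · obtain ⟨y, rfl⟩ := hv
      rw [Equiv.Perm.viaEmbedding_apply]
      rcases h.1 y with hy | hy
      · left; rw [hy]
      · right; exact hf _ _ hy
    · left; exact Equiv.Perm.viaEmbedding_apply_of_notMem _ _ _ hv
  · intro v w hvw ⟨h1, h2⟩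
    by_cases hv : v ∈ Set.range f
    · obtain ⟨y, rfl⟩ := hv
      rw [Equiv.Perm.viaEmbedding_apply] at h1
      subst h1
      rw [Equiv.Perm.viaEmbedding_apply] at h2
      exact h.2 y (π y) (fun hc => hvw (congrArg f hc)) ⟨rfl, f.injective h2⟩
    · rw [Equiv.Perm.viaEmbedding_apply_of_notMem _ _ _ hv] at h1
      exact hvw h1


def emb (m n s t : ℕ) (hs : s + 2 < m) (ht : t + 1 < n) : MV ↪ (Fin m × Fin n) :=
  ⟨fun p => (⟨s + p.1.val, by omega⟩, ⟨t + p.2.val, by omega⟩), by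
    rintro ⟨⟨a, ha⟩, ⟨b, hb⟩⟩ ⟨⟨c, hc⟩, ⟨d, hd⟩⟩ h
    simp only [Prod.ext_iff, Fin.ext_iff] at h ⊢
    omega⟩

lemma emb_apply (m n s t : ℕ) (hs : s + 2 < m) (ht : t + 1 < n) (p : MV) :
    emb m n s t hs ht p = (⟨s + p.1.val, by omega⟩, ⟨t + p.2.val, by omega⟩) := rfl

lemma emb_adj {m n s t : ℕ} (hs : s + 2 < m) (ht : t + 1 < n) :
    ∀ p q : MV, (gridGraph 3 2).Adj p q →
      (gridGraph m n).Adj (emb m n s t hs ht p) (emb m n s t hs ht q) := by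
  rintro ⟨⟨a, ha⟩, ⟨b, hb⟩⟩ ⟨⟨c, hc⟩, ⟨d, hd⟩⟩ h
  rw [gridGraph_adj] at h ⊢
  simp only [emb_apply, Fin.ext_iff] at h ⊢
  omega

lemma word_solvable {m n s t : ℕ} (hs : s + 2 < m) (ht : t + 1 < n)
    (l : List (Equiv.Perm MV)) (hl : ∀ π ∈ l, GoodStep (gridGraph 3 2) π)
    (u' w' : MV) (hprod : l.prod = Equiv.swap u' w') :
    SolvableIn (gridGraph m n) (Set.range (emb m n s t hs ht))
      (Equiv.swap (emb m n s t hs ht u') (emb m n s t hs ht w')) l.length := by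
  set f := emb m n s t hs ht
  refine ⟨l.map (Equiv.Perm.viaEmbeddingHom f), by simp, ?_, ?_, ?_⟩
  · intro π hπ
    obtain ⟨π', hπ', rfl⟩ := List.mem_map.mp hπ
    exact goodStep_viaEmbedding f (emb_adj hs ht) (hl π' hπ')
  · intro π hπ v hv
    obtain ⟨π', hπ', rfl⟩ := List.mem_map.mp hπ
    exact Equiv.Perm.viaEmbedding_apply_of_notMem _ _ _ hv
  · rw [← map_list_prod, hprod]
    exact viaEmbedding_swap f u' w'

/-- A constant-size box around an edge, containing its gadget. -/
def box {m n : ℕ} (u w : Fin m × Fin n) : Set (Fin m × Fin n) :=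
  {x | min u.1.val w.1.val ≤ x.1.val + 2 ∧ x.1.val ≤ min u.1.val w.1.val + 2 ∧
       min u.2.val w.2.val ≤ x.2.val + 1 ∧ x.2.val ≤ min u.2.val w.2.val + 1}

lemma box_comm {m n : ℕ} (u w : Fin m × Fin n) : box u w = box w u := by
  simp [box, min_comm]

lemma range_emb_subset_box {m n s t : ℕ} (hs : s + 2 < m) (ht : t + 1 < n)
    {u w : Fin m × Fin n} (hsu : s ≤ min u.1.val w.1.val) (hsu2 : min u.1.val w.1.val ≤ s + 2)
    (htu : t ≤ min u.2.val w.2.val) (htu2 : min u.2.val w.2.val ≤ t + 1) :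
    Set.range (emb m n s t hs ht) ⊆ box u w := by
  rintro x ⟨⟨⟨i, hi⟩, ⟨j, hj⟩⟩, rfl⟩
  simp only [emb_apply, box, Set.mem_setOf_eq]
  omega

lemma edge_solvable {m n : ℕ} (hm : 3 ≤ m) (hn : 2 ≤ n) (u w : Fin m × Fin n)
    (hadj : (gridGraph m n).Adj u w) :
    SolvableIn (gridGraph m n) (box u w) (Equiv.swap u w) 5 := by
  obtain ⟨⟨a, ha⟩, ⟨b, hb⟩⟩ := u
  obtain ⟨⟨c, hc⟩, ⟨d, hd⟩⟩ := w
  rw [gridGraph_adj] at hadj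
  simp only [Fin.ext_iff] at hadj
  set p := min a c with hp
  set q := min b d with hq
  have hs : min p (m - 3) + 2 < m := by omega
  have ht : min q (n - 2) + 1 < n := by omega
  set s := min p (m - 3) with hsdef
  set t := min q (n - 2) with htdef
  set f := emb m n s t hs ht with hf
  have hsub : Set.range f ⊆ box ((⟨a, ha⟩, ⟨b, hb⟩) : Fin m × Fin n) (⟨c, hc⟩, ⟨d, hd⟩) := by
    apply range_emb_subset_box <;> simp only [] <;> omega
  have main : ∀ (l : List (Equiv.Perm MV)) (u' w' : MV) (U W : Fin m × Fin n),
      Set.range f ⊆ box U W → l.length ≤ 5 →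
      (∀ π ∈ l, GoodStep (gridGraph 3 2) π) → l.prod = Equiv.swap u' w' →
      f u' = U → f w' = W →
      SolvableIn (gridGraph m n) (box U W) (Equiv.swap U W) 5 := by
    intro l u' w' U W hUW hlen hgood hprod hu hw
    have := word_solvable hs ht l hgood u' w' hprod
    rw [hu, hw] at this
    exact ((this.mono hUW).pad hlen)
  rcases hadj with ⟨hac, hbd⟩ | ⟨hbd, hac⟩
  · rcases Nat.lt_or_ge p (m - 2) with hx | hx
    · rcases Nat.lt_or_ge q (n - 1) with hy | hy
      · rcases hac with h1 | h1
        · exact main [Mo, MB, MA] v00 v10 _ _ hsub (by norm_num) (by simp only [List.mem_cons, List.not_mem_nil, or_false]; rintro π (rfl|rfl|rfl); exacts [good_Mo, good_MB, good_MA]) model_id1 (by rw [hf]; simp only [v00, emb_apply, Prod.ext_iff, Fin.ext_iff]; refine ⟨?_, ?_⟩ <;> omega) (by rw [hf]; simp only [v10, emb_apply, Prod.ext_iff, Fin.ext_iff]; refine ⟨?_, ?_⟩ <;> omega)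
        · rw [Equiv.swap_comm, box_comm]
          exact main [Mo, MB, MA] v00 v10 _ _ ((box_comm _ _) ▸ hsub) (by norm_num) (by simp only [List.mem_cons, List.not_mem_nil, or_false]; rintro π (rfl|rfl|rfl); exacts [good_Mo, good_MB, good_MA]) model_id1 (by rw [hf]; simp only [v00, emb_apply, Prod.ext_iff, Fin.ext_iff]; refine ⟨?_, ?_⟩ <;> omega) (by rw [hf]; simp only [v10, emb_apply, Prod.ext_iff, Fin.ext_iff]; refine ⟨?_, ?_⟩ <;> omega)
      · rcases hac with h1 | h1
        · exact main [MO, Mb, Ma] v01 v11 _ _ hsub (by norm_num) (by simp only [List.mem_cons, List.not_mem_nil, or_false]; rintro π (rfl|rfl|rfl); exacts [good_MO, good_Mb, good_Ma]) model_id3 (by rw [hf]; simp only [v01, emb_apply, Prod.ext_iff, Fin.ext_iff]; refine ⟨?_, ?_⟩ <;> omega) (by rw [hf]; simp only [v11, emb_apply, Prod.ext_iff, Fin.ext_iff]; refine ⟨?_, ?_⟩ <;> omega)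
        · rw [Equiv.swap_comm, box_comm]
          exact main [MO, Mb, Ma] v01 v11 _ _ ((box_comm _ _) ▸ hsub) (by norm_num) (by simp only [List.mem_cons, List.not_mem_nil, or_false]; rintro π (rfl|rfl|rfl); exacts [good_MO, good_Mb, good_Ma]) model_id3 (by rw [hf]; simp only [v01, emb_apply, Prod.ext_iff, Fin.ext_iff]; refine ⟨?_, ?_⟩ <;> omega) (by rw [hf]; simp only [v11, emb_apply, Prod.ext_iff, Fin.ext_iff]; refine ⟨?_, ?_⟩ <;> omega)
    · rcases Nat.lt_or_ge q (n - 1) with hy | hy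
      · rcases hac with h1 | h1
        · exact main [MO, Ma, Mb] v10 v20 _ _ hsub (by norm_num) (by simp only [List.mem_cons, List.not_mem_nil, or_false]; rintro π (rfl|rfl|rfl); exacts [good_MO, good_Ma, good_Mb]) model_id2 (by rw [hf]; simp only [v10, emb_apply, Prod.ext_iff, Fin.ext_iff]; refine ⟨?_, ?_⟩ <;> omega) (by rw [hf]; simp only [v20, emb_apply, Prod.ext_iff, Fin.ext_iff]; refine ⟨?_, ?_⟩ <;> omega)
        · rw [Equiv.swap_comm, box_comm]
          exact main [MO, Ma, Mb] v10 v20 _ _ ((box_comm _ _) ▸ hsub) (by norm_num) (by simp only [List.mem_cons, List.not_mem_nil, or_false]; rintro π (rfl|rfl|rfl); exacts [good_MO, good_Ma, good_Mb]) model_id2 (by rw [hf]; simp only [v10, emb_apply, Prod.ext_iff, Fin.ext_iff]; refine ⟨?_, ?_⟩ <;> omega) (by rw [hf]; simp only [v20, emb_apply, Prod.ext_iff, Fin.ext_iff]; refine ⟨?_, ?_⟩ <;> omega)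
      · rcases hac with h1 | h1
        · exact main [Mo, MA, MB] v11 v21 _ _ hsub (by norm_num) (by simp only [List.mem_cons, List.not_mem_nil, or_false]; rintro π (rfl|rfl|rfl); exacts [good_Mo, good_MA, good_MB]) model_id4 (by rw [hf]; simp only [v11, emb_apply, Prod.ext_iff, Fin.ext_iff]; refine ⟨?_, ?_⟩ <;> omega) (by rw [hf]; simp only [v21, emb_apply, Prod.ext_iff, Fin.ext_iff]; refine ⟨?_, ?_⟩ <;> omega)
        · rw [Equiv.swap_comm, box_comm]
          exact main [Mo, MA, MB] v11 v21 _ _ ((box_comm _ _) ▸ hsub) (by norm_num) (by simp only [List.mem_cons, List.not_mem_nil, or_false]; rintro π (rfl|rfl|rfl); exacts [good_Mo, good_MA, good_MB]) model_id4 (by rw [hf]; simp only [v11, emb_apply, Prod.ext_iff, Fin.ext_iff]; refine ⟨?_, ?_⟩ <;> omega) (by rw [hf]; simp only [v21, emb_apply, Prod.ext_iff, Fin.ext_iff]; refine ⟨?_, ?_⟩ <;> omega)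
  · rcases Nat.lt_or_ge p (m - 2) with hx | hx'
    · rcases hbd with h1 | h1
      · exact main [Ma, Mo, MB, MA, MA] v00 v01 _ _ hsub (by norm_num) (by simp only [List.mem_cons, List.not_mem_nil, or_false]; rintro π (rfl|rfl|rfl|rfl|rfl); exacts [good_Ma, good_Mo, good_MB, good_MA, good_MA]) model_id5 (by rw [hf]; simp only [v00, emb_apply, Prod.ext_iff, Fin.ext_iff]; refine ⟨?_, ?_⟩ <;> omega) (by rw [hf]; simp only [v01, emb_apply, Prod.ext_iff, Fin.ext_iff]; refine ⟨?_, ?_⟩ <;> omega)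
      · rw [Equiv.swap_comm, box_comm]
        exact main [Ma, Mo, MB, MA, MA] v00 v01 _ _ ((box_comm _ _) ▸ hsub) (by norm_num) (by simp only [List.mem_cons, List.not_mem_nil, or_false]; rintro π (rfl|rfl|rfl|rfl|rfl); exacts [good_Ma, good_Mo, good_MB, good_MA, good_MA]) model_id5 (by rw [hf]; simp only [v00, emb_apply, Prod.ext_iff, Fin.ext_iff]; refine ⟨?_, ?_⟩ <;> omega) (by rw [hf]; simp only [v01, emb_apply, Prod.ext_iff, Fin.ext_iff]; refine ⟨?_, ?_⟩ <;> omega)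
    · rcases Nat.lt_or_ge p (m - 1) with hx2 | hx2
      · rcases hbd with h1 | h1
        · exact main [MB, Mo, MA] v10 v11 _ _ hsub (by norm_num) (by simp only [List.mem_cons, List.not_mem_nil, or_false]; rintro π (rfl|rfl|rfl); exacts [good_MB, good_Mo, good_MA]) model_id6 (by rw [hf]; simp only [v10, emb_apply, Prod.ext_iff, Fin.ext_iff]; refine ⟨?_, ?_⟩ <;> omega) (by rw [hf]; simp only [v11, emb_apply, Prod.ext_iff, Fin.ext_iff]; refine ⟨?_, ?_⟩ <;> omega)
        · rw [Equiv.swap_comm, box_comm]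
          exact main [MB, Mo, MA] v10 v11 _ _ ((box_comm _ _) ▸ hsub) (by norm_num) (by simp only [List.mem_cons, List.not_mem_nil, or_false]; rintro π (rfl|rfl|rfl); exacts [good_MB, good_Mo, good_MA]) model_id6 (by rw [hf]; simp only [v10, emb_apply, Prod.ext_iff, Fin.ext_iff]; refine ⟨?_, ?_⟩ <;> omega) (by rw [hf]; simp only [v11, emb_apply, Prod.ext_iff, Fin.ext_iff]; refine ⟨?_, ?_⟩ <;> omega)
      · rcases hbd with h1 | h1
        · exact main [MO, Ma, Mo, MA, MB] v20 v21 _ _ hsub (by norm_num) (by simp only [List.mem_cons, List.not_mem_nil, or_false]; rintro π (rfl|rfl|rfl|rfl|rfl); exacts [good_MO, good_Ma, good_Mo, good_MA, good_MB]) model_id7 (by rw [hf]; simp only [v20, emb_apply, Prod.ext_iff, Fin.ext_iff]; refine ⟨?_, ?_⟩ <;> omega) (by rw [hf]; simp only [v21, emb_apply, Prod.ext_iff, Fin.ext_iff]; refine ⟨?_, ?_⟩ <;> omega)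
        · rw [Equiv.swap_comm, box_comm]
          exact main [MO, Ma, Mo, MA, MB] v20 v21 _ _ ((box_comm _ _) ▸ hsub) (by norm_num) (by simp only [List.mem_cons, List.not_mem_nil, or_false]; rintro π (rfl|rfl|rfl|rfl|rfl); exacts [good_MO, good_Ma, good_Mo, good_MA, good_MB]) model_id7 (by rw [hf]; simp only [v20, emb_apply, Prod.ext_iff, Fin.ext_iff]; refine ⟨?_, ?_⟩ <;> omega) (by rw [hf]; simp only [v21, emb_apply, Prod.ext_iff, Fin.ext_iff]; refine ⟨?_, ?_⟩ <;> omega)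

/-- The class of an edge: orientation plus residues of the base point. -/
def classOf {m n : ℕ} (u w : Fin m × Fin n) : Fin 5 × Fin 3 × Bool :=
  (⟨min u.1.val w.1.val % 5, Nat.mod_lt _ (by norm_num)⟩,
   ⟨min u.2.val w.2.val % 3, Nat.mod_lt _ (by norm_num)⟩,
   decide (u.1.val = w.1.val))

lemma classOf_symm {m n : ℕ} (u w : Fin m × Fin n) : classOf u w = classOf w u := by
  simp only [classOf, Prod.mk.injEq, Fin.mk.injEq, decide_eq_decide]
  exact ⟨by rw [min_comm], by rw [min_comm], eq_comm⟩

lemma box_disjoint {m n : ℕ} {u w u' w' : Fin m × Fin n}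
    (h1 : (gridGraph m n).Adj u w) (h2 : (gridGraph m n).Adj u' w')
    (hc : classOf u w = classOf u' w')
    (hne1 : u ≠ u') (hne2 : u ≠ w') (hne3 : w ≠ u') (hne4 : w ≠ w') :
    ∀ x, x ∈ box u w → x ∉ box u' w' := by
  obtain ⟨⟨a, ha⟩, ⟨b, hb⟩⟩ := u
  obtain ⟨⟨c, hc2⟩, ⟨d, hd⟩⟩ := w
  obtain ⟨⟨a', ha'⟩, ⟨b', hb'⟩⟩ := u'
  obtain ⟨⟨c', hc'⟩, ⟨d', hd'⟩⟩ := w'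
  rw [gridGraph_adj] at h1 h2
  simp only [Fin.ext_iff] at h1 h2
  simp only [classOf, Prod.mk.injEq, Fin.mk.injEq, decide_eq_decide] at hc
  obtain ⟨hca, hcb, hcc⟩ := hc
  simp only [Ne, Prod.ext_iff, Fin.ext_iff, not_and] at hne1 hne2 hne3 hne4
  rintro ⟨⟨x, hx⟩, ⟨y, hy⟩⟩ hin hin'
  simp only [box, Set.mem_setOf_eq] at hin hin'
  rcases iff_iff_and_or_not_and_not.mp hcc with ⟨e1, e2⟩ | ⟨e1, e2⟩ <;>
    rcases h1 with ⟨h1x, h1y⟩ | ⟨h1y, h1x⟩ <;> rcases h2 with ⟨h2x, h2y⟩ | ⟨h2y, h2x⟩ <;>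
    rcases h1x with h1x | h1x <;> rcases h2x with h2x | h2x <;> omega

/-- A sub-involution all of whose edges lie in class `c` can be flipped in 5 steps. -/
lemma class_solvable {m n : ℕ} (hm : 3 ≤ m) (hn : 2 ≤ n) (c : Fin 5 × Fin 3 × Bool) :
    ∀ (N : ℕ) (τ : Equiv.Perm (Fin m × Fin n)),
    (∀ v, τ (τ v) = v) →
    (∀ v, τ v ≠ v → (gridGraph m n).Adj v (τ v) ∧ classOf v (τ v) = c) →
    (Finset.univ.filter (fun v => τ v ≠ v)).card ≤ N →
    SolvableIn (gridGraph m n) {x | ∃ v, τ v ≠ v ∧ x ∈ box v (τ v)} τ 5 := by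
  intro N
  induction N with
  | zero =>
    intro τ hinv hcl hcard
    have hτ : τ = 1 := by
      apply Equiv.ext
      intro v
      by_contra hv
      have hv' : τ v ≠ v := fun h => hv (by simp [h])
      have hmem : v ∈ Finset.univ.filter (fun v => τ v ≠ v) := by
        simp only [Finset.mem_filter, Finset.mem_univ, true_and]; exact hv'
      have := Finset.card_pos.mpr ⟨v, hmem⟩
      omega
    rw [hτ]
    exact solvableIn_one _ _
  | succ N ih =>
    intro τ hinv hcl hcard
    by_cases hex : ∃ v, τ v ≠ v
    swap
    · push_neg at hex
      have hτ : τ = 1 := Equiv.ext fun v => by simp [hex v]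
      rw [hτ]; exact solvableIn_one _ _
    obtain ⟨v₀, hv₀⟩ := hex
    have hmove : ∀ v, v ≠ v₀ → v ≠ τ v₀ → (τ v = v₀ → False) ∧ (τ v = τ v₀ → False) := by
      intro v h1 h2
      constructor
      · intro h; apply h2; rw [← h, hinv]
      · intro h; apply h1; have := congrArg τ h; rwa [hinv, hinv] at this
    have hinvol' : Function.Involutive (fun v => if v = v₀ ∨ v = τ v₀ then v else τ v) := by
      intro v
      by_cases h : v = v₀ ∨ v = τ v₀
      · simp only [if_pos h]
      · push_neg at h
        have hm2 := hmove v h.1 h.2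
        simp only [if_neg (not_or.mpr h)]
        have : ¬(τ v = v₀ ∨ τ v = τ v₀) := by
          rintro (hk | hk)
          exacts [hm2.1 hk, hm2.2 hk]
        simp only [if_neg this, hinv]
    set τ' := hinvol'.toPerm _ with hτ'def
    have hτ'app : ∀ v, τ' v = if v = v₀ ∨ v = τ v₀ then v else τ v := fun v => rfl
    have hτ'moved : ∀ v, τ' v ≠ v → (¬(v = v₀ ∨ v = τ v₀)) ∧ τ' v = τ v ∧ τ v ≠ v := by
      intro v hv
      by_cases h : v = v₀ ∨ v = τ v₀
      · exfalso; apply hv; rw [hτ'app, if_pos h]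
      · rw [hτ'app, if_neg h] at hv ⊢
        exact ⟨h, rfl, hv⟩
    have hcl' : ∀ v, τ' v ≠ v → (gridGraph m n).Adj v (τ' v) ∧ classOf v (τ' v) = c := by
      intro v hv
      obtain ⟨_, h2, h3⟩ := hτ'moved v hv
      rw [h2]; exact hcl v h3
    have hinv' : ∀ v, τ' (τ' v) = v := hinvol'
    have hcard' : (Finset.univ.filter (fun v => τ' v ≠ v)).card ≤ N := by
      have hsub : Finset.univ.filter (fun v => τ' v ≠ v) ⊂ Finset.univ.filter (fun v => τ v ≠ v) := by
        constructor
        · intro v hv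
          simp only [Finset.mem_filter, Finset.mem_univ, true_and] at hv ⊢
          exact (hτ'moved v hv).2.2
        · intro hsub'
          have hv₀mem : v₀ ∈ Finset.univ.filter (fun v => τ v ≠ v) := by
            simp only [Finset.mem_filter, Finset.mem_univ, true_and]; exact hv₀
          have := hsub' hv₀mem
          simp only [Finset.mem_filter, Finset.mem_univ, true_and, hτ'app, if_pos] at this
          exact this (by simp)
      have := Finset.card_lt_card hsub
      omega
    have IH := ih τ' hinv' hcl' hcard'
    have hadj₀ := hcl v₀ hv₀
    have hedge := edge_solvable hm hn v₀ (τ v₀) hadj₀.1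
    have hdisj : ∀ x, x ∈ box v₀ (τ v₀) → x ∉ {x | ∃ v, τ' v ≠ v ∧ x ∈ box v (τ' v)} := by
      intro x hxb ⟨v, hv, hxv⟩
      obtain ⟨hnot, heq, hτv⟩ := hτ'moved v hv
      push_neg at hnot
      rw [heq] at hxv
      have hm2 := hmove v hnot.1 hnot.2
      have hτadj := hcl v hτv
      refine box_disjoint hadj₀.1 hτadj.1 (hadj₀.2.trans hτadj.2.symm) ?_ ?_ ?_ ?_ x hxb hxv
      · exact fun h => hnot.1 h.symm
      · exact fun h => hm2.1 h.symm
      · exact fun h => hnot.2 h.symm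
      · exact fun h => hm2.2 h.symm
    have hpar := hedge.parallel hdisj IH
    have hprod : Equiv.swap v₀ (τ v₀) * τ' = τ := by
      apply Equiv.ext
      intro v
      simp only [Equiv.Perm.mul_apply, hτ'app]
      by_cases h : v = v₀ ∨ v = τ v₀
      · rw [if_pos h]
        rcases h with rfl | rfl
        · exact Equiv.swap_apply_left _ _
        · rw [Equiv.swap_apply_right, hinv]
      · push_neg at h
        have hm2 := hmove v h.1 h.2
        rw [if_neg (not_or.mpr h), Equiv.swap_apply_of_ne_of_ne (fun hk => hm2.1 hk) (fun hk => hm2.2 hk)]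
    rw [hprod] at hpar
    apply hpar.mono
    intro x hx
    rcases hx with hx | ⟨v, hv, hxv⟩
    · exact ⟨v₀, hv₀, hx⟩
    · obtain ⟨_, heq, hτv⟩ := hτ'moved v hv
      rw [heq] at hxv
      exact ⟨v, hτv, hxv⟩

def flipFun {m n : ℕ} (σ : Equiv.Perm (Fin m × Fin n)) (c : Fin 5 × Fin 3 × Bool) :
    Fin m × Fin n → Fin m × Fin n :=
  fun v => if σ v ≠ v ∧ classOf v (σ v) = c then σ v else v

lemma flipFun_invol {m n : ℕ} (σ : Equiv.Perm (Fin m × Fin n)) (hinv : ∀ v, σ (σ v) = v)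
    (c : Fin 5 × Fin 3 × Bool) : Function.Involutive (flipFun σ c) := by
  intro v
  unfold flipFun
  by_cases h : σ v ≠ v ∧ classOf v (σ v) = c
  · rw [if_pos h, if_pos]
    · exact hinv v
    · constructor
      · rw [hinv]; exact fun hk => h.1 hk.symm
      · rw [hinv, classOf_symm]; exact h.2
  · rw [if_neg h, if_neg h]

/-- The restriction of the matching involution `σ` to the edges of class `c`. -/
def sigmaC {m n : ℕ} (σ : Equiv.Perm (Fin m × Fin n)) (hinv : ∀ v, σ (σ v) = v)
    (c : Fin 5 × Fin 3 × Bool) : Equiv.Perm (Fin m × Fin n) :=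
  (flipFun_invol σ hinv c).toPerm _

lemma sigmaC_apply {m n : ℕ} (σ : Equiv.Perm (Fin m × Fin n)) (hinv : ∀ v, σ (σ v) = v)
    (c : Fin 5 × Fin 3 × Bool) (v : Fin m × Fin n) :
    sigmaC σ hinv c v = if σ v ≠ v ∧ classOf v (σ v) = c then σ v else v := rfl

lemma sigmaC_prod {m n : ℕ} (σ : Equiv.Perm (Fin m × Fin n)) (hinv : ∀ v, σ (σ v) = v) :
    ∀ (l : List (Fin 5 × Fin 3 × Bool)), l.Nodup →
    ∀ v, ((l.map (sigmaC σ hinv)).prod) v =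
      if σ v ≠ v ∧ classOf v (σ v) ∈ l then σ v else v := by
  intro l
  induction l with
  | nil => intro _ v; simp
  | cons c t iht =>
    intro hnd v
    rw [List.map_cons, List.prod_cons, Equiv.Perm.mul_apply, iht hnd.of_cons]
    by_cases hσ : σ v = v
    · rw [if_neg (by simp [hσ]), sigmaC_apply, if_neg (by simp [hσ]), if_neg (by simp [hσ])]
    · by_cases hmem : classOf v (σ v) ∈ t
      · rw [if_pos ⟨hσ, hmem⟩, sigmaC_apply]
        have hc : classOf (σ v) (σ (σ v)) = classOf v (σ v) := by rw [hinv, classOf_symm]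
        rw [if_neg, if_pos ⟨hσ, List.mem_cons_of_mem _ hmem⟩]
        rintro ⟨h1, h2⟩
        rw [hc] at h2
        rw [← h2] at hnd
        exact (List.nodup_cons.mp hnd).1 hmem
      · rw [if_neg (by rintro ⟨_, h2⟩; exact hmem h2), sigmaC_apply]
        by_cases hcc : classOf v (σ v) = c
        · rw [if_pos ⟨hσ, hcc⟩, if_pos ⟨hσ, by rw [hcc]; exact List.mem_cons_self⟩]
        · rw [if_neg (by rintro ⟨_, h2⟩; exact hcc h2),
            if_neg (by rintro ⟨_, h2⟩; rcases List.mem_cons.mp h2 with h | h; exacts [hcc h, hmem h])]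

/-- Any matching flip on the grid is solvable in at most 150 steps. -/
lemma matching_flip_solvable {m n : ℕ} (hm : 3 ≤ m) (hn : 2 ≤ n)
    (σ : Equiv.Perm (Fin m × Fin n)) (hinv : ∀ v, σ (σ v) = v)
    (hadj : ∀ v, σ v = v ∨ (gridGraph m n).Adj v (σ v)) :
    Solvable (gridGraph m n) σ 150 := by
  set l := (Finset.univ : Finset (Fin 5 × Fin 3 × Bool)).toList with hl
  have hnd : l.Nodup := Finset.nodup_toList _
  have hprod : (l.map (sigmaC σ hinv)).prod = σ := by
    apply Equiv.ext
    intro v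
    rw [sigmaC_prod σ hinv l hnd v]
    by_cases hσ : σ v = v
    · rw [if_neg (by simp [hσ]), hσ]
    · rw [if_pos ⟨hσ, Finset.mem_toList.mpr (Finset.mem_univ _)⟩]
  have hsolv : ∀ π ∈ l.map (sigmaC σ hinv), Solvable (gridGraph m n) π 5 := by
    intro π hπ
    obtain ⟨c, _, rfl⟩ := List.mem_map.mp hπ
    have := class_solvable hm hn c (Fintype.card (Fin m × Fin n)) (sigmaC σ hinv c)
      (flipFun_invol σ hinv c) ?_ ?_
    · exact this.solvable
    · intro v hv
      rw [sigmaC_apply] at hv ⊢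
      by_cases h : σ v ≠ v ∧ classOf v (σ v) = c
      · rw [if_pos h] at hv ⊢
        exact ⟨(hadj v).resolve_left h.1, h.2⟩
      · rw [if_neg h] at hv; exact absurd rfl hv
    · rw [← Finset.card_univ]
      exact Finset.card_filter_le _ _
  have := solvable_list_prod 5 (l.map (sigmaC σ hinv)) hsolv
  rw [hprod] at this
  have hlen : (l.map (sigmaC σ hinv)).length = 30 := by
    rw [List.length_map, hl, Finset.length_toList]
    simp
  rw [hlen] at this
  exact this

end Flip

/-- The flip operation: on any `m × n` grid (`m ≥ n ≥ 2`, `m ≥ 3`), for any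
configuration `X` and any matching `E'` of the grid, the configuration obtained by
exchanging the two robots on the endpoints of each edge of `E'` (all other robots
staying put) can be reached in at most `C` steps, for an absolute constant `C`. -/
theorem flip_constant_steps :
    ∃ C : ℕ,
      ∀ m n : ℕ, 2 ≤ n → n ≤ m → 3 ≤ m →
        ∀ X : Equiv.Perm (Fin m × Fin n),
          ∀ E' : Set (Sym2 (Fin m × Fin n)),
            E' ⊆ (gridGraph m n).edgeSet →
            (∀ e ∈ E', ∀ f ∈ E', e ≠ f → ∀ v : Fin m × Fin n, ¬(v ∈ e ∧ v ∈ f)) →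
            ∀ Y : Equiv.Perm (Fin m × Fin n),
              (∀ (r : Fin m × Fin n) (u v : Fin m × Fin n),
                  s(u, v) ∈ E' → X r = u → Y r = v) →
              (∀ r : Fin m × Fin n, (∀ e ∈ E', X r ∉ e) → Y r = X r) →
              ∃ (T : ℕ) (Xs : ℕ → Equiv.Perm (Fin m × Fin n)),
                IsSolution (gridGraph m n) X Y T Xs ∧ T ≤ C := by
  refine ⟨150, ?_⟩
  intro m n hn _hnm hm X E' hE'sub _hmatch Y h1 h2
  set σ := Y * X⁻¹ with hσ
  have happ : ∀ v, σ v = Y (X.symm v) := fun v => rfl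
  have hstep : ∀ v, σ v = v ∨ ((gridGraph m n).Adj v (σ v) ∧ σ (σ v) = v) := by
    intro v
    by_cases hv : ∃ e ∈ E', v ∈ e
    · right
      obtain ⟨e, he, hve⟩ := hv
      obtain ⟨w, rfl⟩ := Sym2.mem_iff_exists.mp hve
      have hYX : σ v = w := by
        rw [happ]
        exact h1 (X.symm v) v w he (Equiv.apply_symm_apply X v)
      have hWX : σ w = v := by
        rw [happ]
        exact h1 (X.symm w) w v (by rwa [Sym2.eq_swap] at he) (Equiv.apply_symm_apply X w)
      refine ⟨?_, by rw [hYX, hWX]⟩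
      rw [hYX]
      exact (gridGraph m n).mem_edgeSet.mp (hE'sub he)
    · left
      push_neg at hv
      rw [happ]
      have := h2 (X.symm v) (fun e he => by rw [Equiv.apply_symm_apply]; exact hv e he)
      rw [this, Equiv.apply_symm_apply]
  have hinv : ∀ v, σ (σ v) = v := by
    intro v
    rcases hstep v with h | ⟨_, h⟩
    · rw [h, h]
    · exact h
  have hadj : ∀ v, σ v = v ∨ (gridGraph m n).Adj v (σ v) := fun v => (hstep v).imp id And.left
  obtain ⟨l, hlen, hgood, hprod⟩ := Flip.matching_flip_solvable hm hn σ hinv hadj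
  obtain ⟨Xs, hXs⟩ := Flip.exists_solution_of_steps l hgood X
  rw [hprod, hσ, inv_mul_cancel_right] at hXs
  exact ⟨l.length, Xs, hXs, hlen⟩
end

section
/- There exists an integer M such that for all integers m, n with m ≥ n ≥ 2, m ≥ 3, and m·n ≥ M, and for every fixed configuration X_G on the m × n grid graph G, the number of configurations X_I for which the instance (G, X_I, X_G) admits a solution of makespan at most (m + n)/4 is at most (1/2)^{m/4} · (mn)!. (The fraction of instances on a large grid with makespan o(m + n) is at most (1/2)^{m/4}.) -/
open SimpleGraph

section Aux

open Finset

lemma col_move {m n : ℕ} {X Y : Equiv.Perm (Fin m × Fin n)}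
    (h : IsMove (gridGraph m n) X Y) (r : Fin m × Fin n) :
    ((X r).1 : ℕ) ≤ ((Y r).1 : ℕ) + 1 := by
  rcases h.1 r with h1 | h1
  · rw [h1]; omega
  · have h1' : ((pathGraph m) □ (pathGraph n)).Adj (X r) (Y r) := h1
    rw [boxProd_adj] at h1'
    rcases h1' with ⟨h2, _⟩ | ⟨_, h2⟩
    · rcases (pathGraph_adj).mp h2 with h3 | h3 <;> omega
    · have h5 : ((X r).1 : ℕ) = ((Y r).1 : ℕ) := congrArg Fin.val h2
      omega

lemma col_start_le {m n : ℕ} {XI XG : Equiv.Perm (Fin m × Fin n)} {T : ℕ}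
    {Xs : ℕ → Equiv.Perm (Fin m × Fin n)} (h : IsSolution (gridGraph m n) XI XG T Xs)
    (r : Fin m × Fin n) : ((XI r).1 : ℕ) ≤ ((XG r).1 : ℕ) + T := by
  obtain ⟨h0, hT, hmv⟩ := h
  have key : ∀ t, t ≤ T → (((Xs 0) r).1 : ℕ) ≤ (((Xs t) r).1 : ℕ) + t := by
    intro t
    induction t with
    | zero => intro _; omega
    | succ t ih =>
      intro ht
      have h1 := col_move (hmv t (by omega)) r
      have h2 := ih (by omega)
      omega
  have := key T le_rfl
  rw [h0, hT] at this
  exact this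

lemma filter_inj_maps_le (α V : Type*) [Fintype α] [Fintype V] [DecidableEq α] [DecidableEq V]
    (S : Finset V) :
    (univ.filter (fun g : α → V => Function.Injective g ∧ ∀ x, g x ∈ S)).card
      ≤ Nat.descFactorial S.card (Fintype.card α) := by
  classical
  have h1 : (univ.filter (fun g : α → V => Function.Injective g ∧ ∀ x, g x ∈ S)).card
      = Fintype.card {g : α → V // Function.Injective g ∧ ∀ x, g x ∈ S} :=
    (Fintype.card_subtype _).symm
  have h2 : Fintype.card (α ↪ S) = Nat.descFactorial S.card (Fintype.card α) := by
    rw [Fintype.card_embedding_eq, Fintype.card_coe]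
  rw [h1, ← h2]
  refine Fintype.card_le_of_injective
    (fun g => ⟨fun x => ⟨g.1 x, g.2.2 x⟩, fun x y hxy => g.2.1 (by simpa using hxy)⟩) ?_
  intro g g' hgg
  apply Subtype.ext
  funext x
  have := congrFun (congrArg (fun (e : α ↪ S) => (e : α → S)) hgg) x
  exact congrArg Subtype.val this

lemma card_perm_mapsTo_le {V : Type*} [Fintype V] [DecidableEq V] (A S : Finset V) :
    (univ.filter (fun π : Equiv.Perm V => ∀ v ∈ A, π v ∈ S)).card ≤
      Nat.descFactorial S.card A.card * Nat.factorial (Fintype.card V - A.card) := by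
  classical
  set s := univ.filter (fun π : Equiv.Perm V => ∀ v ∈ A, π v ∈ S) with hs
  set f : Equiv.Perm V → (↥A → V) := fun π => fun x => π x.1 with hf
  have main : s.card ≤ (Fintype.card V - A.card).factorial * (s.image f).card := by
    apply Finset.card_le_mul_card_image
    intro g hg
    obtain ⟨π₀, hπ₀, hgπ₀⟩ := Finset.mem_image.mp hg
    set C : Finset V := (A.image π₀)ᶜ with hC
    have hCcard : C.card = Fintype.card V - A.card := by
      rw [hC, Finset.card_compl, Finset.card_image_of_injective _ π₀.injective]
    have htar : (univ.filter (fun h : ((↥(Aᶜ)) → V) =>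
        Function.Injective h ∧ ∀ x, h x ∈ C)).card ≤ (Fintype.card V - A.card).factorial := by
      have h3 := filter_inj_maps_le (↥(Aᶜ : Finset V)) V C
      have hcard : Fintype.card ↥(Aᶜ : Finset V) = Fintype.card V - A.card := by
        rw [Fintype.card_coe, Finset.card_compl]
      rw [hCcard, hcard] at h3
      simpa [Nat.descFactorial_self] using h3
    refine le_trans (Finset.card_le_card_of_injOn
      (fun π => fun x : ↥(Aᶜ : Finset V) => π x.1) ?_ ?_) htar
    · intro π hπ
      replace hπ : π ∈ s ∧ f π = g := Finset.mem_filter.mp hπ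
      simp only [Finset.mem_coe, Finset.mem_filter, Finset.mem_univ, true_and] at hπ ⊢
      obtain ⟨hπs, hπg⟩ := hπ
      constructor
      · intro x y hxy
        exact Subtype.ext (π.injective hxy)
      · intro x
        rw [hC, Finset.mem_compl]
        intro hmem
        obtain ⟨v, hvA, hv⟩ := Finset.mem_image.mp hmem
        have hπv : π v = π₀ v := by
          have e1 := congrFun hπg (⟨v, hvA⟩ : ↥A)
          have e2 := congrFun hgπ₀ (⟨v, hvA⟩ : ↥A)
          simp only [hf] at e1 e2
          rw [e1, ← e2]
        have hxv : (x.1 : V) = v := π.injective (by rw [hπv, hv])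
        have : (x.1 : V) ∈ A := hxv ▸ hvA
        have hx := x.2
        rw [Finset.mem_compl] at hx
        exact hx this
    · intro π hπ π' hπ' heq
      simp only [Finset.mem_coe, Finset.mem_filter] at hπ hπ'
      apply Equiv.ext
      intro v
      by_cases hv : v ∈ A
      · have e1 := congrFun hπ.2 (⟨v, hv⟩ : ↥A)
        have e2 := congrFun hπ'.2 (⟨v, hv⟩ : ↥A)
        simp only [hf] at e1 e2
        rw [e1, ← e2]
      · have hv' : v ∈ (Aᶜ : Finset V) := Finset.mem_compl.mpr hv
        exact congrFun heq (⟨v, hv'⟩ : ↥(Aᶜ : Finset V))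
  have himg : (s.image f).card ≤ Nat.descFactorial S.card A.card := by
    have h4 := filter_inj_maps_le (↥A) V S
    rw [Fintype.card_coe] at h4
    refine le_trans (Finset.card_le_card ?_) h4
    intro g hg
    obtain ⟨π, hπ, rfl⟩ := Finset.mem_image.mp hg
    rw [hs] at hπ
    simp only [Finset.mem_filter, Finset.mem_univ, true_and] at hπ ⊢
    constructor
    · intro x y hxy
      exact Subtype.ext (π.injective hxy)
    · intro x
      exact hπ x.1 x.2
  calc s.card ≤ (Fintype.card V - A.card).factorial * (s.image f).card := main
    _ ≤ (Fintype.card V - A.card).factorial * Nat.descFactorial S.card A.card :=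
        Nat.mul_le_mul_left _ himg
    _ = Nat.descFactorial S.card A.card * Nat.factorial (Fintype.card V - A.card) :=
        Nat.mul_comm _ _

lemma descFactorial_mul_pow_le (a' N k : ℕ) (h : a' ≤ N) :
    Nat.descFactorial a' k * N ^ k ≤ a' ^ k * Nat.descFactorial N k := by
  induction k with
  | zero => simp
  | succ k ih =>
    rw [Nat.descFactorial_succ, Nat.descFactorial_succ, pow_succ, pow_succ]
    have hstep : (a' - k) * N ≤ a' * (N - k) := by
      have h1 : (a' - k) * N = a' * N - k * N := by rw [Nat.sub_mul]
      have h2 : a' * (N - k) = a' * N - a' * k := by rw [Nat.mul_sub_left_distrib]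
      rw [h1, h2]
      apply Nat.sub_le_sub_left
      calc a' * k = k * a' := Nat.mul_comm _ _
        _ ≤ k * N := Nat.mul_le_mul_left k h
    calc (a' - k) * Nat.descFactorial a' k * (N ^ k * N)
        = ((a' - k) * N) * (Nat.descFactorial a' k * N ^ k) := by ring
      _ ≤ (a' * (N - k)) * (a' ^ k * Nat.descFactorial N k) := Nat.mul_le_mul hstep ih
      _ = a' ^ k * a' * ((N - k) * Nat.descFactorial N k) := by ring

lemma card_colset (m n k : ℕ) (h : k ≤ m) :
    (univ.filter (fun v : Fin m × Fin n => (v.1 : ℕ) < k)).card = k * n := by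
  have he : (univ.filter (fun v : Fin m × Fin n => (v.1 : ℕ) < k))
      = (univ.filter (fun i : Fin m => (i : ℕ) < k)) ×ˢ (univ : Finset (Fin n)) := by
    ext v
    simp [Finset.mem_product]
  rw [he, Finset.card_product, Finset.card_univ, Fintype.card_fin]
  congr 1
  have he2 : univ.filter (fun i : Fin m => (i : ℕ) < k)
      = Finset.map ⟨fun j : Fin k => (⟨j.1, lt_of_lt_of_le j.2 h⟩ : Fin m),
          by intro a b hab; simpa [Fin.ext_iff] using congrArg Fin.val hab⟩ univ := by
    ext i
    simp only [Finset.mem_filter, Finset.mem_univ, true_and, Finset.mem_map,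
      Function.Embedding.coeFn_mk]
    constructor
    · intro hi
      exact ⟨⟨i.1, hi⟩, Fin.ext rfl⟩
    · rintro ⟨j, -, rfl⟩
      exact j.2
  rw [he2, Finset.card_map, Finset.card_univ, Fintype.card_fin]

lemma card_pre {V : Type*} [Fintype V] [DecidableEq V] (σ : Equiv.Perm V) (p : V → Prop)
    [DecidablePred p] :
    (univ.filter (fun r => p (σ r))).card = (univ.filter p).card := by
  apply Finset.card_bij (fun r _ => σ r)
  · intro r hr
    simp only [Finset.mem_filter, Finset.mem_univ, true_and] at hr ⊢
    exact hr
  · intro r _ r' _ h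
    exact σ.injective h
  · intro v hv
    refine ⟨σ.symm v, ?_, by simp⟩
    simp only [Finset.mem_filter, Finset.mem_univ, true_and] at hv ⊢
    simpa using hv

end Aux

/-- On a sufficiently large `m × n` grid, for every goal configuration `X_G`, at most a
`(1/2)^(m/4)` fraction of the `(mn)!` initial configurations `X_I` admit a solution of
makespan at most `(m+n)/4`. -/
theorem few_instances_with_small_makespan :
    ∃ M : ℕ,
      ∀ m n : ℕ, 2 ≤ n → n ≤ m → 3 ≤ m → M ≤ m * n →
        ∀ XG : Equiv.Perm (Fin m × Fin n),
          (Nat.card {XI : Equiv.Perm (Fin m × Fin n) |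
              ∃ (T : ℕ) (Xs : ℕ → Equiv.Perm (Fin m × Fin n)),
                IsSolution (gridGraph m n) XI XG T Xs ∧
                (T : ℝ) ≤ ((m : ℝ) + n) / 4} : ℝ) ≤
            (1 / 2 : ℝ) ^ ((m : ℝ) / 4) * (Nat.factorial (m * n)) := by
  classical
  use 1000000
  intro m n hn hnm hm hM XG
  set c := m / 4 with hc
  set T' := (m + n) / 4 with hT'
  set A := Finset.univ.filter (fun r : Fin m × Fin n => ((XG r).1 : ℕ) < c) with hA
  set S := Finset.univ.filter (fun v : Fin m × Fin n => (v.1 : ℕ) < c + T') with hS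
  have hmbig : 1000 ≤ m := by
    by_contra hcon
    push_neg at hcon
    have : m * n ≤ 999 * 999 := Nat.mul_le_mul (by omega) (by omega)
    omega
  have hcT'm : c + T' ≤ m := by omega
  -- Step 1: any solvable instance satisfies the column constraint
  have hsub : {XI : Equiv.Perm (Fin m × Fin n) |
        ∃ (T : ℕ) (Xs : ℕ → Equiv.Perm (Fin m × Fin n)),
          IsSolution (gridGraph m n) XI XG T Xs ∧ (T : ℝ) ≤ ((m : ℝ) + n) / 4}
      ⊆ ↑(Finset.univ.filter
          (fun XI : Equiv.Perm (Fin m × Fin n) => ∀ r ∈ A, XI r ∈ S)) := by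
    rintro XI ⟨T, Xs, hsol, hTle⟩
    simp only [Finset.mem_coe, Finset.mem_filter, Finset.mem_univ, true_and]
    intro r hr
    rw [hA] at hr
    simp only [Finset.mem_filter, Finset.mem_univ, true_and] at hr
    rw [hS]
    simp only [Finset.mem_filter, Finset.mem_univ, true_and]
    have hd := col_start_le hsol r
    have hTT' : T ≤ T' := by
      have h4 : (4 * T : ℝ) ≤ (m : ℝ) + n := by linarith
      have h4T : (4 * T : ℕ) ≤ m + n := by exact_mod_cast h4
      omega
    omega
  have h1 : Nat.card {XI : Equiv.Perm (Fin m × Fin n) |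
        ∃ (T : ℕ) (Xs : ℕ → Equiv.Perm (Fin m × Fin n)),
          IsSolution (gridGraph m n) XI XG T Xs ∧ (T : ℝ) ≤ ((m : ℝ) + n) / 4}
      ≤ (Finset.univ.filter
          (fun XI : Equiv.Perm (Fin m × Fin n) => ∀ r ∈ A, XI r ∈ S)).card := by
    rw [Nat.card_coe_set_eq]
    have h5 := Set.ncard_le_ncard hsub (Set.toFinite _)
    rwa [Set.ncard_coe_finset] at h5
  -- Step 2: counting
  have h2 := card_perm_mapsTo_le A S
  have hcardV : Fintype.card (Fin m × Fin n) = m * n := by simp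
  have hAcard : A.card = c * n := by
    rw [hA]
    exact (card_pre XG (fun v : Fin m × Fin n => (v.1 : ℕ) < c)).trans
      (card_colset m n c (by omega))
  have hScard : S.card = (c + T') * n := by
    rw [hS]
    exact card_colset m n (c + T') hcT'm
  rw [hcardV, hAcard, hScard] at h2
  -- Step 3: core real inequality
  have hcore : (((c + T') * n : ℕ) : ℝ) ^ (c * n)
      ≤ (1 / 2 : ℝ) ^ ((m : ℝ) / 4) * ((m * n : ℕ) : ℝ) ^ (c * n) := by
    set j := m / 8 + 1 with hj
    have hrpow : ((1 : ℝ) / 2) ^ (2 * j) ≤ (1 / 2 : ℝ) ^ ((m : ℝ) / 4) := by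
      rw [← Real.rpow_natCast (1 / 2 : ℝ) (2 * j)]
      apply Real.rpow_le_rpow_of_exponent_ge (by norm_num) (by norm_num)
      have h8j : m ≤ 8 * j := by omega
      have : (m : ℝ) ≤ ((8 * j : ℕ) : ℝ) := Nat.cast_le.mpr h8j
      push_cast at this ⊢
      linarith
    have hNpow : (0 : ℝ) ≤ ((m * n : ℕ) : ℝ) ^ (c * n) := by positivity
    by_cases h2n : 2 * n ≤ m
    · have h8 : 8 * ((c + T') * n) ≤ 5 * (m * n) := by
        have h5m : 8 * (c + T') ≤ 5 * m := by omega
        calc 8 * ((c + T') * n) = (8 * (c + T')) * n := by ring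
          _ ≤ (5 * m) * n := Nat.mul_le_mul_right n h5m
          _ = 5 * (m * n) := by ring
      have hratio : (((c + T') * n : ℕ) : ℝ) ≤ (5 / 8 : ℝ) * ((m * n : ℕ) : ℝ) := by
        have h9 : ((8 * ((c + T') * n) : ℕ) : ℝ) ≤ ((5 * (m * n) : ℕ) : ℝ) :=
          Nat.cast_le.mpr h8
        push_cast at h9 ⊢
        linarith
      have h3j : 3 * j ≤ c * n := by
        have h2c : c * 2 ≤ c * n := Nat.mul_le_mul_left c hn
        have h3c : 3 * j ≤ c * 2 := by omega
        omega
      calc (((c + T') * n : ℕ) : ℝ) ^ (c * n)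
          ≤ ((5 / 8 : ℝ) * ((m * n : ℕ) : ℝ)) ^ (c * n) := by
            apply pow_le_pow_left₀ (by positivity) hratio
        _ = (5 / 8 : ℝ) ^ (c * n) * ((m * n : ℕ) : ℝ) ^ (c * n) := mul_pow _ _ _
        _ ≤ (1 / 2 : ℝ) ^ ((m : ℝ) / 4) * ((m * n : ℕ) : ℝ) ^ (c * n) := by
            apply mul_le_mul_of_nonneg_right _ hNpow
            calc (5 / 8 : ℝ) ^ (c * n) ≤ (5 / 8 : ℝ) ^ (3 * j) :=
                  pow_le_pow_of_le_one (by norm_num) (by norm_num) h3j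
              _ = ((5 / 8 : ℝ) ^ 3) ^ j := by rw [pow_mul]
              _ ≤ ((1 / 2 : ℝ) ^ 2) ^ j := by
                  apply pow_le_pow_left₀ (by positivity) (by norm_num)
              _ = (1 / 2 : ℝ) ^ (2 * j) := by rw [pow_mul]
              _ ≤ (1 / 2 : ℝ) ^ ((m : ℝ) / 4) := hrpow
    · push_neg at h2n
      have hn708 : 708 ≤ n := by
        by_contra hcon
        push_neg at hcon
        have hlt : m * n < (2 * n) * n := by
          apply Nat.mul_lt_mul_of_lt_of_le h2n (le_refl n) (by omega)
        have hle : (2 * n) * n ≤ 2 * 707 * 707 := by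
          apply Nat.mul_le_mul (by omega) (by omega)
        omega
      have h8 : 8 * ((c + T') * n) ≤ 6 * (m * n) := by
        have h6m : 8 * (c + T') ≤ 6 * m := by omega
        calc 8 * ((c + T') * n) = (8 * (c + T')) * n := by ring
          _ ≤ (6 * m) * n := Nat.mul_le_mul_right n h6m
          _ = 6 * (m * n) := by ring
      have hratio : (((c + T') * n : ℕ) : ℝ) ≤ (3 / 4 : ℝ) * ((m * n : ℕ) : ℝ) := by
        have h9 : ((8 * ((c + T') * n) : ℕ) : ℝ) ≤ ((6 * (m * n) : ℕ) : ℝ) :=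
          Nat.cast_le.mpr h8
        push_cast at h9 ⊢
        linarith
      have h5j : 5 * j ≤ c * n := by
        have h2c : c * 708 ≤ c * n := Nat.mul_le_mul_left c hn708
        have h5c : 5 * j ≤ c * 708 := by omega
        omega
      calc (((c + T') * n : ℕ) : ℝ) ^ (c * n)
          ≤ ((3 / 4 : ℝ) * ((m * n : ℕ) : ℝ)) ^ (c * n) := by
            apply pow_le_pow_left₀ (by positivity) hratio
        _ = (3 / 4 : ℝ) ^ (c * n) * ((m * n : ℕ) : ℝ) ^ (c * n) := mul_pow _ _ _
        _ ≤ (1 / 2 : ℝ) ^ ((m : ℝ) / 4) * ((m * n : ℕ) : ℝ) ^ (c * n) := by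
            apply mul_le_mul_of_nonneg_right _ hNpow
            calc (3 / 4 : ℝ) ^ (c * n) ≤ (3 / 4 : ℝ) ^ (5 * j) :=
                  pow_le_pow_of_le_one (by norm_num) (by norm_num) h5j
              _ = ((3 / 4 : ℝ) ^ 5) ^ j := by rw [pow_mul]
              _ ≤ ((1 / 2 : ℝ) ^ 2) ^ j := by
                  apply pow_le_pow_left₀ (by positivity) (by norm_num)
              _ = (1 / 2 : ℝ) ^ (2 * j) := by rw [pow_mul]
              _ ≤ (1 / 2 : ℝ) ^ ((m : ℝ) / 4) := hrpow
  -- Step 4: assemble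
  have haN : c * n ≤ m * n := Nat.mul_le_mul_right n (by omega)
  have ha'N : (c + T') * n ≤ m * n := Nat.mul_le_mul_right n hcT'm
  have hNat := descFactorial_mul_pow_le ((c + T') * n) (m * n) (c * n) ha'N
  have hfact : (m * n - c * n).factorial * Nat.descFactorial (m * n) (c * n)
      = (m * n).factorial := Nat.factorial_mul_descFactorial haN
  have hD : ((Nat.descFactorial ((c + T') * n) (c * n) : ℕ) : ℝ)
        * ((Nat.factorial (m * n - c * n) : ℕ) : ℝ)
      ≤ (1 / 2 : ℝ) ^ ((m : ℝ) / 4) * ((Nat.factorial (m * n) : ℕ) : ℝ) := by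
    have hNpos : (0 : ℝ) < ((m * n : ℕ) : ℝ) ^ (c * n) := by positivity
    rw [← mul_le_mul_iff_of_pos_right hNpos]
    have hcast : ((Nat.descFactorial ((c + T') * n) (c * n) : ℕ) : ℝ)
          * ((m * n : ℕ) : ℝ) ^ (c * n)
        ≤ (((c + T') * n : ℕ) : ℝ) ^ (c * n)
          * ((Nat.descFactorial (m * n) (c * n) : ℕ) : ℝ) := by
      exact_mod_cast hNat
    calc ((Nat.descFactorial ((c + T') * n) (c * n) : ℕ) : ℝ)
          * ((Nat.factorial (m * n - c * n) : ℕ) : ℝ) * ((m * n : ℕ) : ℝ) ^ (c * n)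
        = (((Nat.descFactorial ((c + T') * n) (c * n) : ℕ) : ℝ)
            * ((m * n : ℕ) : ℝ) ^ (c * n)) * ((Nat.factorial (m * n - c * n) : ℕ) : ℝ) := by
          ring
      _ ≤ ((((c + T') * n : ℕ) : ℝ) ^ (c * n)
            * ((Nat.descFactorial (m * n) (c * n) : ℕ) : ℝ))
            * ((Nat.factorial (m * n - c * n) : ℕ) : ℝ) := by
          apply mul_le_mul_of_nonneg_right hcast (by positivity)
      _ = (((c + T') * n : ℕ) : ℝ) ^ (c * n)
            * (((Nat.factorial (m * n - c * n) * Nat.descFactorial (m * n) (c * n) : ℕ)) : ℝ) := by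
          push_cast
          ring
      _ = (((c + T') * n : ℕ) : ℝ) ^ (c * n) * ((Nat.factorial (m * n) : ℕ) : ℝ) := by
          rw [hfact]
      _ ≤ ((1 / 2 : ℝ) ^ ((m : ℝ) / 4) * ((m * n : ℕ) : ℝ) ^ (c * n))
            * ((Nat.factorial (m * n) : ℕ) : ℝ) := by
          apply mul_le_mul_of_nonneg_right hcore (by positivity)
      _ = (1 / 2 : ℝ) ^ ((m : ℝ) / 4) * ((Nat.factorial (m * n) : ℕ) : ℝ)
            * ((m * n : ℕ) : ℝ) ^ (c * n) := by ring
  refine le_trans ?_ hD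
  have h12 := le_trans h1 h2
  calc (Nat.card {XI : Equiv.Perm (Fin m × Fin n) |
        ∃ (T : ℕ) (Xs : ℕ → Equiv.Perm (Fin m × Fin n)),
          IsSolution (gridGraph m n) XI XG T Xs ∧ (T : ℝ) ≤ ((m : ℝ) + n) / 4} : ℝ)
      ≤ ((Nat.descFactorial ((c + T') * n) (c * n)
          * Nat.factorial (m * n - c * n) : ℕ) : ℝ) := by exact_mod_cast h12
    _ = ((Nat.descFactorial ((c + T') * n) (c * n) : ℕ) : ℝ)
          * ((Nat.factorial (m * n - c * n) : ℕ) : ℝ) := by push_cast; ring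
end
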